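/- arXiv:1510.09066 — 7 statements merged into one kernel-verified Lean document; each statement's English description precedes it below -/
import Mathlib

section
/- Let $\mathfrak g$ be a finite-dimensional Lie algebra with exponential map $\exp$ into a Lie group $G$. If $(B_n)_{n\geq 1}$ is a sequence in $\mathfrak g$ with $\lim_{n\to\infty} B_n = 0$ and $B \in \mathfrak g$, then $\exp(B_n)^{\lfloor tn \rfloor} \to \exp(tB)$ uniformly in $t \in [0,1]$ as $n \to \infty$ if and only if $\lim_{n\to\infty} n B_n = B$. -/
open Filter Topology NormedSpace

section Aux

attribute [local instance] Matrix.linftyOpNormedRing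
  Matrix.linftyOpNormedAlgebra

lemma floor_sub_abs {s : ℝ} (hs : 0 ≤ s) : |(⌊s⌋₊ : ℝ) - s| ≤ 1 := by
  rw [abs_le]
  constructor
  · nlinarith [Nat.lt_floor_add_one s]
  · nlinarith [Nat.floor_le hs]

section
variable {d : ℕ}
local notation "M" => Matrix (Fin d) (Fin d) ℝ

lemma arg_est (t : ℝ) (ht : t ∈ Set.Icc (0:ℝ) 1) (k : ℕ) (Bk : M) :
    ‖(⌊t * (k:ℝ)⌋₊ : ℝ) • Bk - t • ((k:ℝ) • Bk)‖ ≤ ‖Bk‖ := by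
  have h0 : (0:ℝ) ≤ t * k := mul_nonneg ht.1 (Nat.cast_nonneg k)
  rw [smul_smul, ← sub_smul, norm_smul]
  calc |(⌊t * (k:ℝ)⌋₊ : ℝ) - t * k| * ‖Bk‖ ≤ 1 * ‖Bk‖ :=
        mul_le_mul_of_nonneg_right (floor_sub_abs h0) (norm_nonneg _)
    _ = ‖Bk‖ := one_mul _

lemma pow_eq_exp (Bk : M) (t : ℝ) (k : ℕ) :
    (exp Bk) ^ (⌊t * (k:ℝ)⌋₊) = exp ((⌊t * (k:ℝ)⌋₊ : ℝ) • Bk) := by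
  rw [Nat.cast_smul_eq_nsmul ℝ]
  exact (exp_nsmul _ _).symm

end

section
variable {d : ℕ}
local notation "M" => Matrix (Fin d) (Fin d) ℝ

lemma easy_dir (B : ℕ → M) (B₀ : M) (hB : Tendsto B atTop (𝓝 0))
    (hA : Tendsto (fun k : ℕ => (k : ℝ) • B k) atTop (𝓝 B₀)) :
    TendstoUniformlyOn (fun k t => (exp (B k)) ^ (⌊t * (k:ℝ)⌋₊))
      (fun t => exp (t • B₀)) atTop (Set.Icc (0:ℝ) 1) := by
  haveI : ProperSpace M := FiniteDimensional.proper ℝ _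
  have hexpc : Continuous (exp : M → M) := NormedSpace.exp_continuous
  set S : Set M := Metric.closedBall 0 (‖B₀‖ + 2) with hS
  have hScomp : IsCompact S := isCompact_closedBall _ _
  have huc := hScomp.uniformContinuousOn_of_continuous hexpc.continuousOn
  refine Metric.tendstoUniformlyOn_iff.mpr ?_
  intro ε hε
  obtain ⟨δ, hδpos, hδ⟩ := Metric.uniformContinuousOn_iff.mp huc ε hε
  have hηpos : 0 < min (δ/2) 1 := lt_min (by linarith) one_pos
  have h1 := Metric.tendsto_nhds.mp hA _ hηpos
  have h2 := Metric.tendsto_nhds.mp hB _ hηpos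
  filter_upwards [h1, h2] with k hk1 hk2 t ht
  have habs : |t| ≤ 1 := abs_le.mpr ⟨by linarith [ht.1], ht.2⟩
  have hsmul : ∀ x : M, ‖t • x‖ ≤ ‖x‖ := by
    intro x
    rw [norm_smul, Real.norm_eq_abs]
    nlinarith [norm_nonneg x, abs_nonneg t]
  have hxS : t • B₀ ∈ S := by
    rw [hS, Metric.mem_closedBall, dist_zero_right]
    have := hsmul B₀
    linarith [norm_nonneg B₀]
  have hBk : ‖B k‖ < min (δ/2) 1 := by rwa [dist_zero_right] at hk2
  have hdiff1 : dist (t • B₀) (t • ((k:ℝ) • B k)) < min (δ/2) 1 := by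
    rw [dist_eq_norm, ← smul_sub]
    calc ‖t • (B₀ - (k:ℝ) • B k)‖ ≤ ‖B₀ - (k:ℝ) • B k‖ := hsmul _
      _ < min (δ/2) 1 := by rw [← dist_eq_norm, dist_comm]; exact hk1
  have hdiff2 : dist (t • ((k:ℝ) • B k)) ((⌊t * (k:ℝ)⌋₊ : ℝ) • B k) < min (δ/2) 1 := by
    rw [dist_eq_norm, norm_sub_rev]
    exact lt_of_le_of_lt (arg_est t ht k (B k)) hBk
  have htri := dist_triangle (t • B₀) (t • ((k:ℝ) • B k)) ((⌊t * (k:ℝ)⌋₊ : ℝ) • B k)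
  have hdist : dist (t • B₀) ((⌊t * (k:ℝ)⌋₊ : ℝ) • B k) < δ := by
    have := min_le_left (δ/2) 1
    linarith
  have hyS : (⌊t * (k:ℝ)⌋₊ : ℝ) • B k ∈ S := by
    rw [hS, Metric.mem_closedBall]
    have h5 := dist_triangle ((⌊t * (k:ℝ)⌋₊ : ℝ) • B k) (t • B₀) (0 : M)
    simp only [dist_zero_right] at h5 ⊢
    have h6 : dist ((⌊t * (k:ℝ)⌋₊ : ℝ) • B k) (t • B₀) < 2 := by
      rw [dist_comm]
      have := min_le_right (δ/2) 1
      linarith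
    have h7 := hsmul B₀
    linarith
  rw [pow_eq_exp]
  exact hδ _ hxS _ hyS hdist
end

section
variable {d : ℕ}
local notation "M" => Matrix (Fin d) (Fin d) ℝ

lemma exp_eq_on_Icc (C B₀ : M) (h : ∀ t ∈ Set.Icc (0:ℝ) 1, exp (t • C) = exp (t • B₀)) :
    C = B₀ := by
  have hC : HasDerivAt (fun u : ℝ => exp (u • C)) C 0 := by
    have := hasDerivAt_exp_smul_const (𝔸 := M) C (0:ℝ)
    simp at this
    exact this
  have hB : HasDerivAt (fun u : ℝ => exp (u • B₀)) B₀ 0 := by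
    have := hasDerivAt_exp_smul_const (𝔸 := M) B₀ (0:ℝ)
    simp at this
    exact this
  replace hC := hasDerivAt_iff_tendsto_slope.mp hC
  replace hB := hasDerivAt_iff_tendsto_slope.mp hB
  haveI hne : (𝓝[Set.Ioo (0:ℝ) 1] (0:ℝ)).NeBot := by
    rw [← mem_closure_iff_nhdsWithin_neBot, closure_Ioo (by norm_num : (0:ℝ) ≠ 1)]
    exact ⟨le_refl 0, by norm_num⟩
  have hsub : 𝓝[Set.Ioo (0:ℝ) 1] (0:ℝ) ≤ 𝓝[≠] (0:ℝ) :=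
    nhdsWithin_mono 0 (fun t ht => ne_of_gt ht.1)
  have h1 : Tendsto (slope (fun u : ℝ => exp (u • C)) 0) (𝓝[Set.Ioo (0:ℝ) 1] 0) (𝓝 C) :=
    hC.mono_left hsub
  have h2 : Tendsto (slope (fun u : ℝ => exp (u • B₀)) 0) (𝓝[Set.Ioo (0:ℝ) 1] 0) (𝓝 B₀) :=
    hB.mono_left hsub
  have heq : slope (fun u : ℝ => exp (u • C)) 0 =ᶠ[𝓝[Set.Ioo (0:ℝ) 1] 0]
      slope (fun u : ℝ => exp (u • B₀)) 0 := by
    filter_upwards [self_mem_nhdsWithin] with t ht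
    rw [slope_def_module, slope_def_module, h t ⟨ht.1.le, ht.2.le⟩, zero_smul, zero_smul]
  exact tendsto_nhds_unique (h1.congr' heq) h2

lemma exp_lower_bound :
    ∃ δ > (0:ℝ), ∀ x : M, ‖x‖ < δ → ‖x‖/2 ≤ ‖exp x - 1‖ := by
  have h := (hasFDerivAt_iff_isLittleO_nhds_zero).mp (hasFDerivAt_exp_zero (𝕂 := ℝ) (𝔸 := M))
  have h2 := (Asymptotics.isLittleO_iff.mp h) (c := 1/2) (by norm_num)
  rw [Metric.eventually_nhds_iff] at h2
  obtain ⟨δ, hδpos, hδ⟩ := h2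
  refine ⟨δ, hδpos, fun x hx => ?_⟩
  have h3 := hδ (y := x) (by rwa [dist_zero_right])
  simp only [zero_add, NormedSpace.exp_zero, ContinuousLinearMap.one_apply] at h3
  have h3' : ‖exp x - 1 - x‖ ≤ 1 / 2 * ‖x‖ := h3
  have h4 := norm_sub_norm_le x (exp x - 1)
  have h5 : ‖x - (exp x - 1)‖ = ‖exp x - 1 - x‖ := by rw [norm_sub_rev]
  linarith

end

section
variable {d : ℕ}
local notation "M" => Matrix (Fin d) (Fin d) ℝ

lemma hard_dir (B : ℕ → M) (B₀ : M) (hB : Tendsto B atTop (𝓝 0))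
    (h : TendstoUniformlyOn (fun k t => (exp (B k)) ^ (⌊t * (k:ℝ)⌋₊))
      (fun t => exp (t • B₀)) atTop (Set.Icc (0:ℝ) 1)) :
    Tendsto (fun k : ℕ => (k : ℝ) • B k) atTop (𝓝 B₀) := by
  haveI : ProperSpace M := FiniteDimensional.proper ℝ _
  apply tendsto_of_subseq_tendsto
  intro ns hns
  by_cases hb : Tendsto (fun j => ‖(ns j : ℝ) • B (ns j)‖) atTop atTop
  · -- unbounded case : contradiction
    exfalso
    obtain ⟨δ, hδpos, hδ⟩ := exp_lower_bound (d := d)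
    set r : ℝ := δ/3 with hrdef
    have hr : 0 < r := by positivity
    set a : ℕ → ℝ := fun j => ‖(ns j : ℝ) • B (ns j)‖ with ha
    have ht0 : Tendsto (fun j => r / a j) atTop (𝓝 0) := by
      have h1 : Tendsto (fun j => (a j)⁻¹) atTop (𝓝 0) := hb.inv_tendsto_atTop
      have h2 : Tendsto (fun j => r * (a j)⁻¹) atTop (𝓝 (r * 0)) := h1.const_mul r
      rw [mul_zero] at h2
      exact h2.congr (fun j => by rw [div_eq_mul_inv])
    have hexp0 : Tendsto (fun j => exp ((r / a j) • B₀)) atTop (𝓝 1) := by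
      have h1 : Tendsto (fun j => (r / a j) • B₀) atTop (𝓝 ((0:ℝ) • B₀)) := ht0.smul_const B₀
      rw [zero_smul] at h1
      have hexpc : Continuous (exp : M → M) := NormedSpace.exp_continuous
      have h2 := (hexpc.tendsto (0:M)).comp h1
      rwa [NormedSpace.exp_zero] at h2
    have E1 : ∀ᶠ j in atTop, max r 1 ≤ a j := hb.eventually_ge_atTop _
    have E3 : ∀ᶠ j in atTop, dist (exp ((r / a j) • B₀)) 1 < r/8 :=
      Metric.tendsto_nhds.mp hexp0 _ (by positivity)
    have E4 : ∀ᶠ j in atTop, ∀ t ∈ Set.Icc (0:ℝ) 1,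
        dist (exp (t • B₀)) ((exp (B (ns j))) ^ (⌊t * ((ns j : ℕ):ℝ)⌋₊)) < r/8 :=
      hns.eventually (Metric.tendstoUniformlyOn_iff.mp h (r/8) (by positivity))
    have E5 : ∀ᶠ j in atTop, ‖B (ns j)‖ < r/2 := by
      have := hns.eventually (Metric.tendsto_nhds.mp hB (r/2) (by positivity))
      filter_upwards [this] with j hj
      rwa [dist_zero_right] at hj
    obtain ⟨j, h1, h3, h4, h5⟩ := (E1.and (E3.and (E4.and E5))).exists
    have hapos : 0 < a j := lt_of_lt_of_le (lt_of_lt_of_le hr (le_max_left r 1)) h1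
    set t : ℝ := r / a j with htdef
    have htpos : 0 < t := by positivity
    have ht1 : t ≤ 1 := by
      rw [div_le_one hapos]
      exact le_trans (le_max_left r 1) h1
    have htIcc : t ∈ Set.Icc (0:ℝ) 1 := ⟨htpos.le, ht1⟩
    set x : M := (⌊t * ((ns j : ℕ):ℝ)⌋₊ : ℝ) • B (ns j) with hxdef
    have hest : ‖x - t • ((ns j : ℝ) • B (ns j))‖ ≤ ‖B (ns j)‖ := arg_est t htIcc (ns j) (B (ns j))
    have hnorm_t : ‖t • ((ns j : ℝ) • B (ns j))‖ = r := by
      rw [norm_smul, Real.norm_eq_abs, abs_of_pos htpos]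
      have haj : ‖((ns j : ℝ)) • B (ns j)‖ = a j := rfl
      rw [haj, htdef, div_mul_cancel₀ _ (ne_of_gt hapos)]
    have hxlow : r/2 ≤ ‖x‖ := by
      have := norm_sub_norm_le (t • ((ns j : ℝ) • B (ns j))) x
      rw [norm_sub_rev] at this
      linarith
    have hxup : ‖x‖ < δ := by
      have := norm_sub_norm_le x (t • ((ns j : ℝ) • B (ns j)))
      have h9 : ‖x - t • ((ns j : ℝ) • B (ns j))‖ ≤ ‖B (ns j)‖ := hest
      rw [hrdef] at *
      linarith
    have hlow : r/4 ≤ ‖exp x - 1‖ := le_trans (by linarith) (hδ x hxup)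
    have hup : ‖exp x - 1‖ < r/4 := by
      have h10 := h4 t htIcc
      rw [pow_eq_exp, ← hxdef, dist_comm] at h10
      have h11 := dist_triangle (exp x) (exp (t • B₀)) (1 : M)
      have h12 : ‖exp x - 1‖ = dist (exp x) 1 := (dist_eq_norm _ _).symm
      linarith
    linarith
  · -- bounded case
    rw [tendsto_atTop] at hb
    push_neg at hb
    obtain ⟨R, hR⟩ := hb
    have hfreq : ∃ᶠ j in atTop, ((ns j : ℝ) • B (ns j)) ∈ Metric.closedBall (0:M) R := by
      refine hR.mono fun j hj => ?_
      rw [Metric.mem_closedBall, dist_zero_right]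
      exact hj.le
    obtain ⟨C, _, φ, hφ, hCconv⟩ :=
      tendsto_subseq_of_frequently_bounded Metric.isBounded_closedBall hfreq
    refine ⟨φ, ?_⟩
    have hk : Tendsto (fun j => ns (φ j)) atTop atTop := hns.comp hφ.tendsto_atTop
    have hCB : C = B₀ := by
      apply exp_eq_on_Icc
      intro t ht
      have h1 : Tendsto (fun j => (exp (B (ns (φ j)))) ^ (⌊t * ((ns (φ j) : ℕ):ℝ)⌋₊)) atTop
          (𝓝 (exp (t • B₀))) := (h.tendsto_at ht).comp hk
      have hBk0 : Tendsto (fun j => B (ns (φ j))) atTop (𝓝 0) := hB.comp hk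
      have hnorm0 : Tendsto (fun j => ‖B (ns (φ j))‖) atTop (𝓝 0) := by
        exact tendsto_norm_zero.comp hBk0
      have harg : Tendsto (fun j => (⌊t * ((ns (φ j) : ℕ):ℝ)⌋₊ : ℝ) • B (ns (φ j))) atTop
          (𝓝 (t • C)) := by
        have hd : Tendsto (fun j => (⌊t * ((ns (φ j) : ℕ):ℝ)⌋₊ : ℝ) • B (ns (φ j))
            - t • ((ns (φ j) : ℝ) • B (ns (φ j)))) atTop (𝓝 0) :=
          squeeze_zero_norm (fun j => arg_est t ht (ns (φ j)) (B (ns (φ j)))) hnorm0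
        have hsm : Tendsto (fun j => t • ((ns (φ j) : ℝ) • B (ns (φ j)))) atTop (𝓝 (t • C)) :=
          (hCconv).const_smul t
        have := hd.add hsm
        rw [zero_add] at this
        exact this.congr (fun j => by abel)
      have h2 : Tendsto (fun j => (exp (B (ns (φ j)))) ^ (⌊t * ((ns (φ j) : ℕ):ℝ)⌋₊)) atTop
          (𝓝 (exp (t • C))) := by
        have hexpc : Continuous (exp : M → M) := NormedSpace.exp_continuous
        have := (hexpc.tendsto (t • C)).comp harg
        exact this.congr (fun j => (pow_eq_exp _ _ _).symm)
      exact (tendsto_nhds_unique h2 h1).symm ▸ rfl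
    rw [← hCB]
    exact hCconv

end


end Aux

/-- For a sequence `B n → 0` in the Lie algebra (here: matrices, with the
matrix exponential), `exp(B n) ^ ⌊t n⌋ → exp (t • B₀)` uniformly in `t ∈ [0,1]` iff
`n • B n → B₀`. -/
theorem levy_exp_power_uniform_iff {d : ℕ}
    (B : ℕ → Matrix (Fin d) (Fin d) ℝ) (B₀ : Matrix (Fin d) (Fin d) ℝ)
    (hB : Tendsto B atTop (𝓝 0)) :
    TendstoUniformlyOn
        (fun (k : ℕ) => fun (t : ℝ) => (NormedSpace.exp (B k)) ^ (⌊t * (k : ℝ)⌋₊))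
        (fun t => NormedSpace.exp (t • B₀)) atTop (Set.Icc (0 : ℝ) 1) ↔
      Tendsto (fun k : ℕ => (k : ℝ) • B k) atTop (𝓝 B₀) :=
  ⟨hard_dir B B₀ hB, easy_dir B B₀ hB⟩
end

section
/- Let $(E,d)$ be a metric space and $\mathbf x \in C([0,T],E)$ a continuous path such that there do not exist $s < t$ in $[0,T]$ with $\mathbf x_u = \mathbf x_s$ for all $u \in (s,t)$. Let $\Lambda$ denote the set of continuous non-decreasing surjections $\lambda : [0,T] \to [0,T]$. Then the set $\{\mathbf x \circ \lambda \mid \lambda \in \Lambda\}$ is closed in $C([0,T],E)$ with the uniform topology. -/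
open Topology


/-- Let `x : [0,T] → E` be a continuous path which is not constant on any
nonempty open subinterval. Then the set of reparametrisations `{x ∘ λ | λ ∈ Λ}`, where `Λ`
is the set of continuous non-decreasing surjections `[0,T] → [0,T]`, is closed in
`C([0,T], E)` with the uniform (compact-open) topology. -/
theorem reparametrisations_isClosed {E : Type*} [MetricSpace E]
    (T : ℝ) (hT : 0 < T) (x : C(Set.Icc (0 : ℝ) T, E))
    (hx : ¬ ∃ s t : Set.Icc (0 : ℝ) T, s < t ∧ ∀ u, s < u → u < t → x u = x s) :
    IsClosed {y : C(Set.Icc (0 : ℝ) T, E) |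
      ∃ l : C(Set.Icc (0 : ℝ) T, Set.Icc (0 : ℝ) T),
        Monotone (⇑l) ∧ Function.Surjective (⇑l) ∧ y = x.comp l} := by
  have h0T : (0:ℝ) ≤ T := hT.le
  have zmem : (0:ℝ) ∈ Set.Icc (0:ℝ) T := ⟨le_refl 0, h0T⟩
  have Tmem : T ∈ Set.Icc (0:ℝ) T := ⟨h0T, le_refl T⟩
  haveI : Inhabited (Set.Icc (0:ℝ) T) := ⟨⟨0, zmem⟩⟩
  refine IsSeqClosed.isClosed ?_
  intro yn y hyn hconv
  choose l hmono hsurj heq using hyn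
  set U : Ultrafilter ℕ := Filter.hyperfilter ℕ with hU
  have hUatTop : (U : Filter ℕ) ≤ Filter.atTop :=
    Nat.cofinite_eq_atTop ▸ Filter.hyperfilter_le_cofinite
  set L : Set.Icc (0:ℝ) T → Set.Icc (0:ℝ) T :=
    fun t => (U.map (fun n => l n t)).lim with hLdef
  have hLt : ∀ t, Filter.Tendsto (fun n => l n t) U (𝓝 (L t)) :=
    fun t => (U.map (fun n => l n t)).le_nhds_lim
  have hLmono : Monotone L := fun s t hst =>
    le_of_tendsto_of_tendsto' (hLt s) (hLt t) (fun n => hmono n hst)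
  -- endpoints
  have hl0 : ∀ n, l n ⟨0, zmem⟩ = ⟨0, zmem⟩ := by
    intro n
    obtain ⟨a, ha⟩ := hsurj n ⟨0, zmem⟩
    refine le_antisymm ?_ ?_
    · have h' : l n ⟨0, zmem⟩ ≤ l n a := hmono n (Subtype.coe_le_coe.mp a.2.1)
      rwa [ha] at h'
    · exact Subtype.coe_le_coe.mp (l n ⟨0, zmem⟩).2.1
  have hlT : ∀ n, l n ⟨T, Tmem⟩ = ⟨T, Tmem⟩ := by
    intro n
    obtain ⟨a, ha⟩ := hsurj n ⟨T, Tmem⟩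
    refine le_antisymm ?_ ?_
    · exact Subtype.coe_le_coe.mp (l n ⟨T, Tmem⟩).2.2
    · have h' : l n a ≤ l n ⟨T, Tmem⟩ := hmono n (Subtype.coe_le_coe.mp a.2.2)
      rwa [ha] at h'
  have hL0 : L ⟨0, zmem⟩ = ⟨0, zmem⟩ := by
    refine tendsto_nhds_unique (hLt _) ?_
    simp only [hl0]
    exact tendsto_const_nhds
  have hLT : L ⟨T, Tmem⟩ = ⟨T, Tmem⟩ := by
    refine tendsto_nhds_unique (hLt _) ?_
    simp only [hlT]
    exact tendsto_const_nhds
  -- pointwise convergence of yn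
  have happ : ∀ n t, yn n t = x (l n t) := by
    intro n t; rw [heq n]; rfl
  have hyconv : ∀ t, Filter.Tendsto (fun n => yn n t) (U : Filter ℕ) (𝓝 (y t)) := fun t =>
    ((continuous_eval_const t).continuousAt.tendsto.comp hconv).mono_left hUatTop
  have hyL : ∀ t, y t = x (L t) := by
    intro t
    refine tendsto_nhds_unique ?_ ((map_continuous x).continuousAt.tendsto.comp (hLt t))
    refine (hyconv t).congr fun n => ?_
    exact happ n t
  -- core "gap" lemma
  have key : ∀ t₀ u : Set.Icc (0:ℝ) T,
      (∀ ε > (0:ℝ), ∃ s₁ s₂ : Set.Icc (0:ℝ) T, s₁ ≤ t₀ ∧ t₀ ≤ s₂ ∧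
        (s₂ : ℝ) - (s₁ : ℝ) < ε ∧ L s₁ < u ∧ u < L s₂) → x u = y t₀ := by
    intro t₀ u H
    have hd : ∀ ε > (0:ℝ), dist (x u) (y t₀) ≤ 0 + ε := by
      intro ε hε
      obtain ⟨δ, hδ, hδ'⟩ := Metric.uniformContinuous_iff.mp
        (CompactSpace.uniformContinuous_of_continuous (map_continuous y)) (ε/3)
        (by positivity)
      obtain ⟨s₁, s₂, hs₁, hs₂, hlt, hu₁, hu₂⟩ := H δ hδ
      have e₁ : ∀ᶠ n in (U : Filter ℕ), l n s₁ < u := (hLt s₁).eventually_lt_const hu₁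
      have e₂ : ∀ᶠ n in (U : Filter ℕ), u < l n s₂ := (hLt s₂).eventually_const_lt hu₂
      have e₃ : ∀ᶠ n in (U : Filter ℕ), dist (yn n) y < ε/3 :=
        (Metric.tendsto_nhds.mp hconv (ε/3) (by positivity)).filter_mono hUatTop
      obtain ⟨n, hn₁, hn₂, hn₃⟩ := (e₁.and (e₂.and e₃)).exists
      obtain ⟨hn₂, hn₃⟩ := (⟨hn₂, hn₃⟩ : _ ∧ _)
      have hs₁₂ : s₁ ≤ s₂ := le_trans hs₁ hs₂
      obtain ⟨s', hs'mem, hs'⟩ := intermediate_value_Icc hs₁₂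
        (map_continuous (l n)).continuousOn ⟨hn₁.le, hn₂.le⟩
      have h1 : dist (x u) (y s') ≤ dist (yn n) y := by
        rw [← hs', ← happ n s']
        exact ContinuousMap.dist_apply_le_dist s'
      have hdist : dist s' t₀ < δ := by
        have c1 : (s₁ : ℝ) ≤ (s' : ℝ) := Subtype.coe_le_coe.mpr hs'mem.1
        have c2 : (s' : ℝ) ≤ (s₂ : ℝ) := Subtype.coe_le_coe.mpr hs'mem.2
        have c3 : (s₁ : ℝ) ≤ (t₀ : ℝ) := Subtype.coe_le_coe.mpr hs₁
        have c4 : (t₀ : ℝ) ≤ (s₂ : ℝ) := Subtype.coe_le_coe.mpr hs₂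
        rw [Subtype.dist_eq, Real.dist_eq, abs_sub_lt_iff]
        constructor <;> linarith
      have h2 : dist (y s') (y t₀) < ε/3 := hδ' hdist
      calc dist (x u) (y t₀) ≤ dist (x u) (y s') + dist (y s') (y t₀) := dist_triangle _ _ _
        _ ≤ ε/3 + ε/3 := add_le_add (h1.trans hn₃.le) h2.le
        _ ≤ 0 + ε := by linarith
    have : dist (x u) (y t₀) ≤ 0 := le_of_forall_pos_le_add (fun ε hε => hd ε hε)
    exact eq_of_dist_eq_zero (le_antisymm this dist_nonneg)
  -- surjectivity of L
  have hLsurj : Function.Surjective L := by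
    intro v
    by_contra hv
    push_neg at hv
    set A : Set ℝ := {r | ∃ h : r ∈ Set.Icc (0:ℝ) T, L ⟨r, h⟩ < v} with hA
    have h0A : (0:ℝ) ∈ A := by
      refine ⟨zmem, ?_⟩
      rw [hL0]
      exact lt_of_le_of_ne (Subtype.coe_le_coe.mp v.2.1)
        (fun h => hv ⟨0, zmem⟩ (hL0.trans h))
    have hbdd : BddAbove A := ⟨T, fun r hr => hr.1.2⟩
    have hAne : A.Nonempty := ⟨0, h0A⟩
    set τ : ℝ := sSup A with hτ
    have hτ0 : 0 ≤ τ := le_csSup hbdd h0A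
    have hτT : τ ≤ T := csSup_le hAne (fun r hr => hr.1.2)
    set t₀ : Set.Icc (0:ℝ) T := ⟨τ, hτ0, hτT⟩ with ht₀
    have habove : ∀ s : Set.Icc (0:ℝ) T, τ < (s : ℝ) → v < L s := by
      intro s hs
      have hnA : (s : ℝ) ∉ A := fun hmem => absurd (le_csSup hbdd hmem) (not_le.mpr hs)
      have : ¬ (L s < v) := fun hlt => hnA ⟨s.2, hlt⟩
      exact lt_of_le_of_ne (not_lt.mp this) (Ne.symm (hv s))
    have hbelow : ∀ s : Set.Icc (0:ℝ) T, (s : ℝ) < τ → L s < v := by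
      intro s hs
      obtain ⟨r, hrA, hsr⟩ := exists_lt_of_lt_csSup hAne hs
      obtain ⟨hr, hLr⟩ := hrA
      exact lt_of_le_of_lt (hLmono (Subtype.coe_le_coe.mp hsr.le)) hLr
    rcases lt_or_gt_of_ne (hv t₀) with hc | hc
    · -- L t₀ < v
      have ht₀T : τ < T := by
        rcases lt_or_eq_of_le hτT with h | h
        · exact h
        · exfalso
          have : t₀ = ⟨T, Tmem⟩ := Subtype.ext h
          rw [this, hLT] at hc
          exact absurd (show v ≤ ⟨T, Tmem⟩ from v.2.2) (not_le.mpr hc)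
      have claim : ∀ u : Set.Icc (0:ℝ) T, L t₀ < u → u ≤ v → x u = y t₀ := by
        intro u h1 h2
        refine key t₀ u fun ε hε => ?_
        have hmem2 : min (τ + ε/2) T ∈ Set.Icc (0:ℝ) T :=
          ⟨le_min (by linarith) h0T, min_le_right _ _⟩
        refine ⟨t₀, ⟨min (τ + ε/2) T, hmem2⟩, le_refl _,
          Subtype.coe_le_coe.mp (le_min (by linarith) hτT), ?_, h1, ?_⟩
        · have := min_le_left (τ + ε/2) T
          simp only [Subtype.coe_mk]
          linarith
        · have hgt : τ < min (τ + ε/2) T := lt_min (by linarith) ht₀T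
          exact lt_of_le_of_lt h2 (habove _ hgt)
      apply hx
      refine ⟨L t₀, v, hc, ?_⟩
      have hXL : x (L t₀) = y t₀ := by
        haveI hne : (𝓝[>] (L t₀)).NeBot := nhdsGT_neBot_of_exists_gt ⟨v, hc⟩
        have h1 : Filter.Tendsto x (𝓝[>] (L t₀)) (𝓝 (x (L t₀))) :=
          ((map_continuous x).continuousAt).continuousWithinAt.tendsto
        have h2 : ∀ᶠ w in 𝓝[>] (L t₀), x w = y t₀ := by
          filter_upwards [nhdsWithin_le_nhds (isOpen_Iio.mem_nhds hc),
            self_mem_nhdsWithin] with w hw1 hw2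
          exact claim w hw2 (le_of_lt hw1)
        exact tendsto_nhds_unique h1
          (Filter.Tendsto.congr' ((h2.mono fun w hw => hw.symm)) tendsto_const_nhds)
      intro u hu1 hu2
      rw [claim u hu1 hu2.le, ← hXL]
    · -- v < L t₀
      have ht₀0 : 0 < τ := by
        rcases lt_or_eq_of_le hτ0 with h | h
        · exact h
        · exfalso
          have : t₀ = ⟨0, zmem⟩ := Subtype.ext h.symm
          rw [this, hL0] at hc
          have hle : (⟨0, zmem⟩ : Set.Icc (0:ℝ) T) ≤ v := Subtype.coe_le_coe.mp v.2.1
          exact absurd hc (not_lt.mpr hle)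
      have claim : ∀ u : Set.Icc (0:ℝ) T, v ≤ u → u < L t₀ → x u = y t₀ := by
        intro u h1 h2
        refine key t₀ u fun ε hε => ?_
        have hmem1 : max (τ - ε/2) 0 ∈ Set.Icc (0:ℝ) T :=
          ⟨le_max_right _ _, max_le (by linarith) h0T⟩
        refine ⟨⟨max (τ - ε/2) 0, hmem1⟩, t₀,
          Subtype.coe_le_coe.mp (max_le (by linarith) hτ0), le_refl _, ?_, ?_, h2⟩
        · have := le_max_left (τ - ε/2) 0
          simp only [Subtype.coe_mk]
          linarith
        · have hlt' : max (τ - ε/2) 0 < τ := max_lt (by linarith) ht₀0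
          exact lt_of_lt_of_le (hbelow _ hlt') h1
      apply hx
      refine ⟨v, L t₀, hc, ?_⟩
      intro u hu1 hu2
      rw [claim u hu1.le hu2, ← claim v (le_refl v) hc]
  have hLcont : Continuous L := hLmono.continuous_of_surjective hLsurj
  refine ⟨⟨L, hLcont⟩, hLmono, hLsurj, ?_⟩
  ext t
  exact hyL t
end

section
/- Let $(E,d)$ be a metric space, $\mathbf x : [0,T] \to E$ any function, $(I_n)_{n\geq 1} = ((c_n,d_n))_{n\geq 1}$ a countable collection of disjoint open subintervals of $[0,T]$ with union $I$, and define $\mathbf y : [0,T] \to E$ by $\mathbf y_t = \mathbf x_t$ for $t \notin I$ and $\mathbf y_t = \mathbf x_{c_n}$ for $t \in (c_n,d_n)$. Then for every $p \geq 1$, setting $C = 1 + 2^p + 3^{p-1}$, we have $\|\mathbf x\|_{p\text{-var};[0,T]}^p \leq (C + 3^{p-1}) \sum_{n=1}^\infty \|\mathbf x\|_{p\text{-var};[c_n,d_n]}^p + C \|\mathbf y\|_{p\text{-var};[0,T]}^p$. -/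
open Set
open scoped ENNReal

/-- `eVar p x s t = ‖x‖_{p-var;[s,t]}^p ∈ [0,∞]`: the supremum, over all partitions
`s = u₀ ≤ u₁ ≤ ⋯ ≤ uₙ = t`, of `∑ edist (x uᵢ) (x uᵢ₊₁) ^ p`. -/
noncomputable def eVar {E : Type*} [PseudoEMetricSpace E] (p : ℝ) (x : ℝ → E) (s t : ℝ) :
    ℝ≥0∞ :=
  ⨆ (n : ℕ) (u : ℕ → ℝ) (_ : Monotone u) (_ : u 0 = s) (_ : u n = t),
    ∑ i ∈ Finset.range n, edist (x (u i)) (x (u (i + 1))) ^ p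

lemma eVar_ge_partition {E : Type*} [PseudoEMetricSpace E] (p : ℝ) (x : ℝ → E) (s t : ℝ)
    (m : ℕ) (w : ℕ → ℝ) (hw : Monotone w) (h0 : w 0 = s) (hm : w m = t) :
    ∑ i ∈ Finset.range m, edist (x (w i)) (x (w (i + 1))) ^ p ≤ eVar p x s t :=
  le_iSup_of_le m (le_iSup_of_le w (le_iSup_of_le hw (le_iSup_of_le h0 (le_iSup_of_le hm le_rfl))))

/-- Bounding a block sum by `eVar` on `[s,t]`. -/
lemma block_le_eVar {E : Type*} [PseudoEMetricSpace E] (p : ℝ) (x : ℝ → E) (s t : ℝ)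
    (u : ℕ → ℝ) (hu : Monotone u) (a b : ℕ) (hab : a ≤ b)
    (hs : s ≤ u a) (ht : u b ≤ t) :
    ∑ i ∈ Finset.Ico a b, edist (x (u i)) (x (u (i + 1))) ^ p ≤ eVar p x s t := by
  set m := b - a with hm
  set w : ℕ → ℝ := fun j => if j = 0 then s else if j ≤ m + 1 then u (a + j - 1) else t with hw
  have hwmono : Monotone w := by
    apply monotone_nat_of_le_succ
    intro j
    rcases Nat.eq_zero_or_pos j with h0 | h0
    · subst h0
      simp only [hw, if_pos rfl, if_neg (Nat.one_ne_zero), if_pos (by omega : 1 ≤ m + 1)]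
      simpa using hs
    · by_cases h1 : j ≤ m
      · have e1 : w j = u (a + j - 1) := by
          simp only [hw]; rw [if_neg (by omega), if_pos (by omega)]
        have e2 : w (j + 1) = u (a + j) := by
          simp only [hw]; rw [if_neg (by omega), if_pos (by omega)]; congr 1 <;> omega
        rw [e1, e2]; exact hu (by omega)
      · by_cases h2 : j = m + 1
        · have e1 : w j = u b := by
            simp only [hw, if_neg (by omega : ¬ j = 0), if_pos (by omega : j ≤ m + 1)]
            congr 1 <;> omega
          have e2 : w (j + 1) = t := by simp only [hw]; rw [if_neg (by omega), if_neg (by omega)]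
          rw [e1, e2]; exact ht
        · have e1 : w j = t := by simp only [hw]; rw [if_neg (by omega), if_neg (by omega)]
          have e2 : w (j + 1) = t := by simp only [hw]; rw [if_neg (by omega), if_neg (by omega)]
          rw [e1, e2]
  have key : ∀ k, k < m → w (k + 1) = u (a + k) ∧ w (k + 2) = u (a + k + 1) := by
    intro k hk
    constructor
    · simp only [hw]; rw [if_neg (by omega), if_pos (by omega)]; congr 1 <;> omega
    · simp only [hw]; rw [if_neg (by omega), if_pos (by omega)]; congr 1 <;> omega
  calc ∑ i ∈ Finset.Ico a b, edist (x (u i)) (x (u (i + 1))) ^ p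
      = ∑ k ∈ Finset.range m, edist (x (u (a + k))) (x (u (a + k + 1))) ^ p := by
        rw [Finset.sum_Ico_eq_sum_range]
    _ = ∑ k ∈ Finset.range m, edist (x (w (k + 1))) (x (w (k + 1 + 1))) ^ p := by
        refine Finset.sum_congr rfl fun k hk => ?_
        obtain ⟨e1, e2⟩ := key k (Finset.mem_range.mp hk)
        rw [e1, show k + 1 + 1 = k + 2 from rfl, e2]
    _ ≤ ∑ j ∈ Finset.range (m + 2), edist (x (w j)) (x (w (j + 1))) ^ p := by
        rw [Finset.sum_range_succ, Finset.sum_range_succ']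
        exact le_self_add.trans le_self_add
    _ ≤ eVar p x s t := by
        refine eVar_ge_partition p x s t (m + 2) w hwmono (by simp [hw]) ?_
        simp only [hw]; rw [if_neg (by omega), if_neg (by omega)]

lemma three_rpow (a b c : ℝ≥0∞) {p : ℝ} (hp : 1 ≤ p) :
    (a + b + c) ^ p ≤ (3 : ℝ≥0∞) ^ (p - 1) * (a ^ p + b ^ p + c ^ p) := by
  have h3 : (3 : ℝ≥0∞) ≠ 0 := by norm_num
  have h3t : (3 : ℝ≥0∞) ≠ ⊤ := by norm_num
  have hp0 : 0 ≤ p := zero_le_one.trans hp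
  have h := ENNReal.rpow_arith_mean_le_arith_mean_rpow Finset.univ
      (fun _ : Fin 3 => 3⁻¹) ![3 * a, 3 * b, 3 * c] (by
        simp [Finset.card_univ]
        exact ENNReal.mul_inv_cancel h3 h3t) hp
  simp only [Fin.sum_univ_three, Matrix.cons_val_zero, Matrix.cons_val_one, Matrix.head_cons,
    Matrix.cons_val_two, Matrix.tail_cons] at h
  have hinv : ∀ z : ℝ≥0∞, 3⁻¹ * (3 * z) = z := fun z => by
    rw [← mul_assoc, ENNReal.inv_mul_cancel h3 h3t, one_mul]
  rw [hinv, hinv, hinv] at h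
  refine h.trans ?_
  have hm : ∀ z : ℝ≥0∞, 3⁻¹ * (3 * z) ^ p = 3 ^ (p - 1) * z ^ p := fun z => by
    rw [ENNReal.mul_rpow_of_nonneg _ _ hp0, ← mul_assoc, ENNReal.rpow_sub _ _ h3 h3t,
      ENNReal.rpow_one, div_eq_mul_inv, mul_comm ((3 : ℝ≥0∞) ^ p)]
  rw [hm, hm, hm, mul_add, mul_add]

lemma single_le_eVar {E : Type*} [PseudoEMetricSpace E] (p : ℝ) (x : ℝ → E) (s t s' t' : ℝ)
    (hs : s ≤ s') (hst : s' ≤ t') (ht : t' ≤ t) :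
    edist (x s') (x t') ^ p ≤ eVar p x s t := by
  have hm : Monotone (fun k : ℕ => if k = 0 then s' else t') := by
    apply monotone_nat_of_le_succ
    intro j
    rcases Nat.eq_zero_or_pos j with h | h
    · subst h; simpa using hst
    · simp [show j ≠ 0 by omega]
  have := block_le_eVar p x s t (fun k : ℕ => if k = 0 then s' else t') hm 0 1 zero_le_one
    (by simpa using hs) (by simpa using ht)
  simpa using this

/-- Flattening a path on a countable disjoint union of open intervals:
with `C = 1 + 2^p + 3^(p-1)`,
`‖x‖ₚᵥₐᵣ^p ≤ (C + 3^(p-1)) ∑ₙ ‖x‖_{p-var;[cₙ,dₙ]}^p + C ‖y‖ₚᵥₐᵣ^p`. -/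
theorem pVar_flatten_bound {E : Type*} [PseudoMetricSpace E]
    (p T : ℝ) (hp : 1 ≤ p) (hT : 0 < T)
    (c d : ℕ → ℝ) (hcd : ∀ n, c n < d n)
    (hsub : ∀ n, Icc (c n) (d n) ⊆ Icc 0 T)
    (hdisj : Pairwise fun m n => Disjoint (Ioo (c m) (d m)) (Ioo (c n) (d n)))
    (x y : ℝ → E)
    (hy₁ : ∀ t ∈ Icc 0 T, (∀ n, t ∉ Ioo (c n) (d n)) → y t = x t)
    (hy₂ : ∀ n, ∀ t ∈ Ioo (c n) (d n), y t = x (c n)) :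
    eVar p x 0 T ≤
      ((1 + (2 : ℝ≥0∞) ^ p + (3 : ℝ≥0∞) ^ (p - 1)) + (3 : ℝ≥0∞) ^ (p - 1)) *
          ∑' n, eVar p x (c n) (d n) +
        (1 + (2 : ℝ≥0∞) ^ p + (3 : ℝ≥0∞) ^ (p - 1)) * eVar p y 0 T := by
  classical
  have hp0 : 0 < p := lt_of_lt_of_le one_pos hp
  set K := ∑' n, eVar p x (c n) (d n) with hK
  set V := eVar p y 0 T with hV
  rw [eVar]
  refine iSup_le fun N => iSup_le fun u => iSup_le fun hu => iSup_le fun h0 => iSup_le fun hN => ?_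
  -- notation
  set P : ℕ → ℕ → Prop := fun i n => u i ∈ Ioo (c n) (d n) with hPdef
  have huniq : ∀ i m n, P i m → P i n → m = n := by
    intro i m n hm hn
    by_contra h
    exact Set.disjoint_left.mp (hdisj h) hm hn
  have hmem : ∀ i, i ≤ N → u i ∈ Icc 0 T := fun i hi =>
    ⟨h0 ▸ hu (Nat.zero_le i), hN ▸ hu hi⟩
  have hyx : ∀ i, i ≤ N → (¬ ∃ n, P i n) → y (u i) = x (u i) := fun i hi h =>
    hy₁ _ (hmem i hi) (fun n hn => h ⟨n, hn⟩)
  have hyc : ∀ i n, P i n → y (u i) = x (c n) := fun i n h => hy₂ n _ h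
  set A : ℕ → ℝ≥0∞ := fun i => edist (x (u i)) (y (u i)) ^ p with hA
  set B : ℕ → ℝ≥0∞ := fun i => edist (y (u i)) (y (u (i + 1))) ^ p with hB
  set Tm : ℕ → ℝ≥0∞ := fun i => edist (x (u i)) (x (u (i + 1))) ^ p with hTm
  set same : ℕ → Prop := fun i => ∃ n, P i n ∧ P (i + 1) n with hsame
  -- single interval bound for A
  have hAle : ∀ i n, P i n → A i ≤ eVar p x (c n) (d n) := by
    intro i n h
    have : A i = edist (x (c n)) (x (u i)) ^ p := by
      rw [hA]; simp only []
      rw [hyc i n h, edist_comm]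
    rw [this]
    exact single_le_eVar p x (c n) (d n) (c n) (u i) le_rfl h.1.le h.2.le
  -- pointwise bound
  have hpoint : ∀ i, i < N →
      Tm i ≤ (if same i then Tm i else 0) + (3 : ℝ≥0∞) ^ (p - 1) *
        ((if same i then 0 else A i) + (if same i then 0 else A (i + 1)) + B i) := by
    intro i _
    by_cases h : same i
    · simp only [if_pos h]
      exact le_self_add
    · simp only [if_neg h, zero_add]
      have htri : edist (x (u i)) (x (u (i + 1))) ≤
          edist (x (u i)) (y (u i)) + edist (y (u i)) (y (u (i + 1))) +
            edist (y (u (i + 1))) (x (u (i + 1))) :=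
        (edist_triangle _ _ _).trans (add_le_add_left (edist_triangle _ _ _) _)
      calc Tm i ≤ (edist (x (u i)) (y (u i)) + edist (y (u i)) (y (u (i + 1))) +
            edist (y (u (i + 1))) (x (u (i + 1)))) ^ p :=
            ENNReal.rpow_le_rpow htri hp0.le
        _ ≤ (3 : ℝ≥0∞) ^ (p - 1) * (A i + B i + edist (y (u (i + 1))) (x (u (i + 1))) ^ p) :=
            three_rpow _ _ _ hp
        _ = (3 : ℝ≥0∞) ^ (p - 1) * (A i + A (i + 1) + B i) := by
            rw [hA, hB]; simp only []
            rw [edist_comm (y (u (i + 1)))]; ring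
  -- sum of B's
  have hBsum : ∑ i ∈ Finset.range N, B i ≤ V := by
    rw [hV]
    exact eVar_ge_partition p y 0 T N u hu h0 hN
  -- sum of internal increments
  have hS1 : ∑ i ∈ Finset.range N, (if same i then Tm i else 0) ≤ K := by
    rw [← Finset.sum_filter]
    set s₁ := (Finset.range N).filter same with hs₁
    set g : ℕ → ℕ := fun i => if h : same i then h.choose else 0 with hg
    have hgP : ∀ i ∈ s₁, P i (g i) ∧ P (i + 1) (g i) := by
      intro i hi
      have h : same i := (Finset.mem_filter.mp hi).2
      rw [hg]; simp only [dif_pos h]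
      exact h.choose_spec
    have hmaps : ∀ i ∈ s₁, g i ∈ s₁.image g := fun i hi => Finset.mem_image_of_mem g hi
    rw [← Finset.sum_fiberwise_of_maps_to hmaps]
    have key : ∀ n ∈ s₁.image g,
        ∑ i ∈ s₁.filter (fun i => g i = n), Tm i ≤ eVar p x (c n) (d n) := by
      intro n hn
      obtain ⟨i0, hi0, hgi0⟩ := Finset.mem_image.mp hn
      have hi0N : i0 < N := Finset.mem_range.mp (Finset.mem_filter.mp hi0).1
      set sn := (Finset.range (N + 1)).filter (fun i => P i n) with hsn
      have hne : sn.Nonempty :=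
        ⟨i0, Finset.mem_filter.mpr ⟨Finset.mem_range.mpr (by omega), hgi0 ▸ (hgP i0 hi0).1⟩⟩
      set a := sn.min' hne with ha
      set b := sn.max' hne with hb
      have hPa : P a n := (Finset.mem_filter.mp (sn.min'_mem hne)).2
      have hPb : P b n := (Finset.mem_filter.mp (sn.max'_mem hne)).2
      have hab : a ≤ b := sn.min'_le b (sn.max'_mem hne)
      have hsubset : s₁.filter (fun i => g i = n) ⊆ Finset.Ico a b := by
        intro i hi
        obtain ⟨his₁, hgin⟩ := Finset.mem_filter.mp hi
        have hQ := hgP i his₁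
        rw [hgin] at hQ
        have hiN : i < N := Finset.mem_range.mp (Finset.mem_filter.mp his₁).1
        have hi_in : i ∈ sn := Finset.mem_filter.mpr ⟨Finset.mem_range.mpr (by omega), hQ.1⟩
        have hi1_in : i + 1 ∈ sn := Finset.mem_filter.mpr ⟨Finset.mem_range.mpr (by omega), hQ.2⟩
        exact Finset.mem_Ico.mpr ⟨sn.min'_le i hi_in,
          lt_of_lt_of_le (Nat.lt_succ_self i) (sn.le_max' (i + 1) hi1_in)⟩
      calc ∑ i ∈ s₁.filter (fun i => g i = n), Tm i
          ≤ ∑ i ∈ Finset.Ico a b, Tm i := Finset.sum_le_sum_of_subset hsubset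
        _ ≤ eVar p x (c n) (d n) :=
            block_le_eVar p x (c n) (d n) u hu a b hab hPa.1.le hPb.2.le
    calc ∑ n ∈ s₁.image g, ∑ i ∈ s₁.filter (fun i => g i = n), Tm i
        ≤ ∑ n ∈ s₁.image g, eVar p x (c n) (d n) := Finset.sum_le_sum key
      _ ≤ K := by rw [hK]; exact ENNReal.sum_le_tsum _
  -- sum of A's at left-exits
  have hSA : ∑ i ∈ Finset.range N, (if same i then 0 else A i) ≤ K := by
    set s₂ := (Finset.range N).filter (fun i => ¬ same i ∧ ∃ n, P i n) with hs₂
    have hzero : ∀ i ∈ Finset.range N, i ∉ s₂ → (if same i then 0 else A i) = 0 := by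
      intro i hi hns
      by_cases h : same i
      · rw [if_pos h]
      · rw [if_neg h]
        have hno : ¬ ∃ n, P i n := fun he => hns (Finset.mem_filter.mpr ⟨hi, h, he⟩)
        have hx := hyx i (le_of_lt (Finset.mem_range.mp hi)) hno
        rw [hA]; simp only []
        rw [hx, edist_self, ENNReal.zero_rpow_of_pos hp0]
    rw [← Finset.sum_subset (Finset.filter_subset _ _) hzero]
    have heq : ∀ i ∈ s₂, (if same i then 0 else A i) = A i := fun i hi =>
      if_neg (Finset.mem_filter.mp hi).2.1
    rw [Finset.sum_congr rfl heq]
    set g : ℕ → ℕ := fun i => if h : ∃ n, P i n then h.choose else 0 with hg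
    have hgP : ∀ i ∈ s₂, P i (g i) := by
      intro i hi
      have hex : ∃ n, P i n := (Finset.mem_filter.mp hi).2.2
      rw [hg]; simp only [dif_pos hex]
      exact hex.choose_spec
    have hinj : ∀ i ∈ s₂, ∀ j ∈ s₂, g i = g j → i = j := by
      intro i hi j hj hgij
      by_contra hne
      have hPi : P i (g i) := hgP i hi
      have hPj : P j (g i) := hgij ▸ hgP j hj
      have hnsi : ¬ same i := (Finset.mem_filter.mp hi).2.1
      have hnsj : ¬ same j := (Finset.mem_filter.mp hj).2.1
      rcases Nat.lt_or_ge i j with hlt | hge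
      · exact hnsi ⟨g i, hPi, lt_of_lt_of_le hPi.1 (hu (Nat.le_succ i)),
          lt_of_le_of_lt (hu (by omega : i + 1 ≤ j)) hPj.2⟩
      · have hlt : j < i := by omega
        exact hnsj ⟨g i, hPj, lt_of_lt_of_le hPj.1 (hu (Nat.le_succ j)),
          lt_of_le_of_lt (hu (by omega : j + 1 ≤ i)) hPi.2⟩
    calc ∑ i ∈ s₂, A i
        ≤ ∑ i ∈ s₂, eVar p x (c (g i)) (d (g i)) :=
          Finset.sum_le_sum fun i hi => hAle i (g i) (hgP i hi)
      _ = ∑ n ∈ s₂.image g, eVar p x (c n) (d n) := (Finset.sum_image (f := fun n => eVar p x (c n) (d n)) hinj).symm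
      _ ≤ K := by rw [hK]; exact ENNReal.sum_le_tsum _
  have hSC : ∑ i ∈ Finset.range N, (if same i then 0 else A (i + 1)) ≤ K := by
    set s₃ := (Finset.range N).filter (fun i => ¬ same i ∧ ∃ n, P (i + 1) n) with hs₃
    have hzero : ∀ i ∈ Finset.range N, i ∉ s₃ → (if same i then 0 else A (i + 1)) = 0 := by
      intro i hi hns
      by_cases h : same i
      · rw [if_pos h]
      · rw [if_neg h]
        have hno : ¬ ∃ n, P (i + 1) n := fun he => hns (Finset.mem_filter.mpr ⟨hi, h, he⟩)
        have hiN : i < N := Finset.mem_range.mp hi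
        have hx := hyx (i + 1) (by omega) hno
        rw [hA]; simp only []
        rw [hx, edist_self, ENNReal.zero_rpow_of_pos hp0]
    rw [← Finset.sum_subset (Finset.filter_subset _ _) hzero]
    have heq : ∀ i ∈ s₃, (if same i then 0 else A (i + 1)) = A (i + 1) := fun i hi =>
      if_neg (Finset.mem_filter.mp hi).2.1
    rw [Finset.sum_congr rfl heq]
    set g : ℕ → ℕ := fun i => if h : ∃ n, P (i + 1) n then h.choose else 0 with hg
    have hgP : ∀ i ∈ s₃, P (i + 1) (g i) := by
      intro i hi
      have hex : ∃ n, P (i + 1) n := (Finset.mem_filter.mp hi).2.2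
      rw [hg]; simp only [dif_pos hex]
      exact hex.choose_spec
    have hnP : ∀ i ∈ s₃, ¬ P i (g i) := by
      intro i hi hPi
      exact (Finset.mem_filter.mp hi).2.1 ⟨g i, hPi, hgP i hi⟩
    have hinj : ∀ i ∈ s₃, ∀ j ∈ s₃, g i = g j → i = j := by
      intro i hi j hj hgij
      by_contra hne
      have hPi : P (i + 1) (g i) := hgP i hi
      have hPj : P (j + 1) (g i) := hgij ▸ hgP j hj
      rcases Nat.lt_or_ge i j with hlt | hge
      · refine hnP j hj ?_
        rw [← hgij]
        exact ⟨lt_of_lt_of_le hPi.1 (hu (by omega : i + 1 ≤ j)),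
          lt_of_le_of_lt (hu (Nat.le_succ j)) hPj.2⟩
      · have hlt : j < i := by omega
        exact hnP i hi ⟨lt_of_lt_of_le hPj.1 (hu (by omega : j + 1 ≤ i)),
          lt_of_le_of_lt (hu (Nat.le_succ i)) hPi.2⟩
    calc ∑ i ∈ s₃, A (i + 1)
        ≤ ∑ i ∈ s₃, eVar p x (c (g i)) (d (g i)) :=
          Finset.sum_le_sum fun i hi => hAle (i + 1) (g i) (hgP i hi)
      _ = ∑ n ∈ s₃.image g, eVar p x (c n) (d n) := (Finset.sum_image (f := fun n => eVar p x (c n) (d n)) hinj).symm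
      _ ≤ K := by rw [hK]; exact ENNReal.sum_le_tsum _
  -- assemble
  calc ∑ i ∈ Finset.range N, Tm i
      ≤ ∑ i ∈ Finset.range N, ((if same i then Tm i else 0) + (3 : ℝ≥0∞) ^ (p - 1) *
        ((if same i then 0 else A i) + (if same i then 0 else A (i + 1)) + B i)) :=
        Finset.sum_le_sum fun i hi => hpoint i (Finset.mem_range.mp hi)
    _ = ∑ i ∈ Finset.range N, (if same i then Tm i else 0) + (3 : ℝ≥0∞) ^ (p - 1) *
        (∑ i ∈ Finset.range N, (if same i then 0 else A i) +
         ∑ i ∈ Finset.range N, (if same i then 0 else A (i + 1)) +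
         ∑ i ∈ Finset.range N, B i) := by
        rw [Finset.sum_add_distrib, ← Finset.mul_sum]
        congr 2
        rw [Finset.sum_add_distrib, Finset.sum_add_distrib]
    _ ≤ K + (3 : ℝ≥0∞) ^ (p - 1) * (K + K + V) := by
        gcongr
    _ ≤ ((1 + (2 : ℝ≥0∞) ^ p + (3 : ℝ≥0∞) ^ (p - 1)) + (3 : ℝ≥0∞) ^ (p - 1)) * K +
        (1 + (2 : ℝ≥0∞) ^ p + (3 : ℝ≥0∞) ^ (p - 1)) * V := by
        have e : K + (3 : ℝ≥0∞) ^ (p - 1) * (K + K + V) =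
            (1 + 2 * (3 : ℝ≥0∞) ^ (p - 1)) * K + (3 : ℝ≥0∞) ^ (p - 1) * V := by ring
        rw [e]
        refine add_le_add (mul_le_mul_left ?_ K) (mul_le_mul_left ?_ V)
        · rw [two_mul, ← add_assoc]
          exact add_le_add (add_le_add le_self_add le_rfl) le_rfl
        · exact le_add_self
end

section
/- Let $(E,d)$ be a metric space and $\mathbf x : [0,T] \to E$ a function. For $\delta > 0$, define $\nu_\delta(\mathbf x)$ as the supremum of integers $k \geq 0$ such that there exist times $t_1 < t_2 \leq t_3 < t_4 \leq \dots \leq t_{2k-1} < t_{2k}$ in $[0,T]$ with $d(\mathbf x_{t_{2i-1}}, \mathbf x_{t_{2i}}) > \delta$ for all $i \leq k$, and let $M(\mathbf x) = \sup_{s,t\in[0,T]} d(\mathbf x_s,\mathbf x_t)$. Then for every $p \geq 1$: $\|\mathbf x\|_{p\text{-var};[0,T]}^p \leq \sum_{r=1}^\infty 2^{-rp + p} \nu_{2^{-r}}(\mathbf x) + M(\mathbf x)^p \, \nu_1(\mathbf x)$. -/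
open Set
open scoped ENNReal

/-- `oscCount δ T x ∈ [0,∞]`: the supremum of the number `k` of oscillations of `x` of size
exceeding `δ` over times `t₁ ≤ t₂ ≤ t₃ ≤ ⋯ ≤ t₂ₖ` in `[0,T]` with
`d(x t₍₂ᵢ₋₁₎, x t₍₂ᵢ₎) > δ`. -/
noncomputable def oscCount {E : Type*} [PseudoMetricSpace E] (δ T : ℝ) (x : ℝ → E) :
    ℝ≥0∞ :=
  ⨆ (k : ℕ) (_ : ∃ t : ℕ → ℝ, Monotone t ∧ (∀ i < 2 * k, t i ∈ Icc 0 T) ∧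
      ∀ i < k, δ < dist (x (t (2 * i))) (x (t (2 * i + 1)))), (k : ℝ≥0∞)

lemma card_le_oscCount' {E : Type*} [PseudoMetricSpace E] {δ T : ℝ} {x : ℝ → E}
    {n : ℕ} {u : ℕ → ℝ} (hu : Monotone u) (h0 : u 0 = 0) (hn : u n = T)
    {S : Finset ℕ} (hSn : ∀ i ∈ S, i < n)
    (hd : ∀ i ∈ S, δ < dist (x (u i)) (x (u (i + 1)))) :
    (S.card : ℝ≥0∞) ≤ oscCount δ T x := by
  set k := S.card with hk
  set e := S.orderIsoOfFin hk.symm with he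
  have heS : ∀ a : Fin k, (e a : ℕ) ∈ S := fun a => (e a).2
  have hen : ∀ a : Fin k, (e a : ℕ) < n := fun a => hSn _ (heS a)
  have hemono : ∀ a b : Fin k, a < b → (e a : ℕ) < (e b : ℕ) := fun a b hab => e.strictMono hab
  set g : ℕ → ℕ := fun j => if h : j / 2 < k then (e ⟨j / 2, h⟩ : ℕ) + j % 2 else n with hg
  have hgval : ∀ j, g j = if h : j / 2 < k then (e ⟨j / 2, h⟩ : ℕ) + j % 2 else n := fun j => rfl
  have hgn : ∀ j, g j ≤ n := by
    intro j
    rw [hgval]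
    split
    · have h1 := hen ⟨j / 2, by assumption⟩
      omega
    · exact le_rfl
  have hgmono : Monotone g := by
    apply monotone_nat_of_le_succ
    intro j
    rcases Nat.even_or_odd j with ⟨m, hm⟩ | ⟨m, hm⟩
    · have h1 : (j + 1) / 2 = j / 2 := by omega
      have h2 : (j + 1) % 2 = 1 := by omega
      have h3 : j % 2 = 0 := by omega
      rw [hgval, hgval, h1, h2, h3]
      split
      · omega
      · exact le_rfl
    · have h1 : (j + 1) / 2 = j / 2 + 1 := by omega
      have h2 : (j + 1) % 2 = 0 := by omega
      have h3 : j % 2 = 1 := by omega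
      rw [hgval, hgval, h1, h2, h3]
      by_cases h : j / 2 + 1 < k
      · have h' : j / 2 < k := by omega
        rw [dif_pos h, dif_pos h']
        have := hemono ⟨j / 2, h'⟩ ⟨j / 2 + 1, h⟩ (by simp [Fin.lt_def])
        omega
      · rw [dif_neg h]
        by_cases h' : j / 2 < k
        · rw [dif_pos h']
          have := hen ⟨j / 2, h'⟩
          omega
        · rw [dif_neg h']
  have hmem : ∀ j, u (g j) ∈ Icc (0:ℝ) T := by
    intro j
    exact ⟨h0 ▸ hu (Nat.zero_le _), hn ▸ hu (hgn j)⟩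
  have hdist : ∀ i < k, δ < dist (x (u (g (2 * i)))) (x (u (g (2 * i + 1)))) := by
    intro i hi
    have h1 : (2 * i) / 2 = i := by omega
    have h2 : (2 * i) % 2 = 0 := by omega
    have h3 : (2 * i + 1) / 2 = i := by omega
    have h4 : (2 * i + 1) % 2 = 1 := by omega
    rw [hgval, hgval, h1, h2, h3, h4, dif_pos hi, dif_pos hi]
    simpa using hd _ (heS ⟨i, hi⟩)
  exact le_iSup₂_of_le k ⟨fun j => u (g j), hu.comp hgmono, fun i _ => hmem i, hdist⟩ le_rfl

lemma exists_bucket {d : ℝ} (hd : 0 < d) : ∃ r : ℕ, (2:ℝ) ^ (-((r:ℝ)+1)) < d := by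
  obtain ⟨m, hm⟩ := exists_pow_lt_of_lt_one hd (by norm_num : (1/2:ℝ) < 1)
  refine ⟨m, lt_of_le_of_lt ?_ hm⟩
  rw [Real.rpow_neg (by norm_num)]
  have : (2:ℝ) ^ ((m:ℝ) + 1) = 2 ^ (m + 1) := by
    rw [← Real.rpow_natCast 2 (m+1)]; push_cast; ring_nf
  rw [this, one_div, inv_pow]
  exact inv_anti₀ (by positivity) (by
    calc (2:ℝ)^m ≤ 2^(m+1) := by apply pow_le_pow_right₀ <;> norm_num
    )

lemma bucket_bounds {d : ℝ} (hd0 : 0 < d) (hd1 : d ≤ 1) :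
    (2:ℝ) ^ (-((Nat.find (exists_bucket hd0) : ℝ) + 1)) < d ∧
      d ≤ (2:ℝ) ^ (-(Nat.find (exists_bucket hd0) : ℝ)) := by
  refine ⟨Nat.find_spec (exists_bucket hd0), ?_⟩
  rcases Nat.eq_zero_or_pos (Nat.find (exists_bucket hd0)) with h | h
  · rw [h]; simpa using hd1
  · have := Nat.find_min (exists_bucket hd0) (m := Nat.find (exists_bucket hd0) - 1) (by omega)
    push_neg at this
    calc d ≤ (2:ℝ) ^ (-(((Nat.find (exists_bucket hd0) - 1 : ℕ) : ℝ) + 1)) := this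
    _ = (2:ℝ) ^ (-(Nat.find (exists_bucket hd0) : ℝ)) := by
        congr 1
        have h' : ((Nat.find (exists_bucket hd0) - 1 : ℕ) : ℝ)
            = (Nat.find (exists_bucket hd0) : ℝ) - 1 := by
          push_cast [Nat.cast_sub h]; ring
        rw [h']; ring

/-- The `p`-variation of any function is controlled by the oscillation
counts: `‖x‖ₚᵥₐᵣ^p ≤ ∑_{r≥1} 2^{-rp+p} ν_{2^{-r}}(x) + M(x)^p ν₁(x)`,
where `M(x) = sup_{s,t} d(x_s, x_t)`. -/
theorem pVar_le_oscCount_sum {E : Type*} [PseudoMetricSpace E]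
    (p T : ℝ) (hp : 1 ≤ p) (hT : 0 < T) (x : ℝ → E) :
    eVar p x 0 T ≤
      (∑' r : ℕ, (2 : ℝ≥0∞) ^ (-((r : ℝ) + 1) * p + p) *
          oscCount ((2 : ℝ) ^ (-((r : ℝ) + 1))) T x) +
        (⨆ s ∈ Icc (0 : ℝ) T, ⨆ t ∈ Icc (0 : ℝ) T, edist (x s) (x t)) ^ p *
          oscCount 1 T x := by
  classical
  rw [eVar]
  refine iSup_le fun n => iSup_le fun u => iSup_le fun hu => iSup_le fun h0 =>
    iSup_le fun hn => ?_
  have hp0 : (0:ℝ) < p := lt_of_lt_of_le one_pos hp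
  set M := (⨆ s ∈ Icc (0:ℝ) T, ⨆ t ∈ Icc (0:ℝ) T, edist (x s) (x t)) with hM
  set d : ℕ → ℝ := fun i => dist (x (u i)) (x (u (i+1))) with hdd
  set f : ℕ → ℝ≥0∞ := fun i => edist (x (u i)) (x (u (i + 1))) ^ p with hf
  have hmem : ∀ i ≤ n, u i ∈ Icc (0:ℝ) T := fun i hi => ⟨h0 ▸ hu (Nat.zero_le i), hn ▸ hu hi⟩
  have hfd : ∀ i, f i = ENNReal.ofReal (d i) ^ p := fun i => by
    rw [hf, hdd]; simp [edist_dist]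
  set A := (Finset.range n).filter (fun i => 1 < d i) with hA
  set C := (Finset.range n).filter (fun i => 0 < d i ∧ d i ≤ 1) with hC
  have hdisj : Disjoint A C := by
    rw [Finset.disjoint_left]
    intro i hiA hiC
    rw [hA, Finset.mem_filter] at hiA
    rw [hC, Finset.mem_filter] at hiC
    linarith [hiA.2, hiC.2.2]
  have hsub : A ∪ C ⊆ Finset.range n :=
    Finset.union_subset (Finset.filter_subset _ _) (Finset.filter_subset _ _)
  have hzero : ∀ i ∈ Finset.range n, i ∉ A ∪ C → f i = 0 := by
    intro i hi hni
    have hd0 : d i ≤ 0 := by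
      by_contra h
      push_neg at h
      rcases le_or_gt (d i) 1 with h1 | h1
      · exact hni (Finset.mem_union_right _ (Finset.mem_filter.2 ⟨hi, h, h1⟩))
      · exact hni (Finset.mem_union_left _ (Finset.mem_filter.2 ⟨hi, h1⟩))
    rw [hfd i, ENNReal.ofReal_eq_zero.2 hd0, ENNReal.zero_rpow_of_pos hp0]
  have hstep : ∑ i ∈ Finset.range n, f i = ∑ i ∈ A, f i + ∑ i ∈ C, f i :=
    (Finset.sum_subset hsub hzero).symm.trans (Finset.sum_union hdisj)
  -- bound on A
  have hMbound : ∀ i ∈ A, f i ≤ M ^ p := by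
    intro i hi
    have hin : i < n := Finset.mem_range.1 (Finset.mem_filter.1 hi).1
    refine ENNReal.rpow_le_rpow ?_ hp0.le
    exact le_iSup₂_of_le (u i) (hmem i hin.le)
      (le_iSup₂ (f := fun t (_ : t ∈ Icc (0:ℝ) T) => edist (x (u i)) (x t))
        (u (i+1)) (hmem (i+1) hin))
  have hAcard : (A.card : ℝ≥0∞) ≤ oscCount 1 T x :=
    card_le_oscCount' hu h0 hn (fun i hi => Finset.mem_range.1 (Finset.mem_filter.1 hi).1)
      (fun i hi => (Finset.mem_filter.1 hi).2)
  have hAsum : ∑ i ∈ A, f i ≤ M ^ p * oscCount 1 T x := by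
    calc ∑ i ∈ A, f i ≤ A.card • M ^ p := Finset.sum_le_card_nsmul _ _ _ hMbound
    _ = (A.card : ℝ≥0∞) * M ^ p := nsmul_eq_mul _ _
    _ ≤ oscCount 1 T x * M ^ p := mul_le_mul_left hAcard _
    _ = M ^ p * oscCount 1 T x := mul_comm _ _
  -- bound on C
  set σ : ℕ → ℕ := fun i => if h : 0 < d i then Nat.find (exists_bucket h) else 0 with hσ
  have hσspec : ∀ i ∈ C, (2:ℝ) ^ (-((σ i : ℝ) + 1)) < d i ∧ d i ≤ (2:ℝ) ^ (-(σ i : ℝ)) := by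
    intro i hi
    rw [hC, Finset.mem_filter] at hi
    obtain ⟨-, h1, h2⟩ := hi
    have hb := bucket_bounds h1 h2
    have hσi : σ i = Nat.find (exists_bucket h1) := by rw [hσ]; exact dif_pos h1
    rw [hσi]
    exact hb
  set N := C.sup σ + 1 with hN
  have hfib : ∑ i ∈ C, f i = ∑ r ∈ Finset.range N, ∑ i ∈ C.filter (fun i => σ i = r), f i :=
    (Finset.sum_fiberwise_of_maps_to
      (fun i hi => Finset.mem_range.2 (Nat.lt_succ_of_le (Finset.le_sup hi))) f).symm
  have hterm : ∀ r : ℕ, ∑ i ∈ C.filter (fun i => σ i = r), f i ≤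
      (2:ℝ≥0∞) ^ (-((r:ℝ)+1) * p + p) * oscCount ((2:ℝ) ^ (-((r:ℝ)+1))) T x := by
    intro r
    set B := C.filter (fun i => σ i = r) with hB
    have hBC : ∀ i ∈ B, i ∈ C ∧ σ i = r := fun i hi => Finset.mem_filter.1 hi
    have hub : ∀ i ∈ B, f i ≤ (2:ℝ≥0∞) ^ (-((r:ℝ)+1) * p + p) := by
      intro i hi
      obtain ⟨hiC, hir⟩ := hBC i hi
      have h2 := (hσspec i hiC).2
      rw [hir] at h2
      rw [hfd]
      calc ENNReal.ofReal (d i) ^ p ≤ ENNReal.ofReal ((2:ℝ) ^ (-(r:ℝ))) ^ p :=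
            ENNReal.rpow_le_rpow (ENNReal.ofReal_le_ofReal h2) hp0.le
      _ = ((2:ℝ≥0∞) ^ (-(r:ℝ))) ^ p := by
            have h1 : ENNReal.ofReal ((2:ℝ) ^ (-(r:ℝ))) = (2:ℝ≥0∞) ^ (-(r:ℝ)) := by
              rw [← ENNReal.ofReal_rpow_of_pos (by norm_num : (0:ℝ) < 2)]
              norm_num
            rw [h1]
      _ = (2:ℝ≥0∞) ^ (-(r:ℝ) * p) := (ENNReal.rpow_mul _ _ _).symm
      _ = (2:ℝ≥0∞) ^ (-((r:ℝ)+1) * p + p) := by congr 1; ring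
    have hBcard : (B.card : ℝ≥0∞) ≤ oscCount ((2:ℝ) ^ (-((r:ℝ)+1))) T x := by
      refine card_le_oscCount' hu h0 hn ?_ ?_
      · intro i hi
        have := (hBC i hi).1
        rw [hC, Finset.mem_filter] at this
        exact Finset.mem_range.1 this.1
      · intro i hi
        obtain ⟨hiC, hir⟩ := hBC i hi
        have h1 := (hσspec i hiC).1
        rw [hir] at h1
        exact h1
    calc ∑ i ∈ B, f i ≤ B.card • ((2:ℝ≥0∞) ^ (-((r:ℝ)+1) * p + p)) :=
          Finset.sum_le_card_nsmul _ _ _ hub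
    _ = (B.card : ℝ≥0∞) * ((2:ℝ≥0∞) ^ (-((r:ℝ)+1) * p + p)) := nsmul_eq_mul _ _
    _ ≤ oscCount ((2:ℝ) ^ (-((r:ℝ)+1))) T x * ((2:ℝ≥0∞) ^ (-((r:ℝ)+1) * p + p)) :=
          mul_le_mul_left hBcard _
    _ = (2:ℝ≥0∞) ^ (-((r:ℝ)+1) * p + p) * oscCount ((2:ℝ) ^ (-((r:ℝ)+1))) T x := mul_comm _ _
  have hCsum : ∑ i ∈ C, f i ≤
      ∑' r : ℕ, (2:ℝ≥0∞) ^ (-((r:ℝ)+1) * p + p) * oscCount ((2:ℝ) ^ (-((r:ℝ)+1))) T x := by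
    rw [hfib]
    exact le_trans (ENNReal.sum_le_tsum _) (ENNReal.tsum_le_tsum hterm)
  calc ∑ i ∈ Finset.range n, f i = ∑ i ∈ A, f i + ∑ i ∈ C, f i := hstep
  _ ≤ M ^ p * oscCount 1 T x +
      ∑' r : ℕ, (2:ℝ≥0∞) ^ (-((r:ℝ)+1) * p + p) * oscCount ((2:ℝ) ^ (-((r:ℝ)+1))) T x :=
      add_le_add hAsum hCsum
  _ = _ := add_comm _ _
end

section
/- Let $Z$ be a random variable with negative binomial distribution counting both successes and failures with parameters $(r, 1-q)$, $q \in (0,1)$: i.e. $Z$ is the total number of Bernoulli$(1-q)$ trials needed to obtain $r$ successes. Let $(\tau_i)_{i\geq 0}$ be an increasing sequence of $[0,\infty]$-valued random variables with $\tau_0 = 0$, such that almost surely for all $i \geq 0$, $\mathbb P(\tau_{i+1} - \tau_i \leq h \mid \tau_i, \dots, \tau_0) \leq q$ (with convention $\infty - \infty = \infty$). Let $N := \sup\{j \geq 0 : \tau_j \leq T\}$. Then $\mathbb E[N] \leq \lceil T/h \rceil \cdot \frac{1}{1-q}$. -/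
open MeasureTheory Set
open scoped ENNReal

namespace NegBinAux
variable {Ω : Type*} [m' : MeasurableSpace Ω]

/-- the "small gap at step i" event -/
def G (τ : ℕ → Ω → ℝ≥0∞) (h : ℝ) (i : ℕ) : Set Ω :=
  {ω' | τ (i + 1) ω' ≠ ⊤ ∧ τ (i + 1) ω' ≤ τ i ω' + ENNReal.ofReal h}

open Classical in
/-- number of small gaps among the first j gaps -/
noncomputable def X (τ : ℕ → Ω → ℝ≥0∞) (h : ℝ) (j : ℕ) (ω : Ω) : ℕ :=
  ((Finset.range j).filter (fun i => ω ∈ G τ h i)).card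

/-- the event {τ_j ≤ T and X_j ≥ k} -/
def A (τ : ℕ → Ω → ℝ≥0∞) (h T : ℝ) (j : ℕ) (k : ℤ) : Set Ω :=
  {ω | τ j ω ≤ ENNReal.ofReal T ∧ k ≤ (X τ h j ω : ℤ)}

open Classical in
lemma X_succ (τ : ℕ → Ω → ℝ≥0∞) (h : ℝ) (j : ℕ) (ω : Ω) :
    X τ h (j+1) ω = if ω ∈ G τ h j then X τ h j ω + 1 else X τ h j ω := by
  simp only [X, Finset.range_add_one, Finset.filter_insert]
  split <;> simp [Finset.card_insert_of_notMem, Finset.notMem_range_self]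

open Classical in
lemma X_le (τ : ℕ → Ω → ℝ≥0∞) (h : ℝ) (j : ℕ) (ω : Ω) : X τ h j ω ≤ j :=
  (Finset.card_filter_le _ _).trans (Finset.card_range j).le

lemma measurableSet_G {τ : ℕ → Ω → ℝ≥0∞} {i : ℕ} (h1' : Measurable (τ (i+1)))
    (h2' : Measurable (τ i)) (h : ℝ) :
    MeasurableSet (G τ h i) := by
  have h1 : MeasurableSet {ω' | τ (i + 1) ω' ≠ ⊤} :=
    h1' ((measurableSet_singleton (⊤ : ℝ≥0∞)).compl)
  have h2 : MeasurableSet {ω' | τ (i + 1) ω' ≤ τ i ω' + ENNReal.ofReal h} :=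
    measurableSet_le h1' (h2'.add_const _)
  exact h1.inter h2

lemma measurable_X {τ : ℕ → Ω → ℝ≥0∞} {j : ℕ} (hτ : ∀ i ≤ j, Measurable (τ i)) (h : ℝ) :
    Measurable (fun ω => X τ h j ω) := by
  classical
  have : (fun ω => X τ h j ω) =
      (fun ω => ∑ i ∈ Finset.range j, if ω ∈ G τ h i then 1 else 0) := by
    funext ω; rw [X]; exact Finset.card_filter _ _
  rw [this]
  refine Finset.measurable_sum _ fun i hi => ?_
  have hi' : i + 1 ≤ j := Finset.mem_range.mp hi
  exact Measurable.ite (measurableSet_G (hτ _ hi') (hτ _ (le_of_lt hi')) h)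
    measurable_const measurable_const

lemma measurableSet_A {τ : ℕ → Ω → ℝ≥0∞} {j : ℕ} (hτ : ∀ i ≤ j, Measurable (τ i)) (h T : ℝ)
    (k : ℤ) : MeasurableSet (A τ h T j k) := by
  have h1 : MeasurableSet {ω | τ j ω ≤ ENNReal.ofReal T} := (hτ j le_rfl) measurableSet_Iic
  have h2 : MeasurableSet {ω | k ≤ (X τ h j ω : ℤ)} :=
    (measurable_X hτ h) (show MeasurableSet {n : ℕ | k ≤ (n : ℤ)} from trivial)
  exact h1.inter h2

/-- the conditioning σ-algebra -/
def m (τ : ℕ → Ω → ℝ≥0∞) (j : ℕ) : MeasurableSpace Ω :=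
  ⨆ k ∈ Finset.range (j + 1), MeasurableSpace.comap (τ k) inferInstance

lemma m_le {τ : ℕ → Ω → ℝ≥0∞} (hτ : ∀ i, Measurable (τ i)) (j : ℕ) :
    m τ j ≤ ‹MeasurableSpace Ω› :=
  iSup₂_le fun k _ => (hτ k).comap_le

lemma meas_tau_m {τ : ℕ → Ω → ℝ≥0∞} {i j : ℕ} (hij : i ≤ j) :
    Measurable[m τ j] (τ i) :=
  Measurable.of_comap_le
    (le_iSup₂ (f := fun k (_ : k ∈ Finset.range (j+1)) =>
      MeasurableSpace.comap (τ k) inferInstance) i (Finset.mem_range.mpr (Nat.lt_succ_of_le hij)))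

lemma measurableSet_A_m {τ : ℕ → Ω → ℝ≥0∞} {j : ℕ} (h T : ℝ) (k : ℤ) :
    MeasurableSet[m τ j] (A τ h T j k) :=
  measurableSet_A (m' := m τ j) (fun _ hi => meas_tau_m hi) h T k

lemma cond_bound (μ : Measure Ω) [IsProbabilityMeasure μ]
    {τ : ℕ → Ω → ℝ≥0∞} (hτmeas : ∀ i, Measurable (τ i)) {h q : ℝ} (hq0 : 0 ≤ q) (j : ℕ)
    (hcond : ∀ᵐ ω ∂μ, (μ[(G τ h j).indicator (fun _ => (1 : ℝ)) | m τ j]) ω ≤ q)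
    {S : Set Ω} (hS : MeasurableSet[m τ j] S) :
    μ (S ∩ G τ h j) ≤ ENNReal.ofReal q * μ S := by
  have hm : m τ j ≤ m' := m_le hτmeas j
  have hGm : MeasurableSet (G τ h j) := measurableSet_G (hτmeas _) (hτmeas _) h
  have hint : Integrable ((G τ h j).indicator fun _ => (1 : ℝ)) μ :=
    (integrable_const 1).indicator hGm
  have h1 : ∫ ω in S, (G τ h j).indicator (fun _ => (1 : ℝ)) ω ∂μ
      = (μ (S ∩ G τ h j)).toReal := by
    have := integral_indicator_one (μ := μ.restrict S) hGm
    rw [show ((G τ h j).indicator fun _ => (1:ℝ)) = (G τ h j).indicator 1 from rfl, this,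
      measureReal_def, Measure.restrict_apply hGm, inter_comm]
  have h2 : ∫ ω in S, (μ[(G τ h j).indicator (fun _ => (1 : ℝ)) | m τ j]) ω ∂μ
      = ∫ ω in S, (G τ h j).indicator (fun _ => (1 : ℝ)) ω ∂μ :=
    setIntegral_condExp hm hint hS
  have h3 : ∫ ω in S, (μ[(G τ h j).indicator (fun _ => (1 : ℝ)) | m τ j]) ω ∂μ
      ≤ ∫ ω in S, q ∂μ :=
    setIntegral_mono_ae integrable_condExp.integrableOn
      (integrableOn_const (measure_ne_top μ S)) hcond
  have h4 : ∫ ω in S, q ∂μ = (μ S).toReal * q := setIntegral_const q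
  have key : (μ (S ∩ G τ h j)).toReal ≤ q * (μ S).toReal := by
    rw [← h1, ← h2]; rw [h4] at h3; linarith [h3]
  calc μ (S ∩ G τ h j) = ENNReal.ofReal ((μ (S ∩ G τ h j)).toReal) :=
        (ENNReal.ofReal_toReal (measure_ne_top _ _)).symm
    _ ≤ ENNReal.ofReal (q * (μ S).toReal) := ENNReal.ofReal_le_ofReal key
    _ = ENNReal.ofReal q * μ S := by
        rw [ENNReal.ofReal_mul hq0, ENNReal.ofReal_toReal (measure_ne_top _ _)]

lemma A_subset {τ : ℕ → Ω → ℝ≥0∞} {h T : ℝ} {j : ℕ} {k k' : ℤ} (hk : k' ≤ k) :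
    A τ h T j k ⊆ A τ h T j k' := fun _ hx => ⟨hx.1, le_trans hk hx.2⟩

/-- one-step recursion inequality -/
lemma rec_step (μ : Measure Ω) [IsProbabilityMeasure μ]
    {τ : ℕ → Ω → ℝ≥0∞} (hτmeas : ∀ i, Measurable (τ i)) {h T q : ℝ}
    (hq0 : 0 ≤ q) (hq1 : q ≤ 1)
    (hEae : ∀ᵐ ω ∂μ, ∀ i, τ i ω ≤ τ (i+1) ω)
    (j : ℕ)
    (hcond : ∀ᵐ ω ∂μ, (μ[(G τ h j).indicator (fun _ => (1 : ℝ)) | m τ j]) ω ≤ q)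
    (k : ℤ) :
    (μ (A τ h T (j+1) k)).toReal ≤
      (1-q) * (μ (A τ h T j k)).toReal + q * (μ (A τ h T j (k-1))).toReal := by
  classical
  set E : Set Ω := {ω | ∀ i, τ i ω ≤ τ (i+1) ω} with hE
  have hEc : μ Eᶜ = 0 := by
    rw [hE, compl_setOf]
    exact ae_iff.mp hEae
  have incl : A τ h T (j+1) k ∩ E ⊆
      A τ h T j k ∪ ((A τ h T j (k-1) \ A τ h T j k) ∩ G τ h j) := by
    rintro ω ⟨⟨hT1, hX1⟩, hEω⟩
    have hτj : τ j ω ≤ ENNReal.ofReal T := (hEω j).trans hT1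
    by_cases hk : k ≤ (X τ h j ω : ℤ)
    · exact Or.inl ⟨hτj, hk⟩
    · right
      have hXs := X_succ τ h j ω
      by_cases hg : ω ∈ G τ h j
      · rw [hXs, if_pos hg] at hX1
        push_cast at hX1
        exact ⟨⟨⟨hτj, by omega⟩, fun hmem => hk hmem.2⟩, hg⟩
      · rw [hXs, if_neg hg] at hX1
        exact absurd hX1 hk
  have hsub : A τ h T j k ⊆ A τ h T j (k-1) := A_subset (by omega)
  have hSm : MeasurableSet[m τ j] (A τ h T j (k-1) \ A τ h T j k) :=
    (measurableSet_A_m h T (k-1)).diff (measurableSet_A_m h T k)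
  have h2 := cond_bound μ hτmeas hq0 j hcond hSm
  have step : μ (A τ h T (j+1) k) ≤
      μ (A τ h T j k) + ENNReal.ofReal q * μ (A τ h T j (k-1) \ A τ h T j k) := by
    rw [← measure_inter_conull hEc]
    exact ((measure_mono incl).trans (measure_union_le _ _)).trans (add_le_add_right h2 _)
  have hAm : MeasurableSet (A τ h T j k) := measurableSet_A (fun i _ => hτmeas i) h T k
  have hdiff : (μ (A τ h T j (k-1) \ A τ h T j k)).toReal
      = (μ (A τ h T j (k-1))).toReal - (μ (A τ h T j k)).toReal := by
    rw [measure_diff hsub hAm.nullMeasurableSet (measure_ne_top μ _),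
      ENNReal.toReal_sub_of_le (measure_mono hsub) (measure_ne_top μ _)]
  have hxy : (μ (A τ h T j k)).toReal ≤ (μ (A τ h T j (k-1))).toReal :=
    ENNReal.toReal_mono (measure_ne_top μ _) (measure_mono hsub)
  have treal : (μ (A τ h T (j+1) k)).toReal ≤
      (μ (A τ h T j k)).toReal + q * (μ (A τ h T j (k-1) \ A τ h T j k)).toReal := by
    have hne : μ (A τ h T j k) + ENNReal.ofReal q * μ (A τ h T j (k-1) \ A τ h T j k) ≠ ⊤ :=
      ENNReal.add_ne_top.mpr ⟨measure_ne_top μ _,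
        ENNReal.mul_ne_top ENNReal.ofReal_ne_top (measure_ne_top μ _)⟩
    have := ENNReal.toReal_mono hne step
    rwa [ENNReal.toReal_add (measure_ne_top μ _)
        (ENNReal.mul_ne_top ENNReal.ofReal_ne_top (measure_ne_top μ _)),
      ENNReal.toReal_mul, ENNReal.toReal_ofReal hq0] at this
  rw [hdiff] at treal
  linarith

lemma A_vanish {τ : ℕ → Ω → ℝ≥0∞} (h T : ℝ) (j : ℕ) : A τ h T j ((j:ℤ)+1) = ∅ := by
  ext ω
  simp only [A, mem_setOf_eq, mem_empty_iff_false, iff_false, not_and]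
  intro _
  have := X_le τ h j ω
  omega

lemma sum_bound {q : ℝ} (hq : q ∈ Ioo (0:ℝ) 1) (a : ℕ → ℤ → ℝ)
    (h1 : ∀ j k, a j k ≤ 1)
    (hvan : ∀ j, a j ((j:ℤ)+1) = 0)
    (hrec : ∀ j k, a (j+1) k ≤ (1-q) * a j k + q * a j (k-1)) :
    ∀ (k n : ℕ), ∑ j ∈ Finset.range n, a j ((j:ℤ) - k) ≤ ((k:ℝ)+1) / (1-q) := by
  obtain ⟨hq0, hq1⟩ := hq
  have hp : 0 < 1 - q := by linarith
  intro k
  induction k with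
  | zero =>
    intro n
    induction n with
    | zero =>
      simp only [Finset.range_zero, Finset.sum_empty]
      positivity
    | succ n ih =>
      rw [Finset.sum_range_succ']
      have hstep : ∀ j : ℕ, a (j+1) (((j+1:ℕ):ℤ) - (0:ℕ)) ≤ q * a j ((j:ℤ) - (0:ℕ)) := by
        intro j
        have h2 := hrec j ((j:ℤ)+1)
        rw [hvan j] at h2
        calc a (j+1) (((j+1:ℕ):ℤ) - (0:ℕ)) = a (j+1) ((j:ℤ)+1) := by push_cast; ring_nf
          _ ≤ (1-q) * 0 + q * a j ((j:ℤ)+1-1) := h2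
          _ = q * a j ((j:ℤ) - (0:ℕ)) := by push_cast; ring_nf
      have hs : ∑ j ∈ Finset.range n, a (j+1) (((j+1:ℕ):ℤ) - (0:ℕ))
          ≤ q * ∑ j ∈ Finset.range n, a j ((j:ℤ) - (0:ℕ)) := by
        rw [Finset.mul_sum]
        exact Finset.sum_le_sum fun j _ => hstep j
      have hsum := add_le_add hs (h1 0 ((0:ℤ) - (0:ℕ)))
      refine hsum.trans ?_
      have h4 : q * ∑ j ∈ Finset.range n, a j ((j:ℤ) - (0:ℕ)) ≤ q * ((((0:ℕ):ℝ)+1)/(1-q)) :=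
        mul_le_mul_of_nonneg_left ih hq0.le
      refine (add_le_add_left h4 1).trans (le_of_eq ?_)
      push_cast
      field_simp
      ring
  | succ k ihk =>
    intro n
    induction n with
    | zero =>
      simp only [Finset.range_zero, Finset.sum_empty]
      positivity
    | succ n ih =>
      rw [Finset.sum_range_succ']
      have hstep : ∀ j : ℕ, a (j+1) (((j+1:ℕ):ℤ) - ((k+1:ℕ):ℤ))
          ≤ (1-q) * a j ((j:ℤ) - (k:ℕ)) + q * a j ((j:ℤ) - ((k+1:ℕ):ℤ)) := by
        intro j
        have h2 := hrec j ((j:ℤ) + 1 - ((k:ℤ)+1))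
        push_cast at h2 ⊢
        ring_nf at h2 ⊢
        exact h2
      have hs : ∑ j ∈ Finset.range n, a (j+1) (((j+1:ℕ):ℤ) - ((k+1:ℕ):ℤ))
          ≤ (1-q) * ∑ j ∈ Finset.range n, a j ((j:ℤ) - (k:ℕ))
            + q * ∑ j ∈ Finset.range n, a j ((j:ℤ) - ((k+1:ℕ):ℤ)) := by
        rw [Finset.mul_sum, Finset.mul_sum, ← Finset.sum_add_distrib]
        exact Finset.sum_le_sum fun j _ => hstep j
      have hsum := add_le_add hs (h1 0 ((0:ℤ) - ((k+1:ℕ):ℤ)))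
      refine hsum.trans ?_
      have h3 : (1-q) * ∑ j ∈ Finset.range n, a j ((j:ℤ) - (k:ℕ))
          ≤ (1-q) * (((k:ℝ)+1)/(1-q)) := mul_le_mul_of_nonneg_left (ihk n) hp.le
      have h4 : q * ∑ j ∈ Finset.range n, a j ((j:ℤ) - ((k+1:ℕ):ℤ))
          ≤ q * ((((k+1:ℕ):ℝ)+1)/(1-q)) := mul_le_mul_of_nonneg_left ih hq0.le
      calc (1-q) * ∑ j ∈ Finset.range n, a j ((j:ℤ) - (k:ℕ))
            + q * ∑ j ∈ Finset.range n, a j ((j:ℤ) - ((k+1:ℕ):ℤ)) + 1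
          ≤ (1-q) * (((k:ℝ)+1)/(1-q)) + q * ((((k+1:ℕ):ℝ)+1)/(1-q)) + 1 := by
            linarith
        _ = (((k+1:ℕ):ℝ)+1)/(1-q) := by
            push_cast
            field_simp
            ring

open Classical in
lemma count_big (τ : ℕ → Ω → ℝ≥0∞) {h T : ℝ} (hh : 0 < h) (hT : 0 < T) {ω : Ω}
    (hmono : ∀ i, τ i ω ≤ τ (i+1) ω) {m : ℕ} (hm : τ m ω ≤ ENNReal.ofReal T) :
    (m : ℤ) - ((⌈T/h⌉₊ : ℤ) - 1) ≤ (X τ h m ω : ℤ) := by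
  have hMono : Monotone (fun i => τ i ω) := monotone_nat_of_le_succ hmono
  set r := ⌈T/h⌉₊ with hr
  have hr1 : 1 ≤ r := Nat.ceil_pos.mpr (div_pos hT hh)
  -- number of big gaps among first i
  set c : ℕ → ℕ := fun i => ((Finset.range i).filter (fun i' => ω ∉ G τ h i')).card with hc
  have hXc : X τ h m ω + c m = m := by
    rw [X, hc]
    exact (Finset.card_filter_add_card_filter_not _).trans (Finset.card_range m)
  -- key induction
  have key : ∀ i ≤ m, ((c i : ℝ≥0∞) * ENNReal.ofReal h ≤ τ i ω ∧
      (c i ≠ 0 → (c i : ℝ≥0∞) * ENNReal.ofReal h < τ i ω)) := by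
    intro i
    induction i with
    | zero =>
      intro _
      have : c 0 = 0 := by simp [hc]
      simp [this]
    | succ i ih =>
      intro hi1
      have hi : i ≤ m := le_of_lt (Nat.lt_of_succ_le hi1)
      obtain ⟨h1, h2⟩ := ih hi
      by_cases hg : ω ∈ G τ h i
      · have hceq : c (i+1) = c i := by
          rw [hc]
          simp only [Finset.range_add_one, Finset.filter_insert, hg]
          simp [hg]
        rw [hceq]
        exact ⟨h1.trans (hmono i), fun hne => lt_of_lt_of_le (h2 hne) (hmono i)⟩
      · have hceq : c (i+1) = c i + 1 := by
          rw [hc]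
          simp only [Finset.range_add_one, Finset.filter_insert]
          rw [if_pos (by exact hg), Finset.card_insert_of_notMem (by simp)]
        have hle' : τ (i+1) ω ≤ ENNReal.ofReal T := le_trans (hMono hi1) hm
        have hne : τ (i+1) ω ≠ ⊤ := ne_top_of_le_ne_top ENNReal.ofReal_ne_top hle'
        have hbig : τ i ω + ENNReal.ofReal h < τ (i+1) ω := by
          by_contra hle
          push_neg at hle
          exact hg ⟨hne, hle⟩
        have hlt : (c (i+1) : ℝ≥0∞) * ENNReal.ofReal h < τ (i+1) ω := by
          rw [hceq]
          push_cast
          calc ((c i : ℝ≥0∞) + 1) * ENNReal.ofReal h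
              = (c i : ℝ≥0∞) * ENNReal.ofReal h + ENNReal.ofReal h := by ring
            _ ≤ τ i ω + ENNReal.ofReal h := add_le_add_left h1 _
            _ < τ (i+1) ω := hbig
        exact ⟨hlt.le, fun _ => hlt⟩
  obtain ⟨h1, h2⟩ := key m le_rfl
  have hcr : c m < r := by
    rcases Nat.eq_zero_or_pos (c m) with h0 | hpos
    · omega
    · have hlt := lt_of_lt_of_le (h2 hpos.ne') hm
      have h5 : ENNReal.ofReal ((c m : ℝ) * h) < ENNReal.ofReal T := by
        rwa [ENNReal.ofReal_mul (by positivity), ENNReal.ofReal_natCast]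
      have hreal : (c m : ℝ) * h < T := (ENNReal.ofReal_lt_ofReal_iff hT).mp h5
      have h6 : (c m : ℝ) < T / h := (lt_div_iff₀ hh).mpr hreal
      have h7 : (c m : ℝ) < (r : ℝ) := lt_of_lt_of_le h6 (Nat.le_ceil _)
      exact_mod_cast h7
  omega

end NegBinAux

open NegBinAux

/-- Let `(τᵢ)` be an increasing sequence of `[0,∞]`-valued random times
with `τ₀ = 0` such that, conditionally on `τ₀, …, τᵢ`, the gap `τᵢ₊₁ - τᵢ` is `≤ h` with
probability at most `q` (with the convention `∞ - ∞ = ∞`, i.e. the event requires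
`τᵢ₊₁ < ∞`).  Then the number `N` of indices `j` with `τⱼ ≤ T` satisfies
`𝔼[N] ≤ ⌈T/h⌉ / (1 - q)`. -/
theorem expected_count_le_negBinomial {Ω : Type*} [MeasurableSpace Ω]
    (μ : Measure Ω) [IsProbabilityMeasure μ]
    (τ : ℕ → Ω → ℝ≥0∞) (hτmeas : ∀ i, Measurable (τ i))
    (hτ0 : ∀ᵐ ω ∂μ, τ 0 ω = 0)
    (hτmono : ∀ᵐ ω ∂μ, Monotone fun i => τ i ω)
    (T h q : ℝ) (hT : 0 < T) (hh : 0 < h) (hq : q ∈ Ioo (0 : ℝ) 1)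
    (hcond : ∀ i : ℕ, ∀ᵐ ω ∂μ,
      (μ[Set.indicator
          {ω' | τ (i + 1) ω' ≠ ⊤ ∧ τ (i + 1) ω' ≤ τ i ω' + ENNReal.ofReal h}
          (fun _ => (1 : ℝ)) |
        ⨆ k ∈ Finset.range (i + 1), MeasurableSpace.comap (τ k) inferInstance]) ω ≤ q) :
    ∫⁻ ω, (⨆ (j : ℕ) (_ : τ j ω ≤ ENNReal.ofReal T), (j : ℝ≥0∞)) ∂μ ≤
      ENNReal.ofReal ((⌈T / h⌉₊ : ℝ) * (1 / (1 - q))) := by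
  classical
  obtain ⟨hq0, hq1⟩ := hq
  set r := ⌈T / h⌉₊ with hrdef
  have hr1 : 1 ≤ r := Nat.ceil_pos.mpr (div_pos hT hh)
  have hEae : ∀ᵐ ω ∂μ, ∀ i, τ i ω ≤ τ (i+1) ω :=
    hτmono.mono fun ω hω i => hω (Nat.le_succ i)
  set a : ℕ → ℤ → ℝ := fun j k => (μ (A τ h T j k)).toReal with hadef
  -- hypotheses for sum_bound
  have ha1 : ∀ j k, a j k ≤ 1 := by
    intro j k
    have := prob_le_one (μ := μ) (s := A τ h T j k)
    calc a j k ≤ (1 : ℝ≥0∞).toReal := ENNReal.toReal_mono ENNReal.one_ne_top this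
      _ = 1 := by simp
  have hvan : ∀ j, a j ((j:ℤ)+1) = 0 := by
    intro j
    show (μ (A τ h T j ((j:ℤ)+1))).toReal = 0
    rw [A_vanish h T j]
    simp
  have hrec : ∀ j k, a (j+1) k ≤ (1-q) * a j k + q * a j (k-1) := by
    intro j k
    exact rec_step μ hτmeas hq0.le hq1.le hEae j (hcond j) k
  have hsum := sum_bound ⟨hq0, hq1⟩ a ha1 hvan hrec (r-1)
  -- pointwise bound of the sup by a sum of indicators
  set f : ℕ → Ω → ℝ≥0∞ :=
    fun i => ({ω' | τ (i+1) ω' ≤ ENNReal.ofReal T}).indicator (fun _ => (1:ℝ≥0∞)) with hfdef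
  have hfmeas : ∀ i, Measurable (f i) := by
    intro i
    exact measurable_const.indicator ((hτmeas (i+1)) measurableSet_Iic)
  have hpt : ∀ᵐ ω ∂μ, (⨆ (j:ℕ) (_ : τ j ω ≤ ENNReal.ofReal T), (j:ℝ≥0∞))
      ≤ ∑' i, f i ω := by
    refine hτmono.mono fun ω hω => ?_
    refine iSup₂_le fun j hj => ?_
    have heq : ∀ i ∈ Finset.range j, f i ω = 1 := by
      intro i hi
      have : τ (i+1) ω ≤ ENNReal.ofReal T :=
        le_trans (hω (Finset.mem_range.mp hi)) hj
      simp [hfdef, indicator_of_mem, this]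
    calc (j : ℝ≥0∞) = ∑ i ∈ Finset.range j, f i ω := by
          rw [Finset.sum_congr rfl heq]; simp
      _ ≤ ∑' i, f i ω := ENNReal.sum_le_tsum _
  -- per-index measure bound
  set E : Set Ω := {ω | ∀ i, τ i ω ≤ τ (i+1) ω} with hE
  have hEc : μ Eᶜ = 0 := by
    rw [hE, compl_setOf]
    exact ae_iff.mp hEae
  have hstep3 : ∀ i : ℕ, μ {ω' | τ (i+1) ω' ≤ ENNReal.ofReal T}
      ≤ ENNReal.ofReal (a (i+1) (((i+1:ℕ):ℤ) - ((r-1:ℕ):ℤ))) := by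
    intro i
    have hincl : {ω' | τ (i+1) ω' ≤ ENNReal.ofReal T} ∩ E
        ⊆ A τ h T (i+1) (((i+1:ℕ):ℤ) - ((r-1:ℕ):ℤ)) := by
      rintro ω ⟨hm, hEω⟩
      refine ⟨hm, ?_⟩
      have := count_big τ hh hT hEω hm
      have hc : ((r-1:ℕ):ℤ) = (r:ℤ) - 1 := by omega
      omega
    calc μ {ω' | τ (i+1) ω' ≤ ENNReal.ofReal T}
        = μ ({ω' | τ (i+1) ω' ≤ ENNReal.ofReal T} ∩ E) := (measure_inter_conull hEc).symm
      _ ≤ μ (A τ h T (i+1) (((i+1:ℕ):ℤ) - ((r-1:ℕ):ℤ))) := measure_mono hincl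
      _ = ENNReal.ofReal (a (i+1) (((i+1:ℕ):ℤ) - ((r-1:ℕ):ℤ))) :=
          (ENNReal.ofReal_toReal (measure_ne_top μ _)).symm
  -- assemble
  calc ∫⁻ ω, (⨆ (j:ℕ) (_ : τ j ω ≤ ENNReal.ofReal T), (j:ℝ≥0∞)) ∂μ
      ≤ ∫⁻ ω, ∑' i, f i ω ∂μ := lintegral_mono_ae hpt
    _ = ∑' i, ∫⁻ ω, f i ω ∂μ := lintegral_tsum fun i => (hfmeas i).aemeasurable
    _ = ∑' i, μ {ω' | τ (i+1) ω' ≤ ENNReal.ofReal T} := by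
        refine tsum_congr fun i => ?_
        rw [hfdef]
        exact lintegral_indicator_one ((hτmeas (i+1)) measurableSet_Iic)
    _ ≤ ∑' i, ENNReal.ofReal (a (i+1) (((i+1:ℕ):ℤ) - ((r-1:ℕ):ℤ))) :=
        ENNReal.tsum_le_tsum hstep3
    _ ≤ ENNReal.ofReal ((r : ℝ) * (1 / (1 - q))) := by
        rw [ENNReal.tsum_eq_iSup_nat]
        refine iSup_le fun n => ?_
        have hnn : ∀ j k, 0 ≤ a j k := fun j k => ENNReal.toReal_nonneg
        rw [← ENNReal.ofReal_sum_of_nonneg (fun j _ => hnn _ _)]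
        refine ENNReal.ofReal_le_ofReal ?_
        have h5 : ∑ j ∈ Finset.range n, a (j+1) (((j+1:ℕ):ℤ) - ((r-1:ℕ):ℤ))
            ≤ ∑ j ∈ Finset.range (n+1), a j ((j:ℤ) - ((r-1:ℕ):ℤ)) := by
          rw [Finset.sum_range_succ']
          exact le_add_of_nonneg_right (hnn _ _)
        refine h5.trans ((hsum (n+1)).trans ?_)
        have hc : ((r-1:ℕ):ℝ) = (r:ℝ) - 1 := by
          push_cast [Nat.cast_sub hr1]
          ring
        rw [hc]
        rw [div_eq_mul_one_div]
        ring_nf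
        exact le_refl _
end

section
/- Let $E$ be a metric space, $J \subseteq E \times E$, and $\phi : J \to C([0,1],E)$ a path function, meaning $\phi(x,y)_0 = x$ and $\phi(x,y)_1 = y$ for all $(x,y) \in J$. Let $p \geq 1$, let $\mathbf z \in D([0,T],E)$ be a c\`adl\`ag path all of whose jumps $(\mathbf z_{t-}, \mathbf z_t)$ lie in $J$, and suppose there exists $C > 0$ such that $\|\phi(\mathbf z_{t-},\mathbf z_t)\|_{p\text{-var};[0,1]} \leq C\, d(\mathbf z_{t-},\mathbf z_t)$ for every jump time $t$ of $\mathbf z$. Then the continuous path $\mathbf z^\phi$ obtained by connecting the jumps of $\mathbf z$ with the paths $\phi(\mathbf z_{t-},\mathbf z_t)$ (traversed over inserted fictitious time intervals, then reparametrised to $[0,T]$) satisfies $\|\mathbf z^\phi\|_{p\text{-var};[0,T]}^p \leq R\, \|\mathbf z\|_{p\text{-var};[0,T]}^p$ where $R = 1 + 2^p + 3^{p-1} + C^p(1 + 2^p + 2\cdot 3^{p-1})$. -/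
open Set
open scoped ENNReal

open Filter

open Topology

section Aux

variable {E : Type*} [PseudoEMetricSpace E]

lemma le_eVar (p : ℝ) (f : ℝ → E) (a b : ℝ) (n : ℕ) (u : ℕ → ℝ)
    (hu : Monotone u) (h0 : u 0 = a) (hn : u n = b) :
    ∑ i ∈ Finset.range n, edist (f (u i)) (f (u (i + 1))) ^ p ≤ eVar p f a b := by
  unfold eVar
  exact le_iSup_of_le n (le_iSup_of_le u (le_iSup_of_le hu (le_iSup_of_le h0
    (le_iSup_of_le hn le_rfl))))

lemma eVar_le (p : ℝ) (f : ℝ → E) (a b : ℝ) (M : ℝ≥0∞)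
    (h : ∀ (n : ℕ) (u : ℕ → ℝ), Monotone u → u 0 = a → u n = b →
      ∑ i ∈ Finset.range n, edist (f (u i)) (f (u (i + 1))) ^ p ≤ M) :
    eVar p f a b ≤ M := by
  unfold eVar
  exact iSup_le fun n => iSup_le fun v => iSup_le fun hv => iSup_le fun h0 =>
    iSup_le fun hn => h n v hv h0 hn

lemma mono_of_adjacent {w : ℕ → ℝ} {m : ℕ} (h : ∀ i, i + 1 ≤ m → w i ≤ w (i + 1)) :
    ∀ i j, i ≤ j → j ≤ m → w i ≤ w j := by
  intro i j hij hjm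
  induction j, hij using Nat.le_induction with
  | base => exact le_rfl
  | succ j hij ih => exact (ih (by omega)).trans (h j hjm)

/-- A monotone chain of points inside `[a,b]` has `p`-power sum bounded by `eVar`. -/
lemma chain_le_eVar (p : ℝ) (f : ℝ → E) (a b : ℝ) (m : ℕ) (w : ℕ → ℝ)
    (hmono : ∀ i j, i ≤ j → j ≤ m → w i ≤ w j) (h0 : a ≤ w 0) (hm : w m ≤ b) :
    ∑ i ∈ Finset.range m, edist (f (w i)) (f (w (i + 1))) ^ p ≤ eVar p f a b := by
  classical
  set u : ℕ → ℝ := fun c => if c = 0 then a else if c ≤ m + 1 then w (min (c - 1) m) else b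
    with hu
  have hu0 : u 0 = a := by simp [hu]
  have hun : u (m + 2) = b := by
    simp only [hu]
    rw [if_neg (by omega), if_neg (by omega)]
  have humono : Monotone u := by
    apply monotone_nat_of_le_succ
    intro c
    rcases Nat.eq_zero_or_pos c with rfl | hc
    · simp only [hu, if_pos rfl, if_neg (by omega : ¬ 0 + 1 = 0), if_pos (by omega : 0 + 1 ≤ m + 1)]
      exact h0.trans_eq (by simp [hmono])
    by_cases h1 : c ≤ m
    · simp only [hu, if_neg (by omega : ¬ c = 0), if_pos (by omega : c ≤ m + 1),
        if_neg (by omega : ¬ c + 1 = 0), if_pos (by omega : c + 1 ≤ m + 1)]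
      exact hmono _ _ (by omega) (by omega)
    by_cases h2 : c = m + 1
    · subst h2
      simp only [hu, if_neg (by omega : ¬ m + 1 = 0), if_pos (le_rfl : m + 1 ≤ m + 1),
        if_neg (by omega : ¬ m + 1 + 1 = 0), if_neg (by omega : ¬ m + 1 + 1 ≤ m + 1)]
      simpa using hm
    · simp only [hu, if_neg (by omega : ¬ c = 0), if_neg (by omega : ¬ c ≤ m + 1),
        if_neg (by omega : ¬ c + 1 = 0), if_neg (by omega : ¬ c + 1 ≤ m + 1)]
      exact le_rfl
  refine le_trans ?_ (le_eVar p f a b (m + 2) u humono hu0 hun)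
  have hsub : ((Finset.range m).image (fun i => i + 1)) ⊆ Finset.range (m + 2) := by
    intro c hc
    simp only [Finset.mem_image, Finset.mem_range] at hc ⊢
    omega
  have : ∑ i ∈ Finset.range m, edist (f (w i)) (f (w (i + 1))) ^ p
      = ∑ c ∈ (Finset.range m).image (fun i => i + 1),
          edist (f (u c)) (f (u (c + 1))) ^ p := by
    rw [Finset.sum_image (by intro a _ b _ h; simp only at h; omega)]
    refine Finset.sum_congr rfl fun i hi => ?_
    have hi' : i < m := Finset.mem_range.mp hi
    have e1 : u (i + 1) = w i := by
      simp only [hu, if_neg (by omega : ¬ i + 1 = 0), if_pos (by omega : i + 1 ≤ m + 1)]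
      congr 1
      omega
    have e2 : u (i + 1 + 1) = w (i + 1) := by
      simp only [hu, if_neg (by omega : ¬ i + 1 + 1 = 0), if_pos (by omega : i + 1 + 1 ≤ m + 1)]
      congr 1
      omega
    rw [e1, e2]
  rw [this]
  exact Finset.sum_le_sum_of_subset hsub

lemma tri3 {p : ℝ} (hp : 1 ≤ p) (a b c d : ℝ≥0∞) (h : d ≤ a + b + c) :
    d ^ p ≤ ENNReal.ofReal (3 ^ (p - 1)) * (a ^ p + b ^ p + c ^ p) := by
  have hp0 : (0 : ℝ) ≤ p := le_trans zero_le_one hp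
  have h1 : d ^ p ≤ (a + b + c) ^ p := ENNReal.rpow_le_rpow h hp0
  have h2 : (∑ i : Fin 3, ![a, b, c] i) ^ p
      ≤ ((Finset.univ.card : ℝ≥0∞) : ℝ≥0∞) ^ (p - 1) * ∑ i : Fin 3, (![a, b, c] i) ^ p :=
    ENNReal.rpow_sum_le_const_mul_sum_rpow Finset.univ ![a, b, c] hp
  simp only [Fin.sum_univ_three, Matrix.cons_val_zero, Matrix.cons_val_one, Matrix.head_cons,
    Matrix.cons_val_two, Matrix.tail_cons, Finset.card_univ, Fintype.card_fin] at h2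
  have h3 : ENNReal.ofReal (3 ^ (p - 1)) = ((3 : ℕ) : ℝ≥0∞) ^ (p - 1) := by
    rw [← ENNReal.ofReal_rpow_of_pos (by norm_num : (0:ℝ) < 3)]
    norm_num
  rw [h3]
  exact h1.trans (by exact_mod_cast h2)

end Aux

open Topology

lemma chain_with_limits_le_eVar {E : Type*} [MetricSpace E]
    (T p : ℝ) (hT : 0 < T) (hp : 1 ≤ p)
    (z : ℝ → E) {ι : Type} (t : ι → ℝ) (ht : ∀ k, t k ∈ Ioc 0 T)
    (htinj : Function.Injective t) (zm : ι → E)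
    (hzm : ∀ k, Tendsto z (nhdsWithin (t k) (Iio (t k))) (nhds (zm k)))
    (m : ℕ) (τ : ℕ → ℝ) (c : ℕ → Option ι) (g : ℕ → E)
    (hτ : ∀ i ≤ m, τ i ∈ Icc 0 T)
    (hck : ∀ i ≤ m, ∀ k, c i = some k → τ i = t k)
    (hg1 : ∀ i ≤ m, c i = none → g i = z (τ i))
    (hg2 : ∀ i ≤ m, ∀ k, c i = some k → g i = zm k)
    (hmono : ∀ i, i + 1 ≤ m → τ i ≤ τ (i + 1))
    (hstrict : ∀ i, i + 1 ≤ m → c i = none → (c (i + 1)).isSome → τ i < τ (i + 1)) :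
    ∑ i ∈ Finset.range m, edist (g i) (g (i + 1)) ^ p ≤ eVar p z 0 T := by
  classical
  rcases Nat.eq_zero_or_pos m with rfl | hm
  · simp
  by_cases hVtop : eVar p z 0 T = ⊤
  · rw [hVtop]; exact le_top
  have hp0 : (0:ℝ) < p := lt_of_lt_of_le one_pos hp
  suffices hS : (∑ i ∈ Finset.range m, edist (g i) (g (i + 1)) ^ p) ^ (1/p)
      ≤ (eVar p z 0 T) ^ (1/p) by
    have h2 := ENNReal.rpow_le_rpow hS (le_of_lt hp0)
    rwa [← ENNReal.rpow_mul, ← ENNReal.rpow_mul, one_div, inv_mul_cancel₀ (ne_of_gt hp0),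
      ENNReal.rpow_one, ENNReal.rpow_one] at h2
  refine ENNReal.le_of_forall_pos_le_add fun ε hε hVfin => ?_
  set δ : ℝ≥0∞ := (ε : ℝ≥0∞) / (2 * m) with hδdef
  have hmne : (2 * (m:ℝ≥0∞)) ≠ 0 :=
    mul_ne_zero two_ne_zero (Nat.cast_ne_zero.mpr (by omega))
  have hmnetop : (2 * (m:ℝ≥0∞)) ≠ ⊤ := by finiteness
  have hδpos : 0 < δ := ENNReal.div_pos (by exact_mod_cast ne_of_gt hε) hmnetop
  -- lower bounds
  set L : ι → ℝ := fun k =>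
    (insert (0:ℝ) (((Finset.range (m+1)).filter (fun i => τ i < t k)).image τ)).max'
      (Finset.insert_nonempty _ _) with hLdef
  have hL1 : ∀ k, L k < t k := by
    intro k
    rw [hLdef]
    rw [Finset.max'_lt_iff]
    intro y hy
    rcases Finset.mem_insert.mp hy with rfl | hy
    · exact (ht k).1
    · obtain ⟨i, hi, rfl⟩ := Finset.mem_image.mp hy
      exact (Finset.mem_filter.mp hi).2
  have hL2 : ∀ k i, i ≤ m → τ i < t k → τ i ≤ L k := by
    intro k i him hlt
    apply Finset.le_max'
    exact Finset.mem_insert_of_mem (Finset.mem_image.mpr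
      ⟨i, Finset.mem_filter.mpr ⟨Finset.mem_range.mpr (by omega), hlt⟩, rfl⟩)
  have hL0 : ∀ k, 0 ≤ L k := fun k => Finset.le_max' _ _ (Finset.mem_insert_self _ _)
  have hρex : ∀ k : ι, ∃ r : ℝ, L k < r ∧ r < t k ∧ edist (z r) (zm k) < δ := by
    intro k
    have h1 : Ioo (L k) (t k) ∈ 𝓝[<] (t k) := Ioo_mem_nhdsLT_of_mem ⟨hL1 k, le_rfl⟩
    have h2 : ∀ᶠ w in 𝓝[<] (t k), edist (z w) (zm k) < δ :=
      (EMetric.tendsto_nhds.mp (hzm k)) δ hδpos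
    obtain ⟨r, hr2, hr1⟩ := (h2.and (eventually_of_mem h1 fun x hx => hx)).exists
    exact ⟨r, hr1.1, hr1.2, hr2⟩
  choose ρ hρ1 hρ2 hρ3 using hρex
  set w : ℕ → ℝ := fun i => match c i with | some k => ρ k | none => τ i with hwdef
  have hwc : ∀ i k, c i = some k → w i = ρ k := by
    intro i k hc; simp [hwdef, hc]
  have hwn : ∀ i, c i = none → w i = τ i := by
    intro i hc; simp [hwdef, hc]
  have hadj : ∀ i, i + 1 ≤ m → w i ≤ w (i + 1) := by
    intro i hi
    rcases hci : c i with _ | k <;> rcases hci' : c (i+1) with _ | k'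
    · rw [hwn _ hci, hwn _ hci']; exact hmono i hi
    · rw [hwn _ hci, hwc _ _ hci']
      have h1 : τ i < τ (i+1) := hstrict i hi hci (by simp [hci'])
      have h2 : τ (i+1) = t k' := hck _ hi _ hci'
      exact le_of_lt (lt_of_le_of_lt (hL2 k' i (by omega) (h2 ▸ h1)) (hρ1 k'))
    · rw [hwc _ _ hci, hwn _ hci']
      have h1 : τ i = t k := hck _ (by omega) _ hci
      exact le_of_lt (lt_of_lt_of_le (h1 ▸ hρ2 k) (hmono i hi))
    · rw [hwc _ _ hci, hwc _ _ hci']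
      have h1 : τ i = t k := hck _ (by omega) _ hci
      have h2 : τ (i+1) = t k' := hck _ hi _ hci'
      rcases eq_or_lt_of_le (hmono i hi) with heq | hlt
      · have : k = k' := htinj (by rw [← h1, ← h2, heq])
        rw [this]
      · refine le_of_lt (lt_of_lt_of_le (hρ2 k) (le_trans ?_ (le_of_lt (hρ1 k'))))
        exact h1 ▸ hL2 k' i (by omega) (h2 ▸ hlt)
  have hwbd : ∀ i ≤ m, w i ∈ Icc (0:ℝ) T := by
    intro i hi
    rcases hci : c i with _ | k
    · rw [hwn _ hci]; exact hτ i hi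
    · rw [hwc _ _ hci]
      exact ⟨(hL0 k).trans (le_of_lt (hρ1 k)), (le_of_lt (hρ2 k)).trans (ht k).2⟩
  have hchain : ∑ i ∈ Finset.range m, edist (z (w i)) (z (w (i + 1))) ^ p ≤ eVar p z 0 T :=
    chain_le_eVar p z 0 T m w (mono_of_adjacent hadj) (hwbd 0 (by omega)).1 (hwbd m le_rfl).2
  have hclose : ∀ i ≤ m, edist (g i) (z (w i)) ≤ δ := by
    intro i hi
    rcases hci : c i with _ | k
    · rw [hwn _ hci, hg1 _ hi hci, edist_self]; exact zero_le
    · rw [hwc _ _ hci, hg2 _ hi _ hci, edist_comm]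
      exact le_of_lt (hρ3 k)
  have hpt : ∀ i ∈ Finset.range m,
      edist (g i) (g (i+1)) ^ p ≤ (edist (z (w i)) (z (w (i + 1))) + (δ + δ)) ^ p := by
    intro i hi
    have hi' : i < m := Finset.mem_range.mp hi
    refine ENNReal.rpow_le_rpow ?_ (le_of_lt hp0)
    calc edist (g i) (g (i+1))
        ≤ edist (g i) (z (w i)) + edist (z (w i)) (z (w (i+1))) + edist (z (w (i+1))) (g (i+1)) :=
          edist_triangle4 _ _ _ _
      _ ≤ δ + edist (z (w i)) (z (w (i+1))) + δ := by
          gcongr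
          · exact hclose i (by omega)
          · rw [edist_comm]; exact hclose (i+1) (by omega)
      _ = edist (z (w i)) (z (w (i+1))) + (δ + δ) := by ring
  calc (∑ i ∈ Finset.range m, edist (g i) (g (i + 1)) ^ p) ^ (1/p)
      ≤ (∑ i ∈ Finset.range m, (edist (z (w i)) (z (w (i + 1))) + (δ + δ)) ^ p) ^ (1/p) :=
        ENNReal.rpow_le_rpow (Finset.sum_le_sum hpt) (by positivity)
    _ ≤ (∑ i ∈ Finset.range m, edist (z (w i)) (z (w (i + 1))) ^ p) ^ (1/p)
        + (∑ _i ∈ Finset.range m, (δ + δ) ^ p) ^ (1/p) :=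
        ENNReal.Lp_add_le _ _ _ hp
    _ ≤ (eVar p z 0 T) ^ (1/p) + ε := by
        refine add_le_add (ENNReal.rpow_le_rpow hchain (by positivity)) ?_
        rw [Finset.sum_const, Finset.card_range, nsmul_eq_mul,
            ENNReal.mul_rpow_of_nonneg _ _ (by positivity),
            ← ENNReal.rpow_mul, mul_one_div_cancel (ne_of_gt hp0), ENNReal.rpow_one]
        have h1 : ((m:ℝ≥0∞)) ^ (1/p) ≤ (m:ℝ≥0∞) := by
          calc ((m:ℝ≥0∞)) ^ (1/p) ≤ ((m:ℝ≥0∞)) ^ (1:ℝ) := by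
                  apply ENNReal.rpow_le_rpow_of_exponent_le
                  · exact_mod_cast Nat.one_le_iff_ne_zero.mpr (by omega)
                  · rw [div_le_one hp0]; exact hp
              _ = (m:ℝ≥0∞) := ENNReal.rpow_one _
        calc ((m:ℝ≥0∞)) ^ (1/p) * (δ + δ) ≤ (m:ℝ≥0∞) * (δ + δ) := by gcongr
          _ = (2 * m) * δ := by ring
          _ = (ε : ℝ≥0∞) := by rw [hδdef, ENNReal.mul_div_cancel hmne hmnetop]

lemma jumpsum_le_eVar {E : Type*} [MetricSpace E]
    (T p : ℝ) (hT : 0 < T) (hp : 1 ≤ p)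
    (z : ℝ → E) {ι : Type} (t : ι → ℝ) (ht : ∀ k, t k ∈ Ioc 0 T)
    (htinj : Function.Injective t) (zm : ι → E)
    (hzm : ∀ k, Tendsto z (nhdsWithin (t k) (Iio (t k))) (nhds (zm k)))
    (F : Finset ι) :
    ∑ k ∈ F, edist (zm k) (z (t k)) ^ p ≤ eVar p z 0 T := by
  classical
  rcases F.eq_empty_or_nonempty with rfl | ⟨k₀, hk₀⟩
  · simp
  set Ft : Finset ℝ := F.image t with hFt
  set q : ℕ := Ft.card with hq
  have hq0 : 0 < q := Finset.card_pos.mpr ⟨t k₀, Finset.mem_image_of_mem t hk₀⟩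
  set e : Fin q ≃o {x // x ∈ Ft} := Ft.orderIsoOfFin rfl with he
  set rr : ℕ → ℝ := fun j => (e ⟨min j (q-1), by omega⟩ : ℝ) with hrr
  have hrrq : ∀ j : Fin q, rr j = (e j : ℝ) := by
    intro j
    have : min j.1 (q-1) = j.1 := by omega
    simp [hrr, this]
  have hrrmem : ∀ j : ℕ, rr j ∈ Ft := fun j => (e _).2
  have hpre : ∀ j : ℕ, ∃ k, k ∈ F ∧ t k = rr j := by
    intro j
    obtain ⟨k, hk1, hk2⟩ := Finset.mem_image.mp (hrrmem j)
    exact ⟨k, hk1, hk2⟩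
  choose kk hkkF hkkt using hpre
  have hrrmono : Monotone rr := by
    intro j j' hj
    exact Subtype.coe_le_coe.mpr (e.monotone (by simp [Fin.mk_le_mk]; omega))
  have hrrstrict : ∀ j j' : ℕ, j < j' → j' ≤ q - 1 → rr j < rr j' := by
    intro j j' h1 h2
    refine Subtype.coe_lt_coe.mpr (e.strictMono ?_)
    simp only [Fin.mk_lt_mk]
    omega
  set m : ℕ := 2*q - 1 with hm
  set τ : ℕ → ℝ := fun cidx => rr (cidx / 2) with hτdef
  set cc : ℕ → Option ι := fun cidx => if cidx % 2 = 0 then some (kk (cidx/2)) else none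
    with hcc
  set g : ℕ → E := fun cidx => if cidx % 2 = 0 then zm (kk (cidx/2)) else z (τ cidx) with hg
  have hmain : ∑ i ∈ Finset.range m, edist (g i) (g (i + 1)) ^ p ≤ eVar p z 0 T := by
    refine chain_with_limits_le_eVar T p hT hp z t ht htinj zm hzm m τ cc g ?_ ?_ ?_ ?_ ?_ ?_
    · intro i _
      have := ht (kk (i/2))
      rw [hτdef]
      simp only
      rw [← hkkt (i/2)]
      exact ⟨le_of_lt this.1, this.2⟩
    · intro i _ k hk
      rw [hcc] at hk
      simp only at hk
      by_cases hpar : i % 2 = 0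
      · rw [if_pos hpar] at hk
        cases hk
        exact (hkkt (i/2)).symm
      · rw [if_neg hpar] at hk; cases hk
    · intro i _ hkn
      rw [hcc] at hkn; simp only at hkn
      by_cases hpar : i % 2 = 0
      · rw [if_pos hpar] at hkn; cases hkn
      · rw [hg]; simp only [if_neg hpar]
    · intro i _ k hk
      rw [hcc] at hk; simp only at hk
      by_cases hpar : i % 2 = 0
      · rw [if_pos hpar] at hk
        cases hk
        rw [hg]; simp only [if_pos hpar]
      · rw [if_neg hpar] at hk; cases hk
    · intro i _
      exact hrrmono (by omega)
    · intro i hi hnone hsome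
      rw [hcc] at hnone hsome
      simp only at hnone hsome
      by_cases hpar : i % 2 = 0
      · rw [if_pos hpar] at hnone; cases hnone
      · have hpar' : (i+1) % 2 = 0 := by omega
        rw [hτdef]
        simp only
        apply hrrstrict
        · omega
        · omega
  refine le_trans ?_ hmain
  have hbij : ∑ k ∈ F, edist (zm k) (z (t k)) ^ p
      = ∑ j ∈ Finset.range q, edist (zm (kk j)) (z (t (kk j))) ^ p := by
    refine (Finset.sum_bij (fun j _ => kk j) (fun j _ => hkkF j) ?_ ?_ ?_).symm
    · intro j hj j' hj' hkk
      change kk j = kk j' at hkk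
      have hj : j < q := Finset.mem_range.mp hj
      have hj' : j' < q := Finset.mem_range.mp hj'
      have h1 : rr j = rr j' := by rw [← hkkt j, ← hkkt j', hkk]
      rw [hrr] at h1
      simp only at h1
      have h2 := Subtype.coe_injective h1
      have h3 := e.injective h2
      simp only [Fin.mk.injEq] at h3
      omega
    · intro k hk
      set j : Fin q := e.symm ⟨t k, Finset.mem_image_of_mem t hk⟩ with hj
      refine ⟨j.1, Finset.mem_range.mpr j.2, ?_⟩
      have h1 : rr j.1 = t k := by
        rw [hrrq j, hj]
        simp
      apply htinj
      rw [hkkt j.1, h1]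
    · intro j _
      rfl
  rw [hbij]
  have hsub : ((Finset.range q).image (fun j => 2*j)) ⊆ Finset.range m := by
    intro cidx h
    simp only [Finset.mem_image, Finset.mem_range] at h ⊢
    omega
  have heq : ∑ j ∈ Finset.range q, edist (zm (kk j)) (z (t (kk j))) ^ p
      = ∑ cidx ∈ (Finset.range q).image (fun j => 2*j),
          edist (g cidx) (g (cidx + 1)) ^ p := by
    rw [Finset.sum_image (by intro a _ b _ h; simp only at h; omega)]
    refine Finset.sum_congr rfl fun j hj => ?_
    have e0 : (2*j) % 2 = 0 := by omega
    have e1 : (2*j+1) % 2 ≠ 0 := by omega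
    have e2 : (2*j)/2 = j := by omega
    have e3 : (2*j+1)/2 = j := by omega
    rw [hg]
    simp only [if_pos e0, if_neg e1, e2, hτdef, e3]
    rw [hkkt j]
  rw [heq]
  exact Finset.sum_le_sum_of_subset hsub

lemma sum_le_sum_of_partial_inj {β : Type*} (n : ℕ) (f : ℕ → ℝ≥0∞) (F : Finset β)
    (g : β → ℝ≥0∞) (KK : ℕ → Option β)
    (h : ∀ i ∈ Finset.range n, f i ≠ 0 → ∃ k, KK i = some k ∧ k ∈ F ∧ f i ≤ g k)
    (hinj : ∀ i ∈ Finset.range n, ∀ j ∈ Finset.range n, f i ≠ 0 → f j ≠ 0 →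
      KK i = KK j → i = j) :
    ∑ i ∈ Finset.range n, f i ≤ ∑ k ∈ F, g k := by
  classical
  set s : Finset ℕ := (Finset.range n).filter (fun i => f i ≠ 0) with hs
  have h1 : ∑ i ∈ Finset.range n, f i = ∑ i ∈ s, f i := by
    rw [hs, Finset.sum_filter_ne_zero]
  rcases s.eq_empty_or_nonempty with he | ⟨i₀, hi₀⟩
  · rw [h1, he]
    simp
  have hmem : ∀ i ∈ s, i ∈ Finset.range n ∧ f i ≠ 0 := by
    intro i hi
    exact Finset.mem_filter.mp hi
  obtain ⟨k₀, hk₀⟩ := h i₀ (hmem i₀ hi₀).1 (hmem i₀ hi₀).2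
  set K' : ℕ → β := fun i => (KK i).getD k₀ with hK'
  have hK'spec : ∀ i ∈ s, KK i = some (K' i) ∧ K' i ∈ F ∧ f i ≤ g (K' i) := by
    intro i hi
    obtain ⟨k, hk1, hk2, hk3⟩ := h i (hmem i hi).1 (hmem i hi).2
    have : K' i = k := by rw [hK']; simp [hk1]
    rw [this]
    exact ⟨hk1, hk2, hk3⟩
  have hinj' : Set.InjOn K' s := by
    intro i hi j hj hij
    refine hinj i (hmem i hi).1 j (hmem j hj).1 (hmem i hi).2 (hmem j hj).2 ?_
    rw [(hK'spec i hi).1, (hK'spec j hj).1, hij]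
  calc ∑ i ∈ Finset.range n, f i = ∑ i ∈ s, f i := h1
    _ ≤ ∑ i ∈ s, g (K' i) := Finset.sum_le_sum (fun i hi => (hK'spec i hi).2.2)
    _ = ∑ k ∈ s.image K', g k := (Finset.sum_image (fun i hi j hj => hinj' hi hj)).symm
    _ ≤ ∑ k ∈ F, g k := Finset.sum_le_sum_of_subset (by
        intro k hk
        obtain ⟨i, hi, rfl⟩ := Finset.mem_image.mp hk
        exact (hK'spec i hi).2.1)

/-- Let `z` be a càdlàg path on `[0,T]` with jumps `(zm k, z (t k)) ∈ J`
and `φ` a path function on `J` with `‖φ(a,b)‖_{p-var;[0,1]} ≤ C d(a,b)` at every jump of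
`z`.  If `x` is the continuous path obtained from `z` by traversing each jump via `φ` over
an inserted interval `[s k, u k]` (the original motion of `z` being run via the monotone
surjective time change `σ`), then
`‖x‖_{p-var;[0,T]}^p ≤ R ‖z‖_{p-var;[0,T]}^p` with
`R = 1 + 2^p + 3^(p-1) + C^p (1 + 2^p + 2·3^(p-1))`. -/
theorem pVar_jump_interpolation_bound {E : Type*} [MetricSpace E]
    (T p C : ℝ) (hT : 0 < T) (hp : 1 ≤ p) (hC : 0 < C)
    (J : Set (E × E)) (φ : E → E → ℝ → E)
    (hφ0 : ∀ a b, (a, b) ∈ J → φ a b 0 = a)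
    (hφ1 : ∀ a b, (a, b) ∈ J → φ a b 1 = b)
    (z x : ℝ → E) (ι : Type) (hι : Countable ι)
    (t : ι → ℝ) (ht : ∀ k, t k ∈ Ioc 0 T) (htinj : Function.Injective t)
    (zm : ι → E)
    (hzm : ∀ k, Tendsto z (nhdsWithin (t k) (Iio (t k))) (nhds (zm k)))
    (hcont : ∀ s ∈ Ioc 0 T, s ∉ Set.range t →
      Tendsto z (nhdsWithin s (Iio s)) (nhds (z s)))
    (hjump : ∀ k, (zm k, z (t k)) ∈ J)
    (hbound : ∀ k, eVar p (φ (zm k) (z (t k))) 0 1 ≤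
      ENNReal.ofReal ((C * dist (zm k) (z (t k))) ^ p))
    (s u : ι → ℝ) (hsu : ∀ k, s k < u k)
    (hsub : ∀ k, Icc (s k) (u k) ⊆ Icc 0 T)
    (hdisj : Pairwise fun j k => Disjoint (Ioo (s j) (u j)) (Ioo (s k) (u k)))
    (σ : ℝ → ℝ) (hσmono : MonotoneOn σ (Icc 0 T))
    (hσ0 : σ 0 = 0) (hσT : σ T = T)
    (hσsurj : Icc 0 T ⊆ σ '' Icc 0 T)
    (hσconst : ∀ k, ∀ w ∈ Icc (s k) (u k), σ w = t k)
    (hx₁ : ∀ w ∈ Icc 0 T, (∀ k, w ∉ Ico (s k) (u k)) → x w = z (σ w))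
    (hx₂ : ∀ k, ∀ v ∈ Icc (0 : ℝ) 1,
      x (s k + v * (u k - s k)) = φ (zm k) (z (t k)) v) :
    eVar p x 0 T ≤
      ENNReal.ofReal
          (1 + 2 ^ p + 3 ^ (p - 1) + C ^ p * (1 + 2 ^ p + 2 * 3 ^ (p - 1))) *
        eVar p z 0 T := by
  classical
  have hp0 : (0:ℝ) < p := lt_of_lt_of_le one_pos hp
  set V : ℝ≥0∞ := eVar p z 0 T with hV
  -- interval endpoints are in [0,T]
  have hsmem : ∀ k, s k ∈ Icc 0 T := fun k => hsub k ⟨le_rfl, (hsu k).le⟩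
  have humem : ∀ k, u k ∈ Icc 0 T := fun k => hsub k ⟨(hsu k).le, le_rfl⟩
  have hσs : ∀ k, σ (s k) = t k := fun k => hσconst k (s k) ⟨le_rfl, (hsu k).le⟩
  have hσu : ∀ k, σ (u k) = t k := fun k => hσconst k (u k) ⟨(hsu k).le, le_rfl⟩
  have hσmem : ∀ w ∈ Icc (0:ℝ) T, σ w ∈ Icc (0:ℝ) T := by
    intro w hw
    constructor
    · rw [← hσ0]; exact hσmono ⟨le_rfl, hT.le⟩ hw hw.1
    · rw [← hσT]; exact hσmono hw ⟨hT.le, le_rfl⟩ hw.2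
  -- the closed intervals are pairwise disjoint
  have hIcc : ∀ j k, j ≠ k → ∀ w, w ∈ Icc (s j) (u j) → w ∈ Icc (s k) (u k) → False :=
    fun j k hjk w hwj hwk =>
      hjk (htinj ((hσconst j w hwj).symm.trans (hσconst k w hwk)))
  -- ordering of intervals
  have hord : ∀ j k, j ≠ k → ∀ a a', a ∈ Ico (s j) (u j) → a' ∈ Ico (s k) (u k) →
      a ≤ a' → u j ≤ s k := by
    intro j k hjk a a' ha ha' haa
    by_contra hcon
    push_neg at hcon
    have h1 : s j < u k := lt_of_le_of_lt (le_trans ha.1 haa) ha'.2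
    exact hIcc j k hjk (max (s j) (s k))
      ⟨le_max_left _ _, max_le (hsu j).le hcon.le⟩
      ⟨le_max_right _ _, max_le h1.le (hsu k).le⟩
  have htord : ∀ j k, j ≠ k → ∀ a a', a ∈ Ico (s j) (u j) → a' ∈ Ico (s k) (u k) →
      a ≤ a' → t j < t k := by
    intro j k hjk a a' ha ha' haa
    have h1 : u j ≤ s k := hord j k hjk a a' ha ha' haa
    have h2 : t j ≤ t k := by
      rw [← hσu j, ← hσs k]
      exact hσmono (humem j) (hsmem k) h1
    exact lt_of_le_of_ne h2 (fun hc => hjk (htinj hc))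
  -- path-function facts
  have hφ0' : ∀ k, φ (zm k) (z (t k)) 0 = zm k := fun k => hφ0 _ _ (hjump k)
  have hφ1' : ∀ k, φ (zm k) (z (t k)) 1 = z (t k) := fun k => hφ1 _ _ (hjump k)
  -- normalized position
  set π : ι → ℝ → ℝ := fun k w => max 0 (min 1 ((w - s k) / (u k - s k))) with hπdef
  have hπ01 : ∀ k w, π k w ∈ Icc (0:ℝ) 1 := by
    intro k w
    exact ⟨le_max_left _ _, max_le zero_le_one (min_le_left _ _)⟩
  have hπmono : ∀ k, Monotone (π k) := by
    intro k w w' hw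
    have hd : 0 < u k - s k := sub_pos.mpr (hsu k)
    refine max_le_max le_rfl (min_le_min le_rfl ((div_le_div_iff_of_pos_right hd).mpr (by linarith)))
  have hπ0 : ∀ k w, w ≤ s k → π k w = 0 := by
    intro k w hw
    have hd : 0 < u k - s k := sub_pos.mpr (hsu k)
    have h1 : (w - s k) / (u k - s k) ≤ 0 :=
      div_nonpos_iff.mpr (Or.inr ⟨sub_nonpos.mpr hw, hd.le⟩)
    rw [hπdef]
    simp only
    rw [min_eq_right (h1.trans zero_le_one), max_eq_left h1]
  have hπ1 : ∀ k w, u k ≤ w → π k w = 1 := by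
    intro k w hw
    have hd : 0 < u k - s k := sub_pos.mpr (hsu k)
    have h1 : (1:ℝ) ≤ (w - s k) / (u k - s k) := by
      rw [le_div_iff₀ hd]
      linarith
    rw [hπdef]
    simp only
    rw [min_eq_left h1, max_eq_right zero_le_one]
  have hxin : ∀ k w, w ∈ Ico (s k) (u k) → x w = φ (zm k) (z (t k)) (π k w) := by
    intro k w hw
    have hd : 0 < u k - s k := sub_pos.mpr (hsu k)
    have hθ : (w - s k) / (u k - s k) ∈ Icc (0:ℝ) 1 :=
      ⟨div_nonneg (sub_nonneg.mpr hw.1) hd.le, by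
        rw [div_le_one hd]; linarith [hw.2]⟩
    have hπeq : π k w = (w - s k) / (u k - s k) := by
      rw [hπdef]
      simp only
      rw [min_eq_right hθ.2, max_eq_right hθ.1]
    rw [hπeq, ← hx₂ k _ hθ]
    congr 1
    field_simp
    ring
  refine eVar_le p x 0 T _ (fun n v hv h0 hn => ?_)
  have hvmem : ∀ i, i ≤ n → v i ∈ Icc (0:ℝ) T := by
    intro i hi
    exact ⟨h0 ▸ hv (Nat.zero_le i), hn ▸ hv hi⟩
  set InI : ℝ → Prop := fun w => ∃ k, w ∈ Ico (s k) (u k) with hInI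
  have hKu : ∀ w (h : InI w) k, w ∈ Ico (s k) (u k) → h.choose = k := by
    intro w h k hk
    by_contra hne
    exact hIcc _ _ hne w (Ico_subset_Icc_self h.choose_spec) (Ico_subset_Icc_self hk)
  have hxout : ∀ i, i ≤ n → ¬ InI (v i) → x (v i) = z (σ (v i)) := by
    intro i hi hni
    exact hx₁ _ (hvmem i hi) (fun k hk => hni ⟨k, hk⟩)
  -- generalized right-endpoint times
  set Qt : ℕ → ℝ := fun i => if h : InI (v i) then t h.choose else σ (v i) with hQtdef
  have hQt_in : ∀ i k, v i ∈ Ico (s k) (u k) → Qt i = t k := by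
    intro i k hk
    have h : InI (v i) := ⟨k, hk⟩
    rw [hQtdef]
    simp only [dif_pos h]
    rw [hKu _ h k hk]
  have hQt_out : ∀ i, ¬ InI (v i) → Qt i = σ (v i) := by
    intro i hi
    rw [hQtdef]
    simp only [dif_neg hi]
  have hQt_mem : ∀ i, i ≤ n → Qt i ∈ Icc (0:ℝ) T := by
    intro i hi
    by_cases h : InI (v i)
    · rw [hQt_in i _ h.choose_spec]
      exact ⟨(ht _).1.le, (ht _).2⟩
    · rw [hQt_out i h]
      exact hσmem _ (hvmem i hi)
  have hQmono : ∀ i i', i ≤ i' → i' ≤ n → Qt i ≤ Qt i' := by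
    intro i i' hii hi'
    have hvv : v i ≤ v i' := hv hii
    by_cases h : InI (v i) <;> by_cases h' : InI (v i')
    · obtain ⟨j, hj⟩ := h
      obtain ⟨k, hk⟩ := h'
      rw [hQt_in i j hj, hQt_in i' k hk]
      by_cases hjk : j = k
      · rw [hjk]
      · exact (htord j k hjk _ _ hj hk hvv).le
    · obtain ⟨j, hj⟩ := h
      rw [hQt_in i j hj, hQt_out i' h']
      have h2 : u j ≤ v i' := by
        rcases lt_or_ge (v i') (u j) with hlt | hle
        · exact absurd ⟨j, ⟨le_trans hj.1 hvv, hlt⟩⟩ h'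
        · exact hle
      rw [← hσu j]
      exact hσmono (humem j) (hvmem i' hi') h2
    · obtain ⟨k, hk⟩ := h'
      rw [hQt_out i h, hQt_in i' k hk]
      have h2 : v i ≤ s k := by
        rcases lt_or_ge (v i) (s k) with hlt | hle
        · exact hlt.le
        · exact absurd ⟨k, ⟨hle, lt_of_le_of_lt hvv hk.2⟩⟩ h
      rw [← hσs k]
      exact hσmono (hvmem i (le_trans hii hi')) (hsmem k) h2
    · rw [hQt_out i h, hQt_out i' h']
      exact hσmono (hvmem i (le_trans hii hi')) (hvmem i' hi') hvv
  -- left endpoints (possibly left limits)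
  set Pv : ℕ → Option ι := fun i => if h : InI (v i) then
      (if 0 < i ∧ Qt (i-1) = t h.choose then none else some h.choose) else none with hPvdef
  set gP : ℕ → E := fun i => match Pv i with | some k => zm k | none => z (Qt i) with hgPdef
  have hPv_some : ∀ i k, Pv i = some k → v i ∈ Ico (s k) (u k) ∧ Qt i = t k := by
    intro i k hk
    rw [hPvdef] at hk
    simp only at hk
    by_cases h : InI (v i)
    · rw [dif_pos h] at hk
      by_cases hc : 0 < i ∧ Qt (i-1) = t h.choose
      · rw [if_pos hc] at hk; cases hk
      · rw [if_neg hc] at hk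
        cases hk
        exact ⟨h.choose_spec, hQt_in i _ h.choose_spec⟩
    · rw [dif_neg h] at hk; cases hk
  -- the jump-bound for a single jump
  have hjump_le : ∀ k, edist (zm k) (z (t k)) ^ p ≤
      ENNReal.ofReal ((C * dist (zm k) (z (t k))) ^ p) := by
    intro k
    refine le_trans ?_ (hbound k)
    have h1 := le_eVar p (φ (zm k) (z (t k))) 0 1 1 (fun i => min (i:ℝ) 1)
      (fun a b hab => min_le_min (by exact_mod_cast hab) le_rfl) (by norm_num) (by norm_num)
    simp only [Finset.sum_range_one] at h1
    norm_num at h1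
    rwa [hφ0' k, hφ1' k] at h1
  -- the finite set of intervals visited by the partition
  set F : Finset ι := (Finset.range (n+1)).biUnion
      (fun i => if h : InI (v i) then {h.choose} else ∅) with hFdef
  have hFmem : ∀ i, i ≤ n → ∀ k, v i ∈ Ico (s k) (u k) → k ∈ F := by
    intro i hi k hk
    have h : InI (v i) := ⟨k, hk⟩
    rw [hFdef]
    refine Finset.mem_biUnion.mpr ⟨i, Finset.mem_range.mpr (by omega), ?_⟩
    rw [dif_pos h, hKu _ h k hk]
    exact Finset.mem_singleton_self k
  -- the phi-increments
  set ψ : ι → ℕ → ℝ≥0∞ := fun k i =>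
    edist (φ (zm k) (z (t k)) (π k (v i))) (φ (zm k) (z (t k)) (π k (v (i+1)))) with hψdef
  -- extra jump terms
  set e : ℕ → ℝ≥0∞ := fun i => if h : InI (v (i+1)) then
      (if (¬ InI (v i)) ∧ σ (v i) = t h.choose
        then edist (zm h.choose) (z (t h.choose)) else 0) else 0 with hedef
  -- chain terms
  set b : ℕ → ℝ≥0∞ := fun i => edist (z (Qt i)) (gP (i+1)) with hbdef
  set c3 : ℝ≥0∞ := ENNReal.ofReal (3 ^ (p - 1)) with hc3def
  have hc3_one : (1:ℝ≥0∞) ≤ c3 := by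
    rw [hc3def, ← ENNReal.ofReal_one]
    exact ENNReal.ofReal_le_ofReal (Real.one_le_rpow (by norm_num) (by linarith))
  -- the master pointwise bound
  have master : ∀ i, i < n → edist (x (v i)) (x (v (i+1))) ^ p ≤
      c3 * (b i ^ p + e i ^ p + ∑ k ∈ F, ψ k i ^ p) := by
    intro i hi
    have hin : i ≤ n := by omega
    have hin' : i + 1 ≤ n := by omega
    have haa : v i ≤ v (i+1) := hv (by omega)
    have hz0 : (0:ℝ≥0∞) ^ p = 0 := ENNReal.zero_rpow_of_pos hp0
    by_cases h' : InI (v (i+1))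
    · set k : ι := h'.choose with hkdef
      have hk : v (i+1) ∈ Ico (s k) (u k) := h'.choose_spec
      have hxa' : x (v (i+1)) = φ (zm k) (z (t k)) (π k (v (i+1))) := hxin k _ hk
      have hkF : k ∈ F := hFmem (i+1) hin' k hk
      by_cases hc : InI (v i)
      · set j : ι := hc.choose with hjdef
        have hj : v i ∈ Ico (s j) (u j) := hc.choose_spec
        have hxa : x (v i) = φ (zm j) (z (t j)) (π j (v i)) := hxin j _ hj
        have hjF : j ∈ F := hFmem i hin j hj
        have hQti : Qt i = t j := hQt_in i j hj
        by_cases hjk : j = k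
        · -- both in the same interval
          have hd : edist (x (v i)) (x (v (i+1))) ^ p = ψ k i ^ p := by
            simp only [hψdef]
            rw [← hjk, hxa, hxin j _ (hjk ▸ hk)]
          rw [hd]
          calc ψ k i ^ p ≤ ∑ k' ∈ F, ψ k' i ^ p :=
                Finset.single_le_sum (f := fun k' => ψ k' i ^ p) (fun _ _ => zero_le) hkF
            _ ≤ b i ^ p + e i ^ p + ∑ k' ∈ F, ψ k' i ^ p := le_add_self
            _ ≤ c3 * (b i ^ p + e i ^ p + ∑ k' ∈ F, ψ k' i ^ p) :=
                le_mul_of_one_le_left (zero_le) hc3_one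
        · -- distinct intervals
          have hujk : u j ≤ s k := hord j k hjk _ _ hj hk haa
          have htjk : t j < t k := htord j k hjk _ _ hj hk haa
          have hπj1 : π j (v (i+1)) = 1 := hπ1 j _ (le_trans hujk hk.1)
          have hπk0 : π k (v i) = 0 := hπ0 k _ (le_trans hj.2.le hujk)
          have hA : edist (x (v i)) (z (t j)) = ψ j i := by
            simp only [hψdef]
            rw [hxa, hπj1, hφ1' j]
          have hCc : edist (zm k) (x (v (i+1))) = ψ k i := by
            simp only [hψdef]
            rw [hxa', hπk0, hφ0' k]
          have hPv1 : Pv (i+1) = some k := by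
            simp only [hPvdef]
            rw [dif_pos h', if_neg]
            push_neg
            intro _
            rw [Nat.add_sub_cancel, hQti]
            exact ne_of_lt htjk
          have hb : b i = edist (z (t j)) (zm k) := by
            simp only [hbdef, hgPdef]
            rw [hQti, hPv1]
          have htri : edist (x (v i)) (x (v (i+1))) ≤ b i + ψ j i + ψ k i := by
            calc edist (x (v i)) (x (v (i+1)))
                ≤ edist (x (v i)) (z (t j)) + edist (z (t j)) (zm k)
                  + edist (zm k) (x (v (i+1))) := edist_triangle4 _ _ _ _
              _ = ψ j i + b i + ψ k i := by rw [hA, hb, hCc]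
              _ = b i + ψ j i + ψ k i := by ring
          refine (tri3 hp (b i) (ψ j i) (ψ k i) _ htri).trans ?_
          refine mul_le_mul_right ?_ _
          have hpair : ψ j i ^ p + ψ k i ^ p ≤ ∑ k' ∈ F, ψ k' i ^ p := by
            rw [← Finset.sum_pair (f := fun k' => ψ k' i ^ p) hjk]
            refine Finset.sum_le_sum_of_subset ?_
            intro y hy
            rcases Finset.mem_insert.mp hy with rfl | hy
            · exact hjF
            · rw [Finset.mem_singleton.mp hy]; exact hkF
          calc b i ^ p + ψ j i ^ p + ψ k i ^ p
              = b i ^ p + (ψ j i ^ p + ψ k i ^ p) := by ring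
            _ ≤ b i ^ p + (e i ^ p + ∑ k' ∈ F, ψ k' i ^ p) :=
                add_le_add le_rfl (hpair.trans le_add_self)
            _ = b i ^ p + e i ^ p + ∑ k' ∈ F, ψ k' i ^ p := by ring
      · -- flat source, target in interval k
        have hxa : x (v i) = z (σ (v i)) := hxout i hin hc
        have hva_lt : v i < s k := by
          rcases lt_or_ge (v i) (s k) with hlt | hle
          · exact hlt
          · exact absurd ⟨k, ⟨hle, lt_of_le_of_lt haa hk.2⟩⟩ hc
        have hσa_le : σ (v i) ≤ t k := by
          rw [← hσs k]
          exact hσmono (hvmem i hin) (hsmem k) hva_lt.le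
        have hπk0 : π k (v i) = 0 := hπ0 k _ hva_lt.le
        have hCc : edist (zm k) (x (v (i+1))) = ψ k i := by
          simp only [hψdef]
          rw [hxa', hπk0, hφ0' k]
        have hQti : Qt i = σ (v i) := hQt_out i hc
        by_cases heq : σ (v i) = t k
        · -- degenerate: extra jump term
          have he : e i = edist (zm k) (z (t k)) := by
            simp only [hedef]
            rw [dif_pos h', if_pos ⟨hc, heq⟩]
          have htri : edist (x (v i)) (x (v (i+1))) ≤ e i + ψ k i + 0 := by
            calc edist (x (v i)) (x (v (i+1)))
                ≤ edist (x (v i)) (zm k) + edist (zm k) (x (v (i+1))) :=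
                  edist_triangle _ _ _
              _ = e i + ψ k i := by
                  rw [hxa, heq, he, hCc, edist_comm (zm k) (z (t k))]
              _ = e i + ψ k i + 0 := by rw [add_zero]
          refine (tri3 hp (e i) (ψ k i) 0 _ htri).trans ?_
          refine mul_le_mul_right ?_ _
          calc e i ^ p + ψ k i ^ p + (0:ℝ≥0∞) ^ p
              = e i ^ p + ψ k i ^ p := by rw [hz0, add_zero]
            _ ≤ (b i ^ p + e i ^ p) + ∑ k' ∈ F, ψ k' i ^ p :=
                add_le_add le_add_self
                  (Finset.single_le_sum (f := fun k' => ψ k' i ^ p) (fun _ _ => zero_le) hkF)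
        · -- regular entrance
          have hPv1 : Pv (i+1) = some k := by
            simp only [hPvdef]
            rw [dif_pos h', if_neg]
            push_neg
            intro _
            rw [Nat.add_sub_cancel, hQti]
            exact heq
          have hb : b i = edist (z (σ (v i))) (zm k) := by
            simp only [hbdef, hgPdef]
            rw [hQti, hPv1]
          have htri : edist (x (v i)) (x (v (i+1))) ≤ b i + ψ k i + 0 := by
            calc edist (x (v i)) (x (v (i+1)))
                ≤ edist (x (v i)) (zm k) + edist (zm k) (x (v (i+1))) :=
                  edist_triangle _ _ _
              _ = b i + ψ k i := by rw [hxa, hb, hCc]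
              _ = b i + ψ k i + 0 := by rw [add_zero]
          refine (tri3 hp (b i) (ψ k i) 0 _ htri).trans ?_
          refine mul_le_mul_right ?_ _
          calc b i ^ p + ψ k i ^ p + (0:ℝ≥0∞) ^ p
              = b i ^ p + ψ k i ^ p := by rw [hz0, add_zero]
            _ ≤ (b i ^ p + e i ^ p) + ∑ k' ∈ F, ψ k' i ^ p := by
                refine add_le_add le_self_add
                  (Finset.single_le_sum (f := fun k' => ψ k' i ^ p) (fun _ _ => zero_le) hkF)
    · -- flat target
      have hxa' : x (v (i+1)) = z (σ (v (i+1))) := hxout (i+1) hin' h'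
      have hQt1 : Qt (i+1) = σ (v (i+1)) := hQt_out _ h'
      have hPv1 : Pv (i+1) = none := by
        simp only [hPvdef]
        rw [dif_neg h']
      have hgP1 : gP (i+1) = z (σ (v (i+1))) := by
        simp only [hgPdef]
        rw [hPv1, hQt1]
      by_cases hc : InI (v i)
      · set j : ι := hc.choose with hjdef
        have hj : v i ∈ Ico (s j) (u j) := hc.choose_spec
        have hxa : x (v i) = φ (zm j) (z (t j)) (π j (v i)) := hxin j _ hj
        have hjF : j ∈ F := hFmem i hin j hj
        have hQti : Qt i = t j := hQt_in i j hj
        have hu_le : u j ≤ v (i+1) := by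
          rcases lt_or_ge (v (i+1)) (u j) with hlt | hle
          · exact absurd ⟨j, ⟨le_trans hj.1 haa, hlt⟩⟩ h'
          · exact hle
        have hπj1 : π j (v (i+1)) = 1 := hπ1 j _ hu_le
        have hA : edist (x (v i)) (z (t j)) = ψ j i := by
          simp only [hψdef]
          rw [hxa, hπj1, hφ1' j]
        have hb : b i = edist (z (t j)) (z (σ (v (i+1)))) := by
          simp only [hbdef]
          rw [hQti, hgP1]
        have htri : edist (x (v i)) (x (v (i+1))) ≤ b i + ψ j i + 0 := by
          calc edist (x (v i)) (x (v (i+1)))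
              ≤ edist (x (v i)) (z (t j)) + edist (z (t j)) (x (v (i+1))) :=
                edist_triangle _ _ _
            _ = ψ j i + b i := by rw [hA, hb, hxa']
            _ = b i + ψ j i + 0 := by ring
        refine (tri3 hp (b i) (ψ j i) 0 _ htri).trans ?_
        refine mul_le_mul_right ?_ _
        calc b i ^ p + ψ j i ^ p + (0:ℝ≥0∞) ^ p
            = b i ^ p + ψ j i ^ p := by rw [hz0, add_zero]
          _ ≤ (b i ^ p + e i ^ p) + ∑ k' ∈ F, ψ k' i ^ p := by
              refine add_le_add le_self_add
                (Finset.single_le_sum (f := fun k' => ψ k' i ^ p) (fun _ _ => zero_le) hjF)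
      · -- both flat
        have hxa : x (v i) = z (σ (v i)) := hxout i hin hc
        have hQti : Qt i = σ (v i) := hQt_out i hc
        have hb : b i = edist (z (σ (v i))) (z (σ (v (i+1)))) := by
          simp only [hbdef]
          rw [hQti, hgP1]
        have hd : edist (x (v i)) (x (v (i+1))) ^ p = b i ^ p := by
          rw [hxa, hxa', hb]
        rw [hd]
        calc b i ^ p ≤ b i ^ p + e i ^ p + ∑ k' ∈ F, ψ k' i ^ p :=
              le_trans le_self_add le_self_add
          _ ≤ c3 * (b i ^ p + e i ^ p + ∑ k' ∈ F, ψ k' i ^ p) :=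
              le_mul_of_one_le_left (zero_le) hc3_one
  -- sum the master bound
  have hsum : ∑ i ∈ Finset.range n, edist (x (v i)) (x (v (i+1))) ^ p ≤
      c3 * ((∑ i ∈ Finset.range n, b i ^ p) + (∑ i ∈ Finset.range n, e i ^ p)
        + ∑ i ∈ Finset.range n, ∑ k ∈ F, ψ k i ^ p) := by
    calc ∑ i ∈ Finset.range n, edist (x (v i)) (x (v (i+1))) ^ p
        ≤ ∑ i ∈ Finset.range n, c3 * (b i ^ p + e i ^ p + ∑ k ∈ F, ψ k i ^ p) :=
          Finset.sum_le_sum fun i hi => master i (Finset.mem_range.mp hi)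
      _ = c3 * ∑ i ∈ Finset.range n, (b i ^ p + e i ^ p + ∑ k ∈ F, ψ k i ^ p) := by
          rw [Finset.mul_sum]
      _ = _ := by rw [Finset.sum_add_distrib, Finset.sum_add_distrib]
  -- bound the b-sum via the generalized chain
  have hbsum : ∑ i ∈ Finset.range n, b i ^ p ≤ V := by
    set m : ℕ := 2*n + 1 with hm
    set cτ : ℕ → ℝ := fun cid => Qt (cid / 2) with hcτ
    set ccc : ℕ → Option ι := fun cid => if cid % 2 = 0 then Pv (cid / 2) else none with hccc
    set cg : ℕ → E := fun cid => if cid % 2 = 0 then gP (cid / 2) else z (Qt (cid / 2)) with hcg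
    have hchain : ∑ cid ∈ Finset.range m, edist (cg cid) (cg (cid+1)) ^ p ≤ V := by
      refine chain_with_limits_le_eVar T p hT hp z t ht htinj zm hzm m cτ ccc cg
        ?_ ?_ ?_ ?_ ?_ ?_
      · intro cid hcid
        exact hQt_mem _ (by omega)
      · intro cid _ k hk
        simp only [hccc] at hk
        by_cases hpar : cid % 2 = 0
        · rw [if_pos hpar] at hk
          simp only [hcτ]
          exact (hPv_some _ _ hk).2
        · rw [if_neg hpar] at hk; cases hk
      · intro cid _ hk
        simp only [hccc] at hk
        by_cases hpar : cid % 2 = 0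
        · rw [if_pos hpar] at hk
          simp only [hcg, hcτ, if_pos hpar, hgPdef, hk]
        · simp only [hcg, hcτ, if_neg hpar]
      · intro cid _ k hk
        simp only [hccc] at hk
        by_cases hpar : cid % 2 = 0
        · rw [if_pos hpar] at hk
          simp only [hcg, if_pos hpar, hgPdef, hk]
        · rw [if_neg hpar] at hk; cases hk
      · intro cid hcid
        exact hQmono _ _ (by omega) (by omega)
      · intro cid hcid hnone hsome
        simp only [hccc] at hnone hsome
        by_cases hpar : cid % 2 = 0
        · rw [if_neg (by omega : ¬ (cid+1) % 2 = 0)] at hsome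
          simp at hsome
        · rw [if_pos (by omega : (cid+1) % 2 = 0)] at hsome
          obtain ⟨k, hk⟩ := Option.isSome_iff_exists.mp hsome
          have h2 := hPv_some _ _ hk
          have hIn : InI (v ((cid+1)/2)) := ⟨k, h2.1⟩
          have h3 : ¬ (0 < (cid+1)/2 ∧ Qt ((cid+1)/2 - 1) = t hIn.choose) := by
            intro hcontra
            rw [hPvdef] at hk
            simp only at hk
            rw [dif_pos hIn, if_pos hcontra] at hk
            cases hk
          have hch : hIn.choose = k := hKu _ hIn k h2.1
          have hpos : 0 < (cid+1)/2 := by omega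
          have h4 : Qt ((cid+1)/2 - 1) ≠ t k := by
            intro hcontra
            exact h3 ⟨hpos, by rw [hch]; exact hcontra⟩
          have h5 : cid / 2 = (cid+1)/2 - 1 := by omega
          simp only [hcτ]
          rw [h5, h2.2]
          refine lt_of_le_of_ne ?_ (h2.2 ▸ h4)
          have h6 := hQmono ((cid+1)/2 - 1) ((cid+1)/2) (by omega) (by omega)
          rw [h2.2] at h6
          exact h6
    have hext : ∑ i ∈ Finset.range n, b i ^ p
        = ∑ cid ∈ (Finset.range n).image (fun i => 2*i+1),
            edist (cg cid) (cg (cid+1)) ^ p := by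
      rw [Finset.sum_image (by intro a _ b _ h; simp only at h; omega)]
      refine Finset.sum_congr rfl fun i _ => ?_
      have e1 : (2*i+1) % 2 ≠ 0 := by omega
      have e2 : (2*i+1) / 2 = i := by omega
      have e3 : (2*i+1+1) % 2 = 0 := by omega
      have e4 : (2*i+1+1) / 2 = i + 1 := by omega
      simp only [hcg, if_neg e1, if_pos e3, e2, e4, hbdef]
    rw [hext]
    refine le_trans (Finset.sum_le_sum_of_subset ?_) hchain
    intro cid hcid
    simp only [Finset.mem_image, Finset.mem_range] at hcid ⊢
    omega
  -- bound the e-sum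
  have hesum : ∑ i ∈ Finset.range n, e i ^ p ≤
      ∑ k ∈ F, ENNReal.ofReal ((C * dist (zm k) (z (t k))) ^ p) := by
    refine sum_le_sum_of_partial_inj n _ F _
      (fun i => if h : InI (v (i+1)) then some h.choose else none) ?_ ?_
    · intro i hi hne
      have hi' : i < n := Finset.mem_range.mp hi
      by_cases h' : InI (v (i+1))
      · refine ⟨h'.choose, by simp only [dif_pos h'], hFmem (i+1) (by omega) _ h'.choose_spec, ?_⟩
        by_cases hcond : (¬ InI (v i)) ∧ σ (v i) = t h'.choose
        · have he1 : e i = edist (zm h'.choose) (z (t h'.choose)) := by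
            simp only [hedef]
            rw [dif_pos h', if_pos hcond]
          rw [he1]
          exact hjump_le _
        · exfalso
          apply hne
          have he1 : e i = 0 := by
            simp only [hedef]
            rw [dif_pos h', if_neg hcond]
          rw [he1]
          exact ENNReal.zero_rpow_of_pos hp0
      · exfalso
        apply hne
        have he1 : e i = 0 := by
          simp only [hedef]
          rw [dif_neg h']
        rw [he1]
        exact ENNReal.zero_rpow_of_pos hp0
    · intro i hi i' hi' hnei hnei' hKK
      have hini : i < n := Finset.mem_range.mp hi
      have hini' : i' < n := Finset.mem_range.mp hi'
      -- facts for a nonzero e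
      have hfacts : ∀ l, l < n → e l ^ p ≠ 0 → ∃ h'' : InI (v (l+1)),
          ¬ InI (v l) ∧ σ (v l) = t h''.choose := by
        intro l _ hne
        by_cases h'' : InI (v (l+1))
        · by_cases hcond : (¬ InI (v l)) ∧ σ (v l) = t h''.choose
          · exact ⟨h'', hcond⟩
          · exfalso
            apply hne
            have he1 : e l = 0 := by
              simp only [hedef]
              rw [dif_pos h'', if_neg hcond]
            rw [he1]
            exact ENNReal.zero_rpow_of_pos hp0
        · exfalso
          apply hne
          have he1 : e l = 0 := by
            simp only [hedef]
            rw [dif_neg h'']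
          rw [he1]
          exact ENNReal.zero_rpow_of_pos hp0
      obtain ⟨hI1, hnI1, _⟩ := hfacts i hini hnei
      obtain ⟨hI2, hnI2, _⟩ := hfacts i' hini' hnei'
      simp only [dif_pos hI1, dif_pos hI2] at hKK
      have hkk : hI1.choose = hI2.choose := by
        exact Option.some_injective _ hKK
      -- suppose i ≠ i', derive contradiction
      by_contra hne'
      -- wlog i < i'
      have key : ∀ a a', a < a' → a' < n → ∀ (hA : InI (v (a+1))), ¬ InI (v a') →
          v (a'+1) ∈ Ico (s hA.choose) (u hA.choose) → False := by
        intro a a' haa' ha'n hA hnA hmem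
        have h1 : s hA.choose ≤ v (a+1) := hA.choose_spec.1
        have h2 : v (a+1) ≤ v a' := hv (by omega)
        have h3 : u hA.choose ≤ v a' := by
          rcases lt_or_ge (v a') (u hA.choose) with hlt | hle
          · exact absurd ⟨hA.choose, ⟨le_trans h1 h2, hlt⟩⟩ hnA
          · exact hle
        have h4 : u hA.choose ≤ v (a'+1) := le_trans h3 (hv (by omega))
        exact absurd hmem.2 (not_lt.mpr h4)
      rcases lt_or_gt_of_ne hne' with hlt | hgt
      · exact key i i' hlt hini' hI1 hnI2 (hkk ▸ hI2.choose_spec)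
      · exact key i' i hgt hini hI2 hnI1 (hkk.symm ▸ hI1.choose_spec)
  -- bound the psi-sums
  have hψsum : ∀ k ∈ F, ∑ i ∈ Finset.range n, ψ k i ^ p ≤
      ENNReal.ofReal ((C * dist (zm k) (z (t k))) ^ p) := by
    intro k _
    refine le_trans (le_trans ?_ (chain_le_eVar p (φ (zm k) (z (t k))) 0 1 n
      (fun i => π k (v i)) (fun i j hij _ => hπmono k (hv hij))
      (hπ01 k _).1 (hπ01 k _).2)) (hbound k)
    simp only [hψdef]
    exact le_rfl
  have hψtotal : ∑ i ∈ Finset.range n, ∑ k ∈ F, ψ k i ^ p ≤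
      ∑ k ∈ F, ENNReal.ofReal ((C * dist (zm k) (z (t k))) ^ p) := by
    rw [Finset.sum_comm]
    exact Finset.sum_le_sum hψsum
  have hCpV : ∑ k ∈ F, ENNReal.ofReal ((C * dist (zm k) (z (t k))) ^ p) ≤
      ENNReal.ofReal (C ^ p) * V := by
    have h1 : ∀ k : ι, ENNReal.ofReal ((C * dist (zm k) (z (t k))) ^ p)
        = ENNReal.ofReal (C ^ p) * edist (zm k) (z (t k)) ^ p := by
      intro k
      rw [Real.mul_rpow hC.le dist_nonneg, ENNReal.ofReal_mul (Real.rpow_nonneg hC.le p),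
        edist_dist, ← ENNReal.ofReal_rpow_of_nonneg dist_nonneg hp0.le]
    calc ∑ k ∈ F, ENNReal.ofReal ((C * dist (zm k) (z (t k))) ^ p)
        = ENNReal.ofReal (C^p) * ∑ k ∈ F, edist (zm k) (z (t k)) ^ p := by
          rw [Finset.mul_sum]
          exact Finset.sum_congr rfl (fun k _ => h1 k)
      _ ≤ _ := mul_le_mul_right (jumpsum_le_eVar T p hT hp z t ht htinj zm hzm F) _
  set Cp : ℝ≥0∞ := ENNReal.ofReal (C ^ p) with hCpdef
  have hcoef : c3 * (1 + Cp + Cp) ≤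
      ENNReal.ofReal (1 + 2 ^ p + 3 ^ (p - 1) + C ^ p * (1 + 2 ^ p + 2 * 3 ^ (p - 1))) := by
    have h2 : (1:ℝ≥0∞) + Cp + Cp = ENNReal.ofReal (1 + C^p + C^p) := by
      rw [ENNReal.ofReal_add (by positivity) (Real.rpow_nonneg hC.le p),
        ENNReal.ofReal_add (by norm_num) (Real.rpow_nonneg hC.le p), ENNReal.ofReal_one]
    rw [h2, hc3def, ← ENNReal.ofReal_mul (by positivity)]
    apply ENNReal.ofReal_le_ofReal
    have h3 : (0:ℝ) ≤ 2 ^ p := Real.rpow_nonneg (by norm_num) p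
    have h4 : (0:ℝ) ≤ C ^ p := Real.rpow_nonneg hC.le p
    have h5 : (0:ℝ) ≤ 3 ^ (p-1) := Real.rpow_nonneg (by norm_num) (p-1)
    nlinarith [mul_nonneg h3 h4]
  calc ∑ i ∈ Finset.range n, edist (x (v i)) (x (v (i + 1))) ^ p
      ≤ c3 * (V + Cp * V + Cp * V) := by
        refine hsum.trans (mul_le_mul_right ?_ _)
        exact add_le_add (add_le_add hbsum (hesum.trans hCpV)) (hψtotal.trans hCpV)
    _ = (c3 * (1 + Cp + Cp)) * V := by ring
    _ ≤ _ := mul_le_mul_left hcoef _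
end

section
/- Let $\mathbf X$ be a L\'evy process in $\mathbb R$ (or in a Lie group $G$, via a coordinate $\xi_i$) started at $0$, with the property that $\limsup_{t \to 0} t^{-1} |\mathbf X_t|^2 = \infty$ almost surely, and with stationary independent increments. Then almost surely $\sup_{\mathcal D \subset [0,1]} \sum_{t_k \in \mathcal D} |\mathbf X_{t_{k+1}} - \mathbf X_{t_k}|^2 = \infty$, i.e. $\mathbf X$ has almost surely infinite $2$-variation on $[0,1]$. -/
open MeasureTheory ProbabilityTheory Set Filter

section Aux

variable {Ω : Type*} [MeasurableSpace Ω] {μ : Measure Ω}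

/-- The cumulative sums (as a vector) of the first `n` of `n+1` independent random variables
are independent from the last one. -/
lemma indep_cumsum_last (n : ℕ) (f : Fin (n + 1) → Ω → ℝ) (hmeas : ∀ i, Measurable (f i))
    (hf : iIndepFun f μ) :
    IndepFun (fun ω (i : Fin n) => ∑ j ∈ Finset.range (i.1 + 1),
        (if h : j < n + 1 then f ⟨j, h⟩ ω else 0)) (f (Fin.last n)) μ := by
  classical
  set S : Finset (Fin (n + 1)) := Finset.univ.erase (Fin.last n) with hS
  have hST : Disjoint S ({Fin.last n} : Finset (Fin (n + 1))) := by
    simp [hS, Finset.disjoint_singleton_right]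
  have h := hf.indepFun_finset S {Fin.last n} hST hmeas
  set e : (↑S → ℝ) → (Fin (n + 1) → ℝ) := fun w i => if h : i ∈ S then w ⟨i, h⟩ else 0 with he
  have hemeas : Measurable e := by
    refine measurable_pi_lambda _ (fun i => ?_)
    by_cases h : i ∈ S
    · simpa [he, h] using measurable_pi_apply (⟨i, h⟩ : ↑S)
    · simpa [he, h] using measurable_const
  set φ : (↑S → ℝ) → (Fin n → ℝ) := fun w i => ∑ j ∈ Finset.range (i.1 + 1),
      (if h : j < n + 1 then e w ⟨j, h⟩ else 0) with hφ
  have hφmeas : Measurable φ := by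
    refine measurable_pi_lambda _ (fun i => ?_)
    refine Finset.measurable_sum _ (fun j _ => ?_)
    by_cases h : j < n + 1
    · simp only [h, dif_pos]
      exact (measurable_pi_apply (⟨j, h⟩ : Fin (n+1))).comp hemeas
    · simpa [h] using measurable_const
  set ψ : (↑({Fin.last n} : Finset (Fin (n + 1))) → ℝ) → ℝ :=
      fun w => w ⟨Fin.last n, by simp⟩ with hψ
  have hψmeas : Measurable ψ := measurable_pi_apply _
  have h2 := h.comp hφmeas hψmeas
  convert h2 using 1
  · funext ω
    funext i
    simp only [Function.comp_apply, hφ]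
    refine Finset.sum_congr rfl (fun j hj => ?_)
    have hj' : j < n + 1 := by
      have := Finset.mem_range.mp hj
      omega
    have hjS : (⟨j, hj'⟩ : Fin (n + 1)) ∈ S := by
      have : j < n := by
        have := Finset.mem_range.mp hj
        have := i.2
        omega
      simp [hS, Fin.ext_iff, Fin.last]
      omega
    simp [hj', he, hjS]
  · funext ω
    rfl


/-- Law of the vector of increments from the initial time equals the law of the process
evaluated at shifted times (law transfer using stationarity and independence). -/
lemma vec_law [IsProbabilityMeasure μ]
    (X : ℝ → Ω → ℝ) (hXmeas : ∀ t, Measurable (X t))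
    (hindep : ∀ (n : ℕ) (t : ℕ → ℝ), Monotone t →
      iIndepFun
        (fun i : Fin n => fun ω => X (t (i.val + 1)) ω - X (t i.val) ω) μ)
    (hstat : ∀ s t : ℝ, 0 ≤ s → s ≤ t →
      Measure.map (fun ω => X t ω - X s ω) μ = Measure.map (fun ω => X (t - s) ω) μ) :
    ∀ (n : ℕ) (t : ℕ → ℝ), Monotone t → 0 ≤ t 0 →
      Measure.map (fun ω (i : Fin n) => X (t (i.1 + 1)) ω - X (t 0) ω) μ
        = Measure.map (fun ω (i : Fin n) => X (t (i.1 + 1) - t 0) ω - X (t 0 - t 0) ω) μ := by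
  intro n
  induction n with
  | zero =>
    intro t ht ht0
    refine Measure.ext (fun s hs => ?_)
    have hmeas1 : Measurable (fun ω (i : Fin 0) => X (t (i.1 + 1)) ω - X (t 0) ω) :=
      measurable_pi_lambda _ (fun i => (hXmeas _).sub (hXmeas _))
    have hmeas2 : Measurable (fun ω (i : Fin 0) => X (t (i.1 + 1) - t 0) ω - X (t 0 - t 0) ω) :=
      measurable_pi_lambda _ (fun i => (hXmeas _).sub (hXmeas _))
    rcases s.eq_empty_or_nonempty with h | h
    · simp [h]
    · have hsu : s = Set.univ := by
        refine Set.eq_univ_of_forall (fun x => ?_)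
        obtain ⟨y, hy⟩ := h
        rwa [Subsingleton.elim x y]
      rw [hsu, Measure.map_apply hmeas1 MeasurableSet.univ,
        Measure.map_apply hmeas2 MeasurableSet.univ]
      simp
  | succ n ih =>
    intro t ht ht0
    set u : ℕ → ℝ := fun i => t i - t 0 with hu
    have hu0 : u 0 = 0 := by simp [hu]
    have humono : Monotone u := fun a b hab => by
      simp only [hu]
      exact sub_le_sub_right (ht hab) _
    -- increments
    set ft : Fin (n + 1) → Ω → ℝ := fun i ω => X (t (i.1 + 1)) ω - X (t i.1) ω with hft
    set fu : Fin (n + 1) → Ω → ℝ := fun i ω => X (u (i.1 + 1)) ω - X (u i.1) ω with hfu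
    have hftmeas : ∀ i, Measurable (ft i) := fun i => (hXmeas _).sub (hXmeas _)
    have hfumeas : ∀ i, Measurable (fu i) := fun i => (hXmeas _).sub (hXmeas _)
    have hftindep := hindep (n + 1) t ht
    have hfuindep := hindep (n + 1) u humono
    -- the cumulative vectors
    set Vt : Ω → Fin n → ℝ := fun ω i => X (t (i.1 + 1)) ω - X (t 0) ω with hVt
    set Vu : Ω → Fin n → ℝ := fun ω i => X (u (i.1 + 1)) ω - X (u 0) ω with hVu
    have hVtmeas : Measurable Vt := measurable_pi_lambda _ (fun i => (hXmeas _).sub (hXmeas _))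
    have hVumeas : Measurable Vu := measurable_pi_lambda _ (fun i => (hXmeas _).sub (hXmeas _))
    -- cumulative vector as sums of increments
    have hVt_sum : Vt = fun ω (i : Fin n) => ∑ j ∈ Finset.range (i.1 + 1),
        (if h : j < n + 1 then ft ⟨j, h⟩ ω else 0) := by
      funext ω i
      rw [show (∑ j ∈ Finset.range (i.1 + 1), (if h : j < n + 1 then ft ⟨j, h⟩ ω else 0))
          = ∑ j ∈ Finset.range (i.1 + 1), (X (t (j + 1)) ω - X (t j) ω) from
        Finset.sum_congr rfl (fun j hj => by
          have hj' : j < n + 1 := by have := Finset.mem_range.mp hj; have := i.2; omega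
          simp [hj', hft])]
      rw [Finset.sum_range_sub (fun j => X (t j) ω)]
    have hVu_sum : Vu = fun ω (i : Fin n) => ∑ j ∈ Finset.range (i.1 + 1),
        (if h : j < n + 1 then fu ⟨j, h⟩ ω else 0) := by
      funext ω i
      rw [show (∑ j ∈ Finset.range (i.1 + 1), (if h : j < n + 1 then fu ⟨j, h⟩ ω else 0))
          = ∑ j ∈ Finset.range (i.1 + 1), (X (u (j + 1)) ω - X (u j) ω) from
        Finset.sum_congr rfl (fun j hj => by
          have hj' : j < n + 1 := by have := Finset.mem_range.mp hj; have := i.2; omega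
          simp [hj', hfu])]
      rw [Finset.sum_range_sub (fun j => X (u j) ω)]
    -- independence of cumulative vector and last increment
    have hindep_t : IndepFun Vt (ft (Fin.last n)) μ := by
      rw [hVt_sum]; exact indep_cumsum_last n ft hftmeas hftindep
    have hindep_u : IndepFun Vu (fu (Fin.last n)) μ := by
      rw [hVu_sum]; exact indep_cumsum_last n fu hfumeas hfuindep
    -- law of the pair is the product of laws
    have hpair_t : Measure.map (fun ω => (Vt ω, ft (Fin.last n) ω)) μ
        = (Measure.map Vt μ).prod (Measure.map (ft (Fin.last n)) μ) :=
      (indepFun_iff_map_prod_eq_prod_map_map hVtmeas.aemeasurable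
        (hftmeas _).aemeasurable).mp hindep_t
    have hpair_u : Measure.map (fun ω => (Vu ω, fu (Fin.last n) ω)) μ
        = (Measure.map Vu μ).prod (Measure.map (fu (Fin.last n)) μ) :=
      (indepFun_iff_map_prod_eq_prod_map_map hVumeas.aemeasurable
        (hfumeas _).aemeasurable).mp hindep_u
    -- laws of pieces coincide
    have hlaw_V : Measure.map Vt μ = Measure.map Vu μ := by
      have := ih t ht ht0
      simpa [hVt, hVu, hu] using this
    have hlaw_Y : Measure.map (ft (Fin.last n)) μ = Measure.map (fu (Fin.last n)) μ := by
      have h0n : 0 ≤ t n := le_trans ht0 (ht (Nat.zero_le n))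
      have h1 : Measure.map (ft (Fin.last n)) μ = Measure.map (fun ω => X (t (n+1) - t n) ω) μ := by
        simpa [hft, Fin.last] using hstat (t n) (t (n + 1)) h0n (ht (Nat.le_succ n))
      have h0un : 0 ≤ u n := by simp [hu]; exact ht (Nat.zero_le n)
      have h2 : Measure.map (fu (Fin.last n)) μ
          = Measure.map (fun ω => X (u (n+1) - u n) ω) μ := by
        simpa [hfu, Fin.last] using hstat (u n) (u (n + 1)) h0un (humono (Nat.le_succ n))
      rw [h1, h2]
      have huv : u (n + 1) - u n = t (n + 1) - t n := by simp only [hu]; ring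
      rw [huv]
    -- recombination map
    set F : (Fin n → ℝ) × ℝ → Fin (n + 1) → ℝ := fun p =>
      Fin.snoc p.1 ((if h : 0 < n then p.1 ⟨n - 1, by omega⟩ else 0) + p.2) with hF
    have hFmeas : Measurable F := by
      refine measurable_pi_lambda _ (fun i => ?_)
      refine Fin.lastCases ?_ (fun i => ?_) i
      · simp only [hF, Fin.snoc_last]
        by_cases h : 0 < n
        · simp only [h, dif_pos]
          exact ((measurable_pi_apply _).comp measurable_fst).add measurable_snd
        · simp only [h, dif_neg, not_false_iff]
          exact measurable_const.add measurable_snd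
      · simp only [hF, Fin.snoc_castSucc]
        exact (measurable_pi_apply _).comp measurable_fst
    -- the (n+1)-vector is F of the pair
    have hdecomp_t : (fun ω (i : Fin (n + 1)) => X (t (i.1 + 1)) ω - X (t 0) ω)
        = F ∘ (fun ω => (Vt ω, ft (Fin.last n) ω)) := by
      funext ω
      funext i
      refine Fin.lastCases ?_ (fun i => ?_) i
      · simp only [Function.comp_apply, hF]
        rw [Fin.snoc_last]
        by_cases h : 0 < n
        · rw [dif_pos h]
          show X (t (n + 1)) ω - X (t 0) ω
            = (X (t ((n - 1) + 1)) ω - X (t 0) ω) + (X (t (n + 1)) ω - X (t n) ω)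
          rw [show n - 1 + 1 = n from by omega]
          ring
        · rw [dif_neg h]
          have hn0 : n = 0 := by omega
          subst hn0
          show X (t (0 + 1)) ω - X (t 0) ω = 0 + (X (t (0 + 1)) ω - X (t 0) ω)
          ring
      · simp only [Function.comp_apply, hF, Fin.snoc_castSucc, hVt, Fin.coe_castSucc]
    have hdecomp_u : (fun ω (i : Fin (n + 1)) => X (u (i.1 + 1)) ω - X (u 0) ω)
        = F ∘ (fun ω => (Vu ω, fu (Fin.last n) ω)) := by
      funext ω
      funext i
      refine Fin.lastCases ?_ (fun i => ?_) i
      · simp only [Function.comp_apply, hF]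
        rw [Fin.snoc_last]
        by_cases h : 0 < n
        · rw [dif_pos h]
          show X (u (n + 1)) ω - X (u 0) ω
            = (X (u ((n - 1) + 1)) ω - X (u 0) ω) + (X (u (n + 1)) ω - X (u n) ω)
          rw [show n - 1 + 1 = n from by omega]
          ring
        · rw [dif_neg h]
          have hn0 : n = 0 := by omega
          subst hn0
          show X (u (0 + 1)) ω - X (u 0) ω = 0 + (X (u (0 + 1)) ω - X (u 0) ω)
          ring
      · simp only [Function.comp_apply, hF, Fin.snoc_castSucc, hVu, Fin.coe_castSucc]
    have goal_eq : Measure.map (fun ω (i : Fin (n + 1)) => X (u (i.1 + 1)) ω - X (u 0) ω) μ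
        = Measure.map (fun ω (i : Fin (n+1)) => X (t (i.1 + 1) - t 0) ω - X (t 0 - t 0) ω) μ := by
      simp [hu]
    rw [← goal_eq, hdecomp_t, hdecomp_u,
      ← Measure.map_map hFmeas (hVtmeas.prodMk (hftmeas _)),
      ← Measure.map_map hFmeas (hVumeas.prodMk (hfumeas _)),
      hpair_t, hpair_u, hlaw_V, hlaw_Y]

/-- Transfer of a finite union event from base time `s` to base time `0`. -/
lemma event_transfer [IsProbabilityMeasure μ]
    (X : ℝ → Ω → ℝ) (hXmeas : ∀ t, Measurable (X t))
    (hX0 : ∀ᵐ ω ∂μ, X 0 ω = 0)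
    (hindep : ∀ (n : ℕ) (t : ℕ → ℝ), Monotone t →
      iIndepFun
        (fun i : Fin n => fun ω => X (t (i.val + 1)) ω - X (t i.val) ω) μ)
    (hstat : ∀ s t : ℝ, 0 ≤ s → s ≤ t →
      Measure.map (fun ω => X t ω - X s ω) μ = Measure.map (fun ω => X (t - s) ω) μ)
    (s K : ℝ) (hs : 0 ≤ s) (F : Finset ℚ) (hF : ∀ q ∈ F, s < (q : ℝ)) :
    μ {ω | ∃ q ∈ F, K * ((q : ℝ) - s) < (X (q : ℝ) ω - X s ω) ^ 2}
      = μ {ω | ∃ q ∈ F, K * ((q : ℝ) - s) < (X ((q : ℝ) - s) ω) ^ 2} := by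
  classical
  rcases F.eq_empty_or_nonempty with hFe | hFne
  · simp [hFe]
  have hm : 0 < F.card := Finset.card_pos.mpr hFne
  set m := F.card with hmdef
  set v : Fin m ≃o {x // x ∈ F} := F.orderIsoOfFin rfl with hv
  set t : ℕ → ℝ := fun i => if i = 0 then s else ((v ⟨min (i - 1) (m - 1), by omega⟩ : ℚ) : ℝ)
    with htdef
  have ht0 : t 0 = s := by simp [htdef]
  have hkey : ∀ i : Fin m, t (i.1 + 1) = ((v i : ℚ) : ℝ) := by
    intro i
    have h1 : i.1 + 1 ≠ 0 := by omega
    have h3 : (⟨min (i.1 + 1 - 1) (m - 1), by omega⟩ : Fin m) = i := by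
      apply Fin.ext
      show min (i.1 + 1 - 1) (m - 1) = i.1
      have := i.2
      omega
    simp only [htdef, h1, if_false]
    rw [h3]
  have htmono : Monotone t := by
    intro a b hab
    rcases Nat.eq_zero_or_pos a with rfl | ha
    · rcases Nat.eq_zero_or_pos b with rfl | hb
      · exact le_refl _
      · have hb0 : b ≠ 0 := by omega
        simp only [htdef, if_pos rfl, hb0, if_false]
        exact le_of_lt (hF _ (v _).2)
    · have ha0 : a ≠ 0 := by omega
      have hb0 : b ≠ 0 := by omega
      simp only [htdef, ha0, hb0, if_false]
      have hle : (⟨min (a - 1) (m - 1), by omega⟩ : Fin m)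
          ≤ (⟨min (b - 1) (m - 1), by omega⟩ : Fin m) := by
        show min (a - 1) (m - 1) ≤ min (b - 1) (m - 1)
        omega
      have := v.le_iff_le.mpr hle
      exact_mod_cast this
  -- the target set in vector space
  set A : Set (Fin m → ℝ) := {x | ∃ i : Fin m, K * (((v i : ℚ) : ℝ) - s) < (x i) ^ 2} with hA
  have hAmeas : MeasurableSet A := by
    have : A = ⋃ i : Fin m, {x : Fin m → ℝ | K * (((v i : ℚ) : ℝ) - s) < (x i) ^ 2} := by
      ext x; simp [hA]
    rw [this]
    exact MeasurableSet.iUnion (fun i => measurableSet_lt measurable_const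
      ((measurable_pi_apply i).pow_const 2))
  have hVec : Measurable (fun ω (i : Fin m) => X (t (i.1 + 1)) ω - X (t 0) ω) :=
    measurable_pi_lambda _ (fun i => (hXmeas _).sub (hXmeas _))
  have hVec' : Measurable (fun ω (i : Fin m) => X (t (i.1 + 1) - t 0) ω - X (t 0 - t 0) ω) :=
    measurable_pi_lambda _ (fun i => (hXmeas _).sub (hXmeas _))
  have hL : {ω | ∃ q ∈ F, K * ((q : ℝ) - s) < (X (q : ℝ) ω - X s ω) ^ 2}
      = (fun ω (i : Fin m) => X (t (i.1 + 1)) ω - X (t 0) ω) ⁻¹' A := by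
    ext ω
    simp only [Set.mem_setOf_eq, Set.mem_preimage, hA]
    constructor
    · rintro ⟨q, hqF, hq⟩
      refine ⟨v.symm ⟨q, hqF⟩, ?_⟩
      rw [hkey, ht0]
      simpa using hq
    · rintro ⟨i, hi⟩
      rw [hkey, ht0] at hi
      exact ⟨v i, (v i).2, hi⟩
  have hVec'_eq : (fun ω (i : Fin m) => X (t (i.1 + 1) - t 0) ω - X (t 0 - t 0) ω)
      = fun ω (i : Fin m) => X (((v i : ℚ) : ℝ) - s) ω - X 0 ω := by
    funext ω i
    rw [hkey, ht0, sub_self]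
  have hR' : (fun ω (i : Fin m) => X (t (i.1 + 1) - t 0) ω - X (t 0 - t 0) ω) ⁻¹' A
      = {ω | ∃ q ∈ F, K * ((q : ℝ) - s) < (X ((q : ℝ) - s) ω - X 0 ω) ^ 2} := by
    rw [hVec'_eq]
    ext ω
    simp only [Set.mem_setOf_eq, Set.mem_preimage, hA]
    constructor
    · rintro ⟨i, hi⟩
      exact ⟨v i, (v i).2, hi⟩
    · rintro ⟨q, hqF, hq⟩
      refine ⟨v.symm ⟨q, hqF⟩, ?_⟩
      simpa using hq
  have hae : {ω | ∃ q ∈ F, K * ((q : ℝ) - s) < (X ((q : ℝ) - s) ω - X 0 ω) ^ 2}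
      =ᵐ[μ] {ω | ∃ q ∈ F, K * ((q : ℝ) - s) < (X ((q : ℝ) - s) ω) ^ 2} := by
    refine Filter.eventuallyEq_set.mpr ?_
    filter_upwards [hX0] with ω h0
    simp [h0]
  calc μ {ω | ∃ q ∈ F, K * ((q : ℝ) - s) < (X (q : ℝ) ω - X s ω) ^ 2}
      = Measure.map (fun ω (i : Fin m) => X (t (i.1 + 1)) ω - X (t 0) ω) μ A := by
        rw [hL, Measure.map_apply hVec hAmeas]
    _ = Measure.map (fun ω (i : Fin m) => X (t (i.1 + 1) - t 0) ω - X (t 0 - t 0) ω) μ A := by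
        rw [vec_law X hXmeas hindep hstat m t htmono (ht0 ▸ hs)]
    _ = μ ((fun ω (i : Fin m) => X (t (i.1 + 1) - t 0) ω - X (t 0 - t 0) ω) ⁻¹' A) := by
        rw [Measure.map_apply hVec' hAmeas]
    _ = μ {ω | ∃ q ∈ F, K * ((q : ℝ) - s) < (X ((q : ℝ) - s) ω) ^ 2} := by
        rw [hR']
        exact measure_congr hae

/-- Pathwise: from the limsup property at `0` and right continuity, good rational
increments exist in any right neighbourhood. -/
lemma exists_rat_good (X : ℝ → Ω → ℝ) (ω : Ω)
    (hrcω : ∀ t, ContinuousWithinAt (fun u => X u ω) (Ici t) t)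
    (hlimω : ∀ M : ℝ, ∀ ε > (0 : ℝ), ∃ t : ℝ, 0 < t ∧ t < ε ∧ M < (X t ω) ^ 2 / t)
    (K s β : ℝ) (hsβ : s < β) :
    ∃ q : ℚ, s < (q : ℝ) ∧ (q : ℝ) < β ∧ K * ((q : ℝ) - s) < (X ((q : ℝ) - s) ω) ^ 2 := by
  obtain ⟨t, ht0, htδ, htM⟩ := hlimω (max K 0 + 1) (β - s) (by linarith)
  have htK : (max K 0 + 1) * t < (X t ω) ^ 2 := by
    rw [lt_div_iff₀ ht0] at htM
    linarith
  have hpos : 0 < (X t ω) ^ 2 - K * t := by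
    have : K * t ≤ (max K 0) * t := mul_le_mul_of_nonneg_right (le_max_left _ _) ht0.le
    nlinarith
  -- right continuity of `r ↦ (X r ω)^2 - K * r` at `t`
  have hcont : ContinuousWithinAt (fun r => (X r ω) ^ 2 - K * r) (Ici t) t :=
    ((hrcω t).pow 2).sub (continuousWithinAt_const.mul continuousWithinAt_id)
  have hev : ∀ᶠ r in nhdsWithin t (Ici t), 0 < (X r ω) ^ 2 - K * r :=
    hcont.eventually (eventually_gt_nhds hpos)
  obtain ⟨η, hη, hsub⟩ := Metric.mem_nhdsWithin_iff.mp hev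
  obtain ⟨q, hq1, hq2⟩ := exists_rat_btwn (show s + t < s + min (t + η) (β - s) by
    have := lt_min (by linarith : t < t + η) (by linarith : t < β - s)
    linarith)
  refine ⟨q, by linarith, ?_, ?_⟩
  · have : (q : ℝ) < s + (β - s) := lt_of_lt_of_le hq2 (by
      have := min_le_right (t + η) (β - s); linarith)
    linarith
  · have hr1 : t < (q : ℝ) - s := by linarith
    have hr2 : (q : ℝ) - s < t + η := by
      have := min_le_left (t + η) (β - s); linarith
    have hmem : ((q : ℝ) - s) ∈ Metric.ball t η ∩ Ici t := by
      constructor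
      · rw [Metric.mem_ball, Real.dist_eq, abs_sub_lt_iff]
        constructor <;> linarith
      · exact le_of_lt hr1
    have := hsub hmem
    simpa using this

/-- The increment event at a fixed base time `s ∈ [0,1)` has probability one. -/
lemma base_prob [IsProbabilityMeasure μ]
    (X : ℝ → Ω → ℝ) (hXmeas : ∀ t, Measurable (X t))
    (hX0 : ∀ᵐ ω ∂μ, X 0 ω = 0)
    (hrc : ∀ᵐ ω ∂μ, ∀ t, ContinuousWithinAt (fun u => X u ω) (Ici t) t)
    (hindep : ∀ (n : ℕ) (t : ℕ → ℝ), Monotone t →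
      iIndepFun
        (fun i : Fin n => fun ω => X (t (i.val + 1)) ω - X (t i.val) ω) μ)
    (hstat : ∀ s t : ℝ, 0 ≤ s → s ≤ t →
      Measure.map (fun ω => X t ω - X s ω) μ = Measure.map (fun ω => X (t - s) ω) μ)
    (hlimsup : ∀ᵐ ω ∂μ, ∀ M : ℝ, ∀ ε > (0 : ℝ), ∃ t : ℝ, 0 < t ∧ t < ε ∧
      M < (X t ω) ^ 2 / t)
    (s K δ : ℝ) (hs0 : 0 ≤ s) (hs1 : s < 1) (hδ : 0 < δ) :
    μ {ω | ∃ q : ℚ, s < (q : ℝ) ∧ (q : ℝ) < min (s + δ) 1 ∧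
      K * ((q : ℝ) - s) < (X (q : ℝ) ω - X s ω) ^ 2} = 1 := by
  classical
  set β : ℝ := min (s + δ) 1 with hβ
  have hsβ : s < β := lt_min (by linarith) hs1
  set S : Set ℚ := {q : ℚ | s < (q : ℝ) ∧ (q : ℝ) < β} with hSdef
  have hSne : S.Nonempty := by
    obtain ⟨q, hq1, hq2⟩ := exists_rat_btwn hsβ
    exact ⟨q, hq1, hq2⟩
  obtain ⟨e, he⟩ := Set.Countable.exists_eq_range (Set.to_countable S) hSne
  set Fn : ℕ → Finset ℚ := fun n => (Finset.range (n + 1)).image e with hFn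
  have heS : ∀ i, e i ∈ S := fun i => he ▸ Set.mem_range_self i
  have hFnS : ∀ n, ∀ q ∈ Fn n, q ∈ S := by
    intro n q hq
    obtain ⟨i, _, rfl⟩ := Finset.mem_image.mp hq
    exact heS i
  set E : ℕ → Set Ω := fun n =>
    {ω | ∃ q ∈ Fn n, K * ((q : ℝ) - s) < (X (q : ℝ) ω - X s ω) ^ 2} with hE
  set E' : ℕ → Set Ω := fun n =>
    {ω | ∃ q ∈ Fn n, K * ((q : ℝ) - s) < (X ((q : ℝ) - s) ω) ^ 2} with hE'
  have hEmeas : ∀ n, MeasurableSet (E n) := by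
    intro n
    have : E n = ⋃ q ∈ Fn n, {ω | K * ((q : ℝ) - s) < (X (q : ℝ) ω - X s ω) ^ 2} := by
      ext ω; simp [hE]
    rw [this]
    exact MeasurableSet.biUnion (Fn n).countable_toSet (fun q _ =>
      measurableSet_lt measurable_const (((hXmeas _).sub (hXmeas _)).pow_const 2))
  have hE'meas : ∀ n, MeasurableSet (E' n) := by
    intro n
    have : E' n = ⋃ q ∈ Fn n, {ω | K * ((q : ℝ) - s) < (X ((q : ℝ) - s) ω) ^ 2} := by
      ext ω; simp [hE']
    rw [this]
    exact MeasurableSet.biUnion (Fn n).countable_toSet (fun q _ =>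
      measurableSet_lt measurable_const ((hXmeas _).pow_const 2))
  have hEmono : Monotone E := by
    intro a b hab ω hω
    obtain ⟨q, hq, h⟩ := hω
    refine ⟨q, ?_, h⟩
    obtain ⟨i, hi, rfl⟩ := Finset.mem_image.mp hq
    exact Finset.mem_image.mpr ⟨i, Finset.mem_range.mpr
      (lt_of_lt_of_le (Finset.mem_range.mp hi) (by omega)), rfl⟩
  have hE'mono : Monotone E' := by
    intro a b hab ω hω
    obtain ⟨q, hq, h⟩ := hω
    refine ⟨q, ?_, h⟩
    obtain ⟨i, hi, rfl⟩ := Finset.mem_image.mp hq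
    exact Finset.mem_image.mpr ⟨i, Finset.mem_range.mpr
      (lt_of_lt_of_le (Finset.mem_range.mp hi) (by omega)), rfl⟩
  have htransfer : ∀ n, μ (E n) = μ (E' n) := by
    intro n
    exact event_transfer X hXmeas hX0 hindep hstat s K hs0 (Fn n)
      (fun q hq => (hFnS n q hq).1)
  -- the union of the `E'` events has full measure
  have hE'union : μ (⋃ n, E' n) = 1 := by
    refine le_antisymm prob_le_one ?_
    have hfull : ∀ᵐ ω ∂μ, ω ∈ ⋃ n, E' n := by
      filter_upwards [hrc, hlimsup] with ω hrcω hlimω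
      obtain ⟨q, hq1, hq2, hq3⟩ := exists_rat_good X ω hrcω hlimω K s β hsβ
      have hqS : q ∈ S := ⟨hq1, hq2⟩
      obtain ⟨i, hi⟩ := (he ▸ hqS : q ∈ Set.range e)
      refine Set.mem_iUnion.mpr ⟨i, ?_⟩
      exact ⟨q, Finset.mem_image.mpr ⟨i, Finset.mem_range.mpr (by omega), hi⟩, hq3⟩
    have hnull : μ {ω | ω ∉ ⋃ n, E' n} = 0 := by
      rw [← MeasureTheory.ae_iff]
      exact hfull
    have hsplit : (Set.univ : Set Ω) ⊆ (⋃ n, E' n) ∪ {ω | ω ∉ ⋃ n, E' n} := by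
      intro ω _
      by_cases h : ω ∈ ⋃ n, E' n
      · exact Or.inl h
      · exact Or.inr h
    calc (1 : ENNReal) = μ Set.univ := by simp
    _ ≤ μ ((⋃ n, E' n) ∪ {ω | ω ∉ ⋃ n, E' n}) := measure_mono hsplit
    _ ≤ μ (⋃ n, E' n) + μ {ω | ω ∉ ⋃ n, E' n} := measure_union_le _ _
    _ = μ (⋃ n, E' n) := by rw [hnull, add_zero]
  -- conclude
  have hEunion : μ (⋃ n, E n) = ⨆ n, μ (E n) := hEmono.measure_iUnion
  have hE'union' : μ (⋃ n, E' n) = ⨆ n, μ (E' n) := hE'mono.measure_iUnion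
  have hfinal : μ (⋃ n, E n) = 1 := by
    rw [hEunion]
    rw [hE'union'] at hE'union
    rw [← hE'union]
    congr 1
    funext n
    exact htransfer n
  have : {ω | ∃ q : ℚ, s < (q : ℝ) ∧ (q : ℝ) < β ∧
      K * ((q : ℝ) - s) < (X (q : ℝ) ω - X s ω) ^ 2} = ⋃ n, E n := by
    ext ω
    simp only [Set.mem_setOf_eq, Set.mem_iUnion, hE]
    constructor
    · rintro ⟨q, hq1, hq2, hq3⟩
      obtain ⟨i, hi⟩ := (he ▸ (⟨hq1, hq2⟩ : q ∈ S) : q ∈ Set.range e)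
      exact ⟨i, q, Finset.mem_image.mpr ⟨i, Finset.mem_range.mpr (by omega), hi⟩, hq3⟩
    · rintro ⟨n, q, hq, h3⟩
      have := hFnS n q hq
      exact ⟨q, this.1, this.2, h3⟩
  rw [this, hfinal]

/-- The two-rational good event at a fixed base time has probability one. -/
lemma good_ae [IsProbabilityMeasure μ]
    (X : ℝ → Ω → ℝ) (hXmeas : ∀ t, Measurable (X t))
    (hX0 : ∀ᵐ ω ∂μ, X 0 ω = 0)
    (hrc : ∀ᵐ ω ∂μ, ∀ t, ContinuousWithinAt (fun u => X u ω) (Ici t) t)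
    (hindep : ∀ (n : ℕ) (t : ℕ → ℝ), Monotone t →
      iIndepFun
        (fun i : Fin n => fun ω => X (t (i.val + 1)) ω - X (t i.val) ω) μ)
    (hstat : ∀ s t : ℝ, 0 ≤ s → s ≤ t →
      Measure.map (fun ω => X t ω - X s ω) μ = Measure.map (fun ω => X (t - s) ω) μ)
    (hlimsup : ∀ᵐ ω ∂μ, ∀ M : ℝ, ∀ ε > (0 : ℝ), ∃ t : ℝ, 0 < t ∧ t < ε ∧
      M < (X t ω) ^ 2 / t)
    (s : ℝ) (hs0 : 0 ≤ s) (hs1 : s < 1) :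
    ∀ᵐ ω ∂μ, ∀ K n : ℕ, ∃ q q' : ℚ, s < (q' : ℝ) ∧ (q' : ℝ) < (q : ℝ) ∧
      (q : ℝ) < min (s + ((n : ℝ) + 1)⁻¹) 1 ∧
      (K : ℝ) * ((q : ℝ) - s) < (X (q : ℝ) ω - X (q' : ℝ) ω) ^ 2 := by
  rw [ae_all_iff]
  intro K
  rw [ae_all_iff]
  intro n
  set δ : ℝ := ((n : ℝ) + 1)⁻¹ with hδdef
  have hδ : 0 < δ := by positivity
  have hbase := base_prob X hXmeas hX0 hrc hindep hstat hlimsup s ((K : ℝ) + 1) δ hs0 hs1 hδ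
  have hbmeas : MeasurableSet {ω | ∃ q : ℚ, s < (q : ℝ) ∧ (q : ℝ) < min (s + δ) 1 ∧
      ((K : ℝ) + 1) * ((q : ℝ) - s) < (X (q : ℝ) ω - X s ω) ^ 2} := by
    have : {ω | ∃ q : ℚ, s < (q : ℝ) ∧ (q : ℝ) < min (s + δ) 1 ∧
        ((K : ℝ) + 1) * ((q : ℝ) - s) < (X (q : ℝ) ω - X s ω) ^ 2}
        = ⋃ q : ℚ, {ω | s < (q : ℝ) ∧ (q : ℝ) < min (s + δ) 1 ∧
          ((K : ℝ) + 1) * ((q : ℝ) - s) < (X (q : ℝ) ω - X s ω) ^ 2} := by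
      ext ω; simp
    rw [this]
    refine MeasurableSet.iUnion (fun q => ?_)
    by_cases h : s < (q : ℝ) ∧ (q : ℝ) < min (s + δ) 1
    · simp only [h.1, h.2, true_and]
      exact measurableSet_lt measurable_const (((hXmeas _).sub (hXmeas _)).pow_const 2)
    · have : {ω : Ω | s < (q : ℝ) ∧ (q : ℝ) < min (s + δ) 1 ∧
          ((K : ℝ) + 1) * ((q : ℝ) - s) < (X (q : ℝ) ω - X s ω) ^ 2} = ∅ := by
        ext ω; simp only [Set.mem_setOf_eq, Set.mem_empty_iff_false, iff_false]
        intro hc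
        exact h ⟨hc.1, hc.2.1⟩
      rw [this]
      exact MeasurableSet.empty
  have hbae : ∀ᵐ ω ∂μ, ∃ q : ℚ, s < (q : ℝ) ∧ (q : ℝ) < min (s + δ) 1 ∧
      ((K : ℝ) + 1) * ((q : ℝ) - s) < (X (q : ℝ) ω - X s ω) ^ 2 := by
    rw [ae_iff]
    have : {ω | ¬ ∃ q : ℚ, s < (q : ℝ) ∧ (q : ℝ) < min (s + δ) 1 ∧
        ((K : ℝ) + 1) * ((q : ℝ) - s) < (X (q : ℝ) ω - X s ω) ^ 2}
        = {ω | ∃ q : ℚ, s < (q : ℝ) ∧ (q : ℝ) < min (s + δ) 1 ∧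
        ((K : ℝ) + 1) * ((q : ℝ) - s) < (X (q : ℝ) ω - X s ω) ^ 2}ᶜ := rfl
    rw [this, measure_compl hbmeas (by simp), hbase]
    simp
  filter_upwards [hbae, hrc] with ω hb hrcω
  obtain ⟨q, hq1, hq2, hq3⟩ := hb
  have hqs : 0 < (q : ℝ) - s := by linarith
  have hval : (K : ℝ) * ((q : ℝ) - s) < (X (q : ℝ) ω - X s ω) ^ 2 := by nlinarith
  have hcont : ContinuousWithinAt (fun u => (X (q : ℝ) ω - X u ω) ^ 2) (Ici s) s :=
    (continuousWithinAt_const.sub (hrcω s)).pow 2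
  have hev : ∀ᶠ u in nhdsWithin s (Ici s),
      (K : ℝ) * ((q : ℝ) - s) < (X (q : ℝ) ω - X u ω) ^ 2 :=
    hcont.eventually (eventually_gt_nhds hval)
  obtain ⟨η, hη, hsub⟩ := Metric.mem_nhdsWithin_iff.mp hev
  obtain ⟨q', hq'1, hq'2⟩ := exists_rat_btwn (show s < min (s + η) (q : ℝ) by
    exact lt_min (by linarith) hq1)
  have hq'q : (q' : ℝ) < (q : ℝ) := lt_of_lt_of_le hq'2 (min_le_right _ _)
  have hq'mem : ((q' : ℝ)) ∈ Metric.ball s η ∩ Ici s := by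
    constructor
    · rw [Metric.mem_ball, Real.dist_eq, abs_sub_lt_iff]
      have : (q' : ℝ) < s + η := lt_of_lt_of_le hq'2 (min_le_left _ _)
      constructor <;> linarith
    · exact le_of_lt hq'1
  exact ⟨q, q', hq'1, hq'q, hq2, hsub hq'mem⟩

/-- Fubini step: almost surely, almost every `s ∈ [0,1)` is a good base point. -/
lemma fubini_good [IsProbabilityMeasure μ]
    (X : ℝ → Ω → ℝ) (hXmeas : ∀ t, Measurable (X t))
    (hX0 : ∀ᵐ ω ∂μ, X 0 ω = 0)
    (hrc : ∀ᵐ ω ∂μ, ∀ t, ContinuousWithinAt (fun u => X u ω) (Ici t) t)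
    (hindep : ∀ (n : ℕ) (t : ℕ → ℝ), Monotone t →
      iIndepFun
        (fun i : Fin n => fun ω => X (t (i.val + 1)) ω - X (t i.val) ω) μ)
    (hstat : ∀ s t : ℝ, 0 ≤ s → s ≤ t →
      Measure.map (fun ω => X t ω - X s ω) μ = Measure.map (fun ω => X (t - s) ω) μ)
    (hlimsup : ∀ᵐ ω ∂μ, ∀ M : ℝ, ∀ ε > (0 : ℝ), ∃ t : ℝ, 0 < t ∧ t < ε ∧
      M < (X t ω) ^ 2 / t) :
    ∀ᵐ ω ∂μ, ∀ᵐ s ∂(volume.restrict (Ico (0 : ℝ) 1)), ∀ K n : ℕ, ∃ q q' : ℚ,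
      s < (q' : ℝ) ∧ (q' : ℝ) < (q : ℝ) ∧ (q : ℝ) < min (s + ((n : ℝ) + 1)⁻¹) 1 ∧
      (K : ℝ) * ((q : ℝ) - s) < (X (q : ℝ) ω - X (q' : ℝ) ω) ^ 2 := by
  classical
  set ν : Measure ℝ := volume.restrict (Ico (0 : ℝ) 1) with hν
  set W : Set (Ω × ℝ) := {p | ∀ K n : ℕ, ∃ q q' : ℚ,
      p.2 < (q' : ℝ) ∧ (q' : ℝ) < (q : ℝ) ∧ (q : ℝ) < min (p.2 + ((n : ℝ) + 1)⁻¹) 1 ∧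
      (K : ℝ) * ((q : ℝ) - p.2) < (X (q : ℝ) p.1 - X (q' : ℝ) p.1) ^ 2} with hW
  have hWmeas : MeasurableSet W := by
    have : W = ⋂ K : ℕ, ⋂ n : ℕ, ⋃ q : ℚ, ⋃ q' : ℚ,
        ({p : Ω × ℝ | p.2 < (q' : ℝ)} ∩ {p : Ω × ℝ | (q' : ℝ) < (q : ℝ)}
          ∩ {p : Ω × ℝ | (q : ℝ) < min (p.2 + ((n : ℝ) + 1)⁻¹) 1}
          ∩ {p : Ω × ℝ | (K : ℝ) * ((q : ℝ) - p.2) < (X (q : ℝ) p.1 - X (q' : ℝ) p.1) ^ 2}) := by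
      ext p
      simp only [hW, Set.mem_setOf_eq, Set.mem_iInter, Set.mem_iUnion, Set.mem_inter_iff]
      constructor
      · intro h K n
        obtain ⟨q, q', h1, h2, h3, h4⟩ := h K n
        exact ⟨q, q', ⟨⟨h1, h2⟩, h3⟩, h4⟩
      · intro h K n
        obtain ⟨q, q', ⟨⟨h1, h2⟩, h3⟩, h4⟩ := h K n
        exact ⟨q, q', h1, h2, h3, h4⟩
    rw [this]
    refine MeasurableSet.iInter (fun K => MeasurableSet.iInter (fun n =>
      MeasurableSet.iUnion (fun q => MeasurableSet.iUnion (fun q' => ?_))))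
    refine MeasurableSet.inter (MeasurableSet.inter (MeasurableSet.inter ?_ ?_) ?_) ?_
    · exact measurable_snd measurableSet_Iio
    · by_cases h : (q' : ℝ) < (q : ℝ) <;> simp [h]
    · have : Measurable (fun p : Ω × ℝ => min (p.2 + ((n : ℝ) + 1)⁻¹) 1) :=
        (measurable_snd.add_const _).min measurable_const
      exact measurableSet_lt measurable_const this
    · refine measurableSet_lt ?_ ?_
      · exact (measurable_const.sub measurable_snd).const_mul _
      · exact (((hXmeas _).sub (hXmeas _)).pow_const 2).comp measurable_fst
  have hsec : ∀ s ∈ Ico (0 : ℝ) 1, μ ((fun ω => (ω, s)) ⁻¹' Wᶜ) = 0 := by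
    intro s hs
    have hae := good_ae X hXmeas hX0 hrc hindep hstat hlimsup s hs.1 hs.2
    rw [ae_iff] at hae
    convert hae using 2
    rfl
  have hprod : (μ.prod ν) Wᶜ = 0 := by
    rw [Measure.prod_apply_symm hWmeas.compl]
    have hz : (fun s => μ ((fun ω => (ω, s)) ⁻¹' Wᶜ)) =ᵐ[ν] (fun _ => 0) := by
      have hmem : ∀ᵐ s ∂ν, s ∈ Ico (0 : ℝ) 1 := by
        rw [hν]
        exact ae_restrict_mem measurableSet_Ico
      filter_upwards [hmem] with s hs
      exact hsec s hs
    rw [lintegral_congr_ae hz]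
    simp
  have hae_prod : ∀ᵐ p ∂(μ.prod ν), p ∈ W := by
    rw [ae_iff]
    convert hprod using 2
    rfl
  have := Measure.ae_ae_of_ae_prod hae_prod
  filter_upwards [this] with ω hω
  filter_upwards [hω] with s hs
  exact hs

/-- From finitely many disjoint marked intervals in `[0,E]` one can build a partition of `[0,E]`
whose squared-increment sum dominates the marked contributions. -/
lemma partition_lemma (Y : ℝ → ℝ) :
    ∀ (m : ℕ) (fs : Finset (ℝ × ℚ × ℚ)), fs.card = m → ∀ (E : ℝ), 0 ≤ E →
    (∀ b ∈ fs, 0 ≤ b.1 ∧ b.1 < ((b.2.1 : ℚ) : ℝ) ∧ ((b.2.1 : ℚ) : ℝ) < ((b.2.2 : ℚ) : ℝ)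
      ∧ ((b.2.2 : ℚ) : ℝ) ≤ E) →
    (∀ b ∈ fs, ∀ b' ∈ fs, b ≠ b' → ((b.2.2 : ℚ) : ℝ) < b'.1 ∨ ((b'.2.2 : ℚ) : ℝ) < b.1) →
    ∃ (n : ℕ) (u : ℕ → ℝ), Monotone u ∧ u 0 = 0 ∧ u n = E ∧
      ∑ b ∈ fs, (Y ((b.2.2 : ℚ) : ℝ) - Y ((b.2.1 : ℚ) : ℝ)) ^ 2
        ≤ ∑ i ∈ Finset.range n, (Y (u (i + 1)) - Y (u i)) ^ 2 := by
  intro m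
  induction m with
  | zero =>
    intro fs hcard E hE _ _
    have hfs : fs = ∅ := Finset.card_eq_zero.mp hcard
    subst hfs
    refine ⟨1, fun i => if i = 0 then 0 else E, ?_, by simp, by simp, ?_⟩
    · refine monotone_nat_of_le_succ (fun i => ?_)
      rcases Nat.eq_zero_or_pos i with rfl | hi
      · simpa using hE
      · have h1 : i ≠ 0 := by omega
        have h2 : i + 1 ≠ 0 := by omega
        simp [h1, h2]
    · simp only [Finset.sum_empty, Finset.range_one, Finset.sum_singleton]
      positivity
  | succ m ih =>
    intro fs hcard E hE hcond hdisj
    have hne : fs.Nonempty := by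
      rw [← Finset.card_pos, hcard]; omega
    obtain ⟨b₀, hb₀, hmax⟩ := Finset.exists_max_image fs (fun b => ((b.2.2 : ℚ) : ℝ)) hne
    set fs' := fs.erase b₀ with hfs'
    have hcard' : fs'.card = m := by
      rw [hfs', Finset.card_erase_of_mem hb₀, hcard]
      omega
    have hb₀c := hcond b₀ hb₀
    have hupper : ∀ b ∈ fs', ((b.2.2 : ℚ) : ℝ) ≤ b₀.1 := by
      intro b hb
      have hbfs : b ∈ fs := Finset.mem_of_mem_erase hb
      have hbne : b ≠ b₀ := Finset.ne_of_mem_erase hb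
      rcases hdisj b hbfs b₀ hb₀ hbne with h | h
      · exact le_of_lt h
      · exfalso
        have h1 := (hcond b hbfs).2.1
        have h2 := (hcond b hbfs).2.2.1
        have h3 := hmax b hbfs
        linarith
    obtain ⟨n, u, humono, hu0, hun, hsum⟩ := ih fs' hcard' b₀.1 hb₀c.1
      (fun b hb => by
        have h := hcond b (Finset.mem_of_mem_erase hb)
        exact ⟨h.1, h.2.1, h.2.2.1, hupper b hb⟩)
      (fun b hb b' hb' hne' =>
        hdisj b (Finset.mem_of_mem_erase hb) b' (Finset.mem_of_mem_erase hb') hne')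
    set u' : ℕ → ℝ := fun i => if i ≤ n then u i else if i = n + 1 then ((b₀.2.1 : ℚ) : ℝ)
      else if i = n + 2 then ((b₀.2.2 : ℚ) : ℝ) else E with hu'
    have hu'eq : ∀ i ≤ n, u' i = u i := by
      intro i hi; simp [hu', hi]
    have hu'n1 : u' (n + 1) = ((b₀.2.1 : ℚ) : ℝ) := by simp [hu']
    have hu'n2 : u' (n + 2) = ((b₀.2.2 : ℚ) : ℝ) := by
      have h1 : ¬ (n + 2 ≤ n) := by omega
      have h2 : n + 2 ≠ n + 1 := by omega
      simp [hu', h1, h2]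
    have hu'n3 : u' (n + 3) = E := by
      have h1 : ¬ (n + 3 ≤ n) := by omega
      have h2 : n + 3 ≠ n + 1 := by omega
      have h3 : n + 3 ≠ n + 2 := by omega
      simp [hu', h1, h2, h3]
    have hmono' : Monotone u' := by
      refine monotone_nat_of_le_succ (fun i => ?_)
      rcases lt_trichotomy i n with hi | rfl | hi
      · rw [hu'eq i (by omega), hu'eq (i + 1) (by omega)]
        exact humono (by omega)
      · rw [hu'eq i le_rfl, hu'n1, hun]
        exact le_of_lt hb₀c.2.1
      · rcases Nat.lt_or_ge i (n + 2) with h2 | h2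
        · have : i = n + 1 := by omega
          subst this
          rw [hu'n1, hu'n2]
          exact le_of_lt hb₀c.2.2.1
        · rcases Nat.lt_or_ge i (n + 3) with h3 | h3
          · have : i = n + 2 := by omega
            subst this
            rw [hu'n2, hu'n3]
            exact hb₀c.2.2.2
          · have ha : ¬ (i ≤ n) := by omega
            have hb : i ≠ n + 1 := by omega
            have hc : i ≠ n + 2 := by omega
            have ha' : ¬ (i + 1 ≤ n) := by omega
            have hb' : i + 1 ≠ n + 1 := by omega
            have hc' : i + 1 ≠ n + 2 := by omega
            simp [hu', ha, hb, hc, ha', hb', hc', show i ≠ n by omega]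
    refine ⟨n + 3, u', hmono', by rw [hu'eq 0 (by omega), hu0], hu'n3, ?_⟩
    have hsplit : ∑ b ∈ fs, (Y ((b.2.2 : ℚ) : ℝ) - Y ((b.2.1 : ℚ) : ℝ)) ^ 2
        = ∑ b ∈ fs', (Y ((b.2.2 : ℚ) : ℝ) - Y ((b.2.1 : ℚ) : ℝ)) ^ 2
          + (Y ((b₀.2.2 : ℚ) : ℝ) - Y ((b₀.2.1 : ℚ) : ℝ)) ^ 2 := by
      rw [hfs', Finset.sum_erase_add _ _ hb₀]
    have hrange : ∑ i ∈ Finset.range (n + 3), (Y (u' (i + 1)) - Y (u' i)) ^ 2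
        = ∑ i ∈ Finset.range n, (Y (u' (i + 1)) - Y (u' i)) ^ 2
          + (Y (u' (n + 1)) - Y (u' n)) ^ 2 + (Y (u' (n + 2)) - Y (u' (n + 1))) ^ 2
          + (Y (u' (n + 3)) - Y (u' (n + 2))) ^ 2 := by
      rw [Finset.sum_range_succ, Finset.sum_range_succ, Finset.sum_range_succ]
    have hagree : ∑ i ∈ Finset.range n, (Y (u' (i + 1)) - Y (u' i)) ^ 2
        = ∑ i ∈ Finset.range n, (Y (u (i + 1)) - Y (u i)) ^ 2 := by
      refine Finset.sum_congr rfl (fun i hi => ?_)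
      have hi' := Finset.mem_range.mp hi
      rw [hu'eq i (by omega), hu'eq (i + 1) (by omega)]
    rw [hsplit, hrange, hagree, hu'n1, hu'n2, hu'n3]
    have e1 : 0 ≤ (Y ((b₀.2.1 : ℚ) : ℝ) - Y (u' n)) ^ 2 := sq_nonneg _
    have e2 : 0 ≤ (Y E - Y ((b₀.2.2 : ℚ) : ℝ)) ^ 2 := sq_nonneg _
    linarith

end Aux


/-- Let `X` be a real-valued process with càdlàg paths, stationary
independent increments and `X₀ = 0`, such that almost surely
`limsup_{t→0} t⁻¹ X_t² = ∞`.  Then almost surely `X` has infinite `2`-variation on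
`[0,1]`: the partition sums of squared increments are unbounded. -/
theorem infinite_two_variation {Ω : Type*} [MeasurableSpace Ω]
    (μ : Measure Ω) [IsProbabilityMeasure μ]
    (X : ℝ → Ω → ℝ) (hXmeas : ∀ t, Measurable (X t))
    (hX0 : ∀ᵐ ω ∂μ, X 0 ω = 0)
    (hrc : ∀ᵐ ω ∂μ, ∀ t, ContinuousWithinAt (fun u => X u ω) (Ici t) t)
    (hindep : ∀ (n : ℕ) (t : ℕ → ℝ), Monotone t →
      iIndepFun
        (fun i : Fin n => fun ω => X (t (i.val + 1)) ω - X (t i.val) ω) μ)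
    (hstat : ∀ s t : ℝ, 0 ≤ s → s ≤ t →
      Measure.map (fun ω => X t ω - X s ω) μ = Measure.map (fun ω => X (t - s) ω) μ)
    (hlimsup : ∀ᵐ ω ∂μ, ∀ M : ℝ, ∀ ε > (0 : ℝ), ∃ t : ℝ, 0 < t ∧ t < ε ∧
      M < (X t ω) ^ 2 / t) :
    ∀ᵐ ω ∂μ, ∀ M : ℝ, ∃ (n : ℕ) (u : ℕ → ℝ), Monotone u ∧ u 0 = 0 ∧ u n = 1 ∧
      M < ∑ i ∈ Finset.range n, (X (u (i + 1)) ω - X (u i) ω) ^ 2 := by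
  classical
  filter_upwards [fubini_good X hXmeas hX0 hrc hindep hstat hlimsup] with ω hω
  intro M
  set K : ℕ := 8 * (⌈M⌉₊ + 1) with hK
  set A : Set ℝ := {s | ∀ Kk n : ℕ, ∃ q q' : ℚ, s < (q' : ℝ) ∧ (q' : ℝ) < (q : ℝ) ∧
      (q : ℝ) < min (s + ((n : ℝ) + 1)⁻¹) 1 ∧
      (Kk : ℝ) * ((q : ℝ) - s) < (X (q : ℝ) ω - X (q' : ℝ) ω) ^ 2} with hA
  -- the family of good intervals
  set x : ℝ × ℚ × ℚ → ℝ := fun b => (b.1 + ((b.2.2 : ℚ) : ℝ)) / 2 with hx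
  set r : ℝ × ℚ × ℚ → ℝ := fun b => (((b.2.2 : ℚ) : ℝ) - b.1) / 2 with hr
  set tset : Set (ℝ × ℚ × ℚ) := {b | b.1 ∈ A ∧ b.1 ∈ Ico (0 : ℝ) 1 ∧ b.1 < ((b.2.1 : ℚ) : ℝ) ∧
      ((b.2.1 : ℚ) : ℝ) < ((b.2.2 : ℚ) : ℝ) ∧ ((b.2.2 : ℚ) : ℝ) ≤ 1 ∧
      (K : ℝ) * (((b.2.2 : ℚ) : ℝ) - b.1)
        < (X ((b.2.2 : ℚ) : ℝ) ω - X ((b.2.1 : ℚ) : ℝ) ω) ^ 2} with htset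
  have hball : ∀ b : ℝ × ℚ × ℚ, Metric.closedBall (x b) (r b) = Icc b.1 ((b.2.2 : ℚ) : ℝ) := by
    intro b
    rw [Real.closedBall_eq_Icc]
    have e1 : x b - r b = b.1 := by simp only [hx, hr]; ring
    have e2 : x b + r b = ((b.2.2 : ℚ) : ℝ) := by simp only [hx, hr]; ring
    rw [e1, e2]
  have hrle : ∀ b ∈ tset, r b ≤ 1 := by
    intro b hb
    have h0 : (0 : ℝ) ≤ b.1 := hb.2.1.1
    have h1 : ((b.2.2 : ℚ) : ℝ) ≤ 1 := hb.2.2.2.2.1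
    simp only [hr]
    linarith
  obtain ⟨u, hut, hdisj, hcover⟩ :=
    Vitali.exists_disjoint_subfamily_covering_enlargement_closedBall tset x r 1 hrle 4
      (by norm_num)
  -- countability of the disjoint family
  have hucount : u.Countable := by
    refine Set.countable_of_injective_of_countable_image
      (f := fun b : ℝ × ℚ × ℚ => b.2) ?_ (Set.to_countable _)
    intro b hb b' hb' hbb'
    by_contra hne
    have hd := hdisj hb hb' hne
    have hbb2 : b.2 = b'.2 := hbb'
    have h21 : b.2.1 = b'.2.1 := by rw [hbb2]
    have h22 : b.2.2 = b'.2.2 := by rw [hbb2]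
    have hmem1 : ((b.2.1 : ℚ) : ℝ) ∈ Metric.closedBall (x b) (r b) := by
      rw [hball]
      have h := hut hb
      exact ⟨le_of_lt h.2.2.1, le_of_lt h.2.2.2.1⟩
    have hmem2 : ((b.2.1 : ℚ) : ℝ) ∈ Metric.closedBall (x b') (r b') := by
      rw [hball]
      have h := hut hb'
      rw [h21]
      exact ⟨le_of_lt h.2.2.1, le_of_lt h.2.2.2.1⟩
    exact Set.disjoint_left.mp hd hmem1 hmem2
  -- every good point is covered by the enlarged balls
  have hAsub : A ∩ Ico (0 : ℝ) 1 ⊆ ⋃ b ∈ u, Metric.closedBall (x b) (4 * r b) := by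
    intro s₀ hs₀
    obtain ⟨q, q', h1, h2, h3, h4⟩ := hs₀.1 K 0
    have hq1 : (q : ℝ) ≤ 1 := by
      have := (lt_min_iff.mp h3).2
      linarith
    have hb : (s₀, q', q) ∈ tset := ⟨hs₀.1, hs₀.2, h1, h2, hq1, h4⟩
    obtain ⟨b, hbu, hsub⟩ := hcover _ hb
    refine Set.mem_biUnion hbu (hsub ?_)
    rw [hball]
    exact ⟨le_refl s₀, le_of_lt (lt_trans h1 h2)⟩
  -- measure estimate
  have hA1 : (1 : ENNReal) ≤ volume (A ∩ Ico (0 : ℝ) 1) := by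
    have hbad : volume.restrict (Ico (0 : ℝ) 1) {s | ¬ s ∈ A} = 0 := ae_iff.mp hω
    have huniv : volume.restrict (Ico (0 : ℝ) 1) Set.univ = 1 := by
      rw [Measure.restrict_apply' measurableSet_Ico]
      simp
    have hsub : (Set.univ : Set ℝ) ⊆ A ∪ {s | ¬ s ∈ A} := by
      intro s _
      by_cases h : s ∈ A
      · exact Or.inl h
      · exact Or.inr h
    have hres : (1 : ENNReal) ≤ volume.restrict (Ico (0 : ℝ) 1) A := by
      calc (1 : ENNReal) = volume.restrict (Ico (0 : ℝ) 1) Set.univ := huniv.symm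
      _ ≤ volume.restrict (Ico (0 : ℝ) 1) (A ∪ {s | ¬ s ∈ A}) := measure_mono hsub
      _ ≤ volume.restrict (Ico (0 : ℝ) 1) A + volume.restrict (Ico (0 : ℝ) 1) {s | ¬ s ∈ A} :=
          measure_union_le _ _
      _ = volume.restrict (Ico (0 : ℝ) 1) A := by rw [hbad, add_zero]
    rwa [Measure.restrict_apply' measurableSet_Ico] at hres
  have hvol : ∀ b : ℝ × ℚ × ℚ, volume (Metric.closedBall (x b) (4 * r b))
      = ENNReal.ofReal (4 * (((b.2.2 : ℚ) : ℝ) - b.1)) := by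
    intro b
    rw [Real.volume_closedBall]
    congr 1
    simp only [hr]
    ring
  have htsum : (1 : ENNReal) ≤ ∑' (b : ↥u),
      ENNReal.ofReal (4 * (((b.1.2.2 : ℚ) : ℝ) - b.1.1)) := by
    refine le_trans hA1 (le_trans (measure_mono hAsub) ?_)
    refine le_trans (measure_biUnion_le volume hucount _) (le_of_eq ?_)
    exact tsum_congr (fun b => hvol b.1)
  -- extract a finite subfamily
  have hhalf : (1 / 2 : ENNReal) < ⨆ fs : Finset ↥u, ∑ b ∈ fs,
      ENNReal.ofReal (4 * (((b.1.2.2 : ℚ) : ℝ) - b.1.1)) := by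
    rw [← ENNReal.tsum_eq_iSup_sum]
    exact lt_of_lt_of_le (by norm_num) htsum
  obtain ⟨fs, hfs⟩ := lt_iSup_iff.mp hhalf
  set fs' : Finset (ℝ × ℚ × ℚ) := fs.image Subtype.val with hfs'
  have hmemu : ∀ b ∈ fs', b ∈ u := by
    intro b hb
    obtain ⟨c, _, rfl⟩ := Finset.mem_image.mp hb
    exact c.2
  have hmemt : ∀ b ∈ fs', b ∈ tset := fun b hb => hut (hmemu b hb)
  have hsum_eq : ∑ b ∈ fs, ENNReal.ofReal (4 * (((b.1.2.2 : ℚ) : ℝ) - b.1.1))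
      = ENNReal.ofReal (∑ b ∈ fs', 4 * (((b.2.2 : ℚ) : ℝ) - b.1)) := by
    rw [hfs', Finset.sum_image (fun a _ b _ h => Subtype.ext h)]
    rw [ENNReal.ofReal_sum_of_nonneg]
    intro b hb
    have h := hut b.2
    have h1 := h.2.2.1
    have h2 := h.2.2.2.1
    nlinarith
  have hreal : (1 / 2 : ℝ) < ∑ b ∈ fs', 4 * (((b.2.2 : ℚ) : ℝ) - b.1) := by
    rw [hsum_eq] at hfs
    have h2 := (ENNReal.lt_ofReal_iff_toReal_lt (by norm_num)).mp hfs
    calc (1 / 2 : ℝ) = (1 / 2 : ENNReal).toReal := by norm_num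
    _ < _ := h2
  have hT : (1 / 8 : ℝ) < ∑ b ∈ fs', (((b.2.2 : ℚ) : ℝ) - b.1) := by
    rw [← Finset.mul_sum (a := (4 : ℝ))] at hreal
    linarith
  have hne' : fs'.Nonempty := by
    by_contra hcon
    rw [Finset.not_nonempty_iff_eq_empty] at hcon
    rw [hcon] at hT
    simp at hT
    linarith
  -- separation of the chosen intervals
  have hsep : ∀ b ∈ fs', ∀ b' ∈ fs', b ≠ b' →
      ((b.2.2 : ℚ) : ℝ) < b'.1 ∨ ((b'.2.2 : ℚ) : ℝ) < b.1 := by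
    intro b hb b' hb' hne
    have hd := hdisj (hmemu b hb) (hmemu b' hb') hne
    by_contra hcon
    push_neg at hcon
    have h := hmemt b hb
    have h' := hmemt b' hb'
    have hsq : b.1 ≤ ((b.2.2 : ℚ) : ℝ) := le_of_lt (lt_trans h.2.2.1 h.2.2.2.1)
    have hsq' : b'.1 ≤ ((b'.2.2 : ℚ) : ℝ) := le_of_lt (lt_trans h'.2.2.1 h'.2.2.2.1)
    have hmem1 : max b.1 b'.1 ∈ Metric.closedBall (x b) (r b) := by
      rw [hball]
      exact ⟨le_max_left _ _, max_le hsq hcon.1⟩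
    have hmem2 : max b.1 b'.1 ∈ Metric.closedBall (x b') (r b') := by
      rw [hball]
      exact ⟨le_max_right _ _, max_le hcon.2 hsq'⟩
    exact Set.disjoint_left.mp hd hmem1 hmem2
  -- build the partition
  obtain ⟨n, v, hvmono, hv0, hv1, hvsum⟩ := partition_lemma (fun t => X t ω) fs'.card fs' rfl 1
    (by norm_num)
    (fun b hb => by
      have h := hmemt b hb
      exact ⟨h.2.1.1, h.2.2.1, h.2.2.2.1, h.2.2.2.2.1⟩)
    hsep
  refine ⟨n, v, hvmono, hv0, hv1, ?_⟩
  have hcontrib : ∑ b ∈ fs', (K : ℝ) * (((b.2.2 : ℚ) : ℝ) - b.1)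
      < ∑ b ∈ fs', (X ((b.2.2 : ℚ) : ℝ) ω - X ((b.2.1 : ℚ) : ℝ) ω) ^ 2 :=
    Finset.sum_lt_sum_of_nonempty hne' (fun b hb => (hmemt b hb).2.2.2.2.2)
  have hKcast : (K : ℝ) = 8 * ((⌈M⌉₊ : ℝ) + 1) := by
    rw [hK]
    push_cast
    ring
  have hMK : M < (K : ℝ) * (1 / 8) := by
    rw [hKcast]
    have := Nat.le_ceil M
    linarith
  have hKpos : (0 : ℝ) < (K : ℝ) := by
    rw [hKcast]
    positivity
  have hKT : (K : ℝ) * (1 / 8) < (K : ℝ) * ∑ b ∈ fs', (((b.2.2 : ℚ) : ℝ) - b.1) :=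
    mul_lt_mul_of_pos_left hT hKpos
  rw [Finset.mul_sum] at hKT
  calc M < (K : ℝ) * (1 / 8) := hMK
  _ < ∑ b ∈ fs', (K : ℝ) * (((b.2.2 : ℚ) : ℝ) - b.1) := hKT
  _ < ∑ b ∈ fs', (X ((b.2.2 : ℚ) : ℝ) ω - X ((b.2.1 : ℚ) : ℝ) ω) ^ 2 := hcontrib
  _ ≤ ∑ i ∈ Finset.range n, (X (v (i + 1)) ω - X (v i) ω) ^ 2 := hvsum
end
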